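/- arXiv:0909.5175 — 4 statements merged into one kernel-verified Lean document; each statement's English description precedes it below -/
import Mathlib

section
/- Let f_1, …, f_n : {-1,1}^n → {-1,1} be Boolean functions such that each f_i does not depend on its i-th input coordinate x_i. Then for X uniform on {-1,1}^n, ( E_X[ | Σ_{i=1}^n X_i · f_i(X_{-i}) | ] )² ≤ 2 · Σ_{i=1}^n AS(f_i) + n, where f_i(X_{-i}) denotes the value of f_i on X (which depends only on the coordinates of X other than the i-th). -/
open Finset MeasureTheory ProbabilityTheory
open scoped Classical

noncomputable section

/-- The ±1 real value of a Boolean bit (`true ↦ 1`, `false ↦ -1`). -/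
def pmOne (b : Bool) : ℝ := if b then 1 else -1

/-- Noise sensitivity at rate `δ` of a Boolean function on the hypercube `{-1,1}^n`:
`Pr[f(X) ≠ f(Z)]` where `X` is uniform and `Z` flips each coordinate of `X`
independently with probability `δ`. -/
def noiseSens {n : ℕ} (δ : ℝ) (f : (Fin n → Bool) → Bool) : ℝ :=
  (1 / 2 ^ n : ℝ) * ∑ x : Fin n → Bool, ∑ s : Fin n → Bool,
    (∏ i, if s i then δ else 1 - δ) * (if f x ≠ f (fun i => xor (s i) (x i)) then 1 else 0)

/-- Influence of the `i`-th variable: `Pr[f(X) ≠ f(X^{(i)})]`. -/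
def influence {n : ℕ} (f : (Fin n → Bool) → Bool) (i : Fin n) : ℝ :=
  (1 / 2 ^ n : ℝ) * ∑ x : Fin n → Bool,
    if f x ≠ f (Function.update x i (!x i)) then 1 else 0

/-- Average sensitivity (total influence). -/
def avgSens {n : ℕ} (f : (Fin n → Bool) → Bool) : ℝ := ∑ i, influence f i

/-- `f` is a degree-`d` polynomial threshold function: `f = sign(P)` for some real
polynomial of total degree at most `d`, with the convention `sign 0 = 1`. -/
def IsPTF {n : ℕ} (d : ℕ) (f : (Fin n → Bool) → Bool) : Prop :=
  ∃ P : MvPolynomial (Fin n) ℝ, P.totalDegree ≤ d ∧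
    ∀ x, (f x = true ↔ 0 ≤ MvPolynomial.eval (fun i => pmOne (x i)) P)

/-- Evaluation of the multilinear polynomial with coefficients `a` at the point `x`. -/
def mlEval {n : ℕ} (a : Finset (Fin n) → ℝ) (x : Fin n → ℝ) : ℝ :=
  ∑ I : Finset (Fin n), a I * ∏ i ∈ I, x i

/-- The multilinear polynomial with coefficients `a` has degree at most `d`. -/
def DegLE {n : ℕ} (a : Finset (Fin n) → ℝ) (d : ℕ) : Prop :=
  ∀ I, a I ≠ 0 → I.card ≤ d

/-- Squared weight `w_i²` of coordinate `i`: `Σ_{I ∋ i} a_I²`. -/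
def wsq {n : ℕ} (a : Finset (Fin n) → ℝ) (i : Fin n) : ℝ :=
  ∑ I ∈ univ.filter (fun I : Finset (Fin n) => i ∈ I), a I ^ 2

/-- `ε`-regularity: `Σ_i w_i⁴ ≤ ε² (Σ_i w_i²)²`. -/
def Regular {n : ℕ} (a : Finset (Fin n) → ℝ) (ε : ℝ) : Prop :=
  ∑ i, wsq a i ^ 2 ≤ ε ^ 2 * (∑ i, wsq a i) ^ 2

/-- `σ_{k+1}²(P) = Σ_{j ≥ k (0-based)} w_j²` (tail weight, `k` restricted variables). -/
def sigmaSq {n : ℕ} (a : Finset (Fin n) → ℝ) (k : ℕ) : ℝ :=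
  ∑ j ∈ univ.filter (fun j : Fin n => k ≤ (j : ℕ)), wsq a j

/-- The variables are ordered by decreasing weight. -/
def OrderedWeights {n : ℕ} (a : Finset (Fin n) → ℝ) : Prop :=
  ∀ i j : Fin n, i ≤ j → wsq a j ≤ wsq a i

/-- The `ε`-critical index `K(P,ε)`: least `k` such that `w_j² ≤ ε² σ_{k+1}²` for all
`j` beyond the first `k` variables. -/
def critIndex {n : ℕ} (a : Finset (Fin n) → ℝ) (ε : ℝ) : ℕ :=
  sInf {k : ℕ | ∀ j : Fin n, k ≤ (j : ℕ) → wsq a j ≤ ε ^ 2 * sigmaSq a k}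

/-- Coefficients (in the variables `Y_j`, `j ≥ K`) of the restriction of the multilinear
polynomial `a` obtained by fixing the first `K` variables to `x`. -/
def restCoeff {n : ℕ} (a : Finset (Fin n) → ℝ) (K : ℕ) (x : Fin n → ℝ)
    (J : Finset (Fin n)) : ℝ :=
  if ∀ j ∈ J, K ≤ (j : ℕ) then
    ∑ I ∈ univ.filter (fun I : Finset (Fin n) => I.filter (fun i => K ≤ i.val) = J),
      a I * ∏ i ∈ I.filter (fun i => i.val < K), x i
  else 0

/-- Standard Gaussian measure on `ℝ^n`. -/
def gaussn (n : ℕ) : Measure (Fin n → ℝ) := Measure.pi fun _ => gaussianReal 0 1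

/-- Gaussian noise sensitivity: `Pr[f(X) ≠ f((1-δ)X + √(2δ-δ²)Y)]` for independent
standard Gaussian vectors `X, Y`. -/
def gns (n : ℕ) (δ : ℝ) (f : (Fin n → ℝ) → ℝ) : ℝ :=
  (((gaussn n).prod (gaussn n))
    {p | f p.1 ≠ f (fun i => (1 - δ) * p.1 i + Real.sqrt (2 * δ - δ ^ 2) * p.2 i)}).toReal

/-- Normalized probabilists' Hermite polynomial `H_k(x)`. -/
def normHermite (k : ℕ) (x : ℝ) : ℝ :=
  Polynomial.aeval x (Polynomial.hermite k) / Real.sqrt (Nat.factorial k)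



lemma abs_pmOne (b : Bool) : |pmOne b| = 1 := by cases b <;> norm_num [pmOne]

lemma pmOne_not (b : Bool) : pmOne (!b) = - pmOne b := by cases b <;> norm_num [pmOne]

lemma influence_nonneg {n : ℕ} (f : (Fin n → Bool) → Bool) (i : Fin n) :
    0 ≤ influence f i := by
  unfold influence
  apply mul_nonneg (by positivity)
  apply Finset.sum_nonneg
  intro x _
  split <;> norm_num

lemma cross_term_le {n : ℕ} (f : Fin n → ((Fin n → Bool) → Bool))
    (hind : ∀ (i : Fin n) (x : Fin n → Bool) (b : Bool),
      f i (Function.update x i b) = f i x) (i j : Fin n) (hij : i ≠ j) :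
    |∑ x : Fin n → Bool, (pmOne (x i) * pmOne (f i x)) * (pmOne (x j) * pmOne (f j x))|
      ≤ 2 ^ n * influence (f j) i := by
  set g : (Fin n → Bool) → ℝ :=
    fun x => (pmOne (x i) * pmOne (f i x)) * (pmOne (x j) * pmOne (f j x)) with hg
  set σ : (Fin n → Bool) → (Fin n → Bool) := fun x => Function.update x i (!x i) with hσ
  have hinv : Function.Involutive σ := by
    intro x; funext k
    by_cases hk : k = i <;> simp [hσ, Function.update, hk]
  have hre : ∑ x : Fin n → Bool, g (σ x) = ∑ x : Fin n → Bool, g x :=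
    Equiv.sum_comp (hinv.toPerm σ) g
  have h2 : 2 * ∑ x : Fin n → Bool, g x
      = ∑ x : Fin n → Bool, (g x + g (σ x)) := by
    rw [Finset.sum_add_distrib, hre]; ring
  have hpt : ∀ x : Fin n → Bool, |g x + g (σ x)|
      ≤ 2 * (if f j x ≠ f j (Function.update x i (!x i)) then (1:ℝ) else 0) := by
    intro x
    have hyi : σ x i = !x i := Function.update_self i (!x i) x
    have hyj : σ x j = x j := Function.update_of_ne (Ne.symm hij) _ x
    have hfi : f i (σ x) = f i x := hind i x (!x i)
    have heq : g x + g (σ x)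
        = pmOne (x i) * pmOne (f i x) * pmOne (x j)
          * (pmOne (f j x) - pmOne (f j (σ x))) := by
      simp only [hg]
      rw [hyi, hyj, hfi, pmOne_not]
      ring
    rw [heq, abs_mul, abs_mul, abs_mul, abs_pmOne, abs_pmOne, abs_pmOne,
      one_mul, one_mul, one_mul]
    by_cases h : f j x = f j (Function.update x i (!x i))
    · have hs : f j (σ x) = f j x := h.symm
      rw [hs, sub_self, abs_zero]
      split <;> norm_num
    · have h2 : |pmOne (f j x) - pmOne (f j (σ x))| ≤ 2 := by
        cases hb : f j x <;> cases hc : f j (σ x) <;> simp [pmOne] <;> norm_num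
      simp only [ne_eq, h, not_false_iff, if_true]
      norm_num
      exact h2
  have hT : |∑ x : Fin n → Bool, g x|
      ≤ ∑ x : Fin n → Bool, (if f j x ≠ f j (Function.update x i (!x i)) then (1:ℝ) else 0) := by
    have h1 : |2 * ∑ x : Fin n → Bool, g x|
        ≤ ∑ x : Fin n → Bool,
            2 * (if f j x ≠ f j (Function.update x i (!x i)) then (1:ℝ) else 0) := by
      rw [h2]
      exact (Finset.abs_sum_le_sum_abs _ _).trans (Finset.sum_le_sum fun x _ => hpt x)
    rw [abs_mul, abs_two, ← Finset.mul_sum] at h1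
    linarith
  calc |∑ x : Fin n → Bool, g x|
      ≤ ∑ x : Fin n → Bool, (if f j x ≠ f j (Function.update x i (!x i)) then (1:ℝ) else 0) := hT
    _ = 2 ^ n * influence (f j) i := by
        unfold influence
        rw [← mul_assoc]
        norm_num

/-- Lemma 1.6: if each Boolean function `f_i` does not depend on its
`i`-th coordinate, then `(E|Σ_i X_i f_i(X_{-i})|)² ≤ 2 Σ_i AS(f_i) + n`. -/
theorem expectation_abs_sum_sq_le (n : ℕ) (f : Fin n → ((Fin n → Bool) → Bool))
    (hind : ∀ (i : Fin n) (x : Fin n → Bool) (b : Bool),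
      f i (Function.update x i b) = f i x) :
    ((1 / 2 ^ n : ℝ) * ∑ x : Fin n → Bool, |∑ i, pmOne (x i) * pmOne (f i x)|) ^ 2
      ≤ 2 * (∑ i, avgSens (f i)) + n := by
  classical
  set F : Fin n → (Fin n → Bool) → ℝ := fun i x => pmOne (x i) * pmOne (f i x) with hF
  set S : (Fin n → Bool) → ℝ := fun x => ∑ i, F i x with hS
  have hcard : (Finset.univ : Finset (Fin n → Bool)).card = 2 ^ n := by
    simp [Finset.card_univ]
  have hpow : (0:ℝ) < 2 ^ n := by positivity
  -- Step 1: Cauchy-Schwarz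
  have hcs : ((1 / 2 ^ n : ℝ) * ∑ x : Fin n → Bool, |S x|) ^ 2
      ≤ (1 / 2 ^ n : ℝ) * ∑ x : Fin n → Bool, (S x) ^ 2 := by
    have h1 : (∑ x : Fin n → Bool, |S x|) ^ 2
        ≤ (2 ^ n : ℝ) * ∑ x : Fin n → Bool, (S x) ^ 2 := by
      have := sq_sum_le_card_mul_sum_sq (s := (Finset.univ : Finset (Fin n → Bool)))
        (f := fun x => |S x|)
      simp only [hcard, sq_abs] at this
      push_cast at this
      exact this
    have e1 : ((1 / 2 ^ n : ℝ) * ∑ x : Fin n → Bool, |S x|) ^ 2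
        = (∑ x : Fin n → Bool, |S x|) ^ 2 * (1 / 2 ^ n : ℝ) ^ 2 := by ring
    rw [e1]
    have h3 : (∑ x : Fin n → Bool, |S x|) ^ 2 * (1 / 2 ^ n : ℝ) ^ 2
        ≤ ((2 ^ n : ℝ) * ∑ x : Fin n → Bool, (S x) ^ 2) * (1 / 2 ^ n : ℝ) ^ 2 :=
      mul_le_mul_of_nonneg_right h1 (by positivity)
    refine h3.trans_eq ?_
    field_simp
  -- Step 2: expand the square
  have hexp : ∑ x : Fin n → Bool, (S x) ^ 2
      = ∑ i : Fin n, ∑ j : Fin n, ∑ x : Fin n → Bool, F i x * F j x := by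
    have : ∀ x : Fin n → Bool, (S x) ^ 2 = ∑ i : Fin n, ∑ j : Fin n, F i x * F j x := by
      intro x
      rw [hS, sq, Finset.sum_mul_sum]
    rw [Finset.sum_congr rfl fun x _ => this x]
    rw [Finset.sum_comm]
    apply Finset.sum_congr rfl
    intro i _
    rw [Finset.sum_comm]
  -- Step 3: bound each term
  have hbound : ∀ i j : Fin n, ∑ x : Fin n → Bool, F i x * F j x
      ≤ (if i = j then (2 ^ n : ℝ) else 0) + 2 ^ n * influence (f j) i := by
    intro i j
    by_cases h : i = j
    · subst h
      have : ∀ x : Fin n → Bool, F i x * F i x = 1 := by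
        intro x
        have h1 : pmOne (x i) * pmOne (x i) = 1 := by cases x i <;> norm_num [pmOne]
        have h2 : pmOne (f i x) * pmOne (f i x) = 1 := by cases f i x <;> norm_num [pmOne]
        calc F i x * F i x = (pmOne (x i) * pmOne (x i)) * (pmOne (f i x) * pmOne (f i x)) := by
              rw [hF]; ring
          _ = 1 := by rw [h1, h2, mul_one]
      rw [Finset.sum_congr rfl fun x _ => this x, Finset.sum_const, hcard,
        nsmul_eq_mul, mul_one]
      simp only [if_pos rfl]
      have := influence_nonneg (f i) i
      push_cast
      nlinarith
    · have := cross_term_le f hind i j h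
      have h1 : ∑ x : Fin n → Bool, F i x * F j x
          ≤ |∑ x : Fin n → Bool, (pmOne (x i) * pmOne (f i x)) * (pmOne (x j) * pmOne (f j x))| :=
        le_abs_self _
      simp only [if_neg h, zero_add]
      exact h1.trans this
  -- Assemble
  have hsum : ∑ x : Fin n → Bool, (S x) ^ 2
      ≤ n * 2 ^ n + 2 ^ n * ∑ j, avgSens (f j) := by
    rw [hexp]
    calc ∑ i : Fin n, ∑ j : Fin n, ∑ x : Fin n → Bool, F i x * F j x
        ≤ ∑ i : Fin n, ∑ j : Fin n,
            ((if i = j then (2 ^ n : ℝ) else 0) + 2 ^ n * influence (f j) i) :=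
          Finset.sum_le_sum fun i _ => Finset.sum_le_sum fun j _ => hbound i j
      _ = n * 2 ^ n + 2 ^ n * ∑ j, avgSens (f j) := by
          simp only [Finset.sum_add_distrib]
          congr 1
          · rw [Finset.sum_congr rfl (fun i _ => Finset.sum_ite_eq Finset.univ i (fun _ => (2:ℝ) ^ n)),
              Finset.sum_congr rfl (fun i (_ : i ∈ Finset.univ) => if_pos (Finset.mem_univ i)),
              Finset.sum_const, Finset.card_univ, Fintype.card_fin, nsmul_eq_mul]
          · rw [Finset.sum_comm]
            unfold avgSens
            rw [Finset.mul_sum]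
            apply Finset.sum_congr rfl
            intro j _
            rw [Finset.mul_sum]
  have hA : 0 ≤ ∑ j, avgSens (f j) := by
    apply Finset.sum_nonneg
    intro j _
    exact Finset.sum_nonneg fun i _ => influence_nonneg (f j) i
  have hfinal : (1 / 2 ^ n : ℝ) * ∑ x : Fin n → Bool, (S x) ^ 2
      ≤ n + ∑ j, avgSens (f j) := by
    rw [div_mul_eq_mul_div, one_mul, div_le_iff₀ hpow]
    calc ∑ x : Fin n → Bool, (S x) ^ 2 ≤ n * 2 ^ n + 2 ^ n * ∑ j, avgSens (f j) := hsum
      _ = (↑n + ∑ j, avgSens (f j)) * 2 ^ n := by ring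
  calc ((1 / 2 ^ n : ℝ) * ∑ x : Fin n → Bool, |∑ i, pmOne (x i) * pmOne (f i x)|) ^ 2
      = ((1 / 2 ^ n : ℝ) * ∑ x : Fin n → Bool, |S x|) ^ 2 := rfl
    _ ≤ (1 / 2 ^ n : ℝ) * ∑ x : Fin n → Bool, (S x) ^ 2 := hcs
    _ ≤ n + ∑ j, avgSens (f j) := hfinal
    _ ≤ 2 * (∑ i, avgSens (f i)) + n := by linarith


end
end

section
/- For every integer d ≥ 1 there exist constants a_d ∈ R and γ_d > 0 such that the following holds for every ε ∈ (0,1) and every multilinear polynomial P of degree at most d on n variables whose variables are ordered so that w_1(P) ≥ w_2(P) ≥ … ≥ w_n(P). Let K = K(P,ε) be the ε-critical index of P. If x^K = (x_1,…,x_K) is chosen uniformly at random from {-1,1}^K, then the restricted polynomial P_{x^K}(Y_{K+1},…,Y_n) := P(x_1,…,x_K,Y_{K+1},…,Y_n), viewed as a multilinear polynomial in the variables Y_{K+1},…,Y_n, is (a_d · ε)-regular with probability at least γ_d. -/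
open Finset MeasureTheory ProbabilityTheory
open scoped Classical

noncomputable section

lemma pmOne_sq (b : Bool) : pmOne b ^ 2 = 1 := by cases b <;> simp [pmOne]

/-- Multilinear evaluation on the Boolean cube. -/
def rrF {n : ℕ} (β : Finset (Fin n) → ℝ) (x : Fin n → Bool) : ℝ :=
  ∑ S : Finset (Fin n), β S * ∏ i ∈ S, pmOne (x i)

def rrM2 {n : ℕ} (β : Finset (Fin n) → ℝ) : ℝ := ∑ S : Finset (Fin n), β S ^ 2

lemma rrM2_nonneg {n : ℕ} (β : Finset (Fin n) → ℝ) : 0 ≤ rrM2 β :=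
  Finset.sum_nonneg fun _ _ => sq_nonneg _

def rrG {n : ℕ} (i : Fin n) (β : Finset (Fin n) → ℝ) : Finset (Fin n) → ℝ :=
  fun S => if i ∈ S then 0 else β S

def rrH {n : ℕ} (i : Fin n) (β : Finset (Fin n) → ℝ) : Finset (Fin n) → ℝ :=
  fun S => if i ∈ S then 0 else β (insert i S)

lemma rrF_decomp {n : ℕ} (i : Fin n) (β : Finset (Fin n) → ℝ) (x : Fin n → Bool) :
    rrF β x = rrF (rrG i β) x + pmOne (x i) * rrF (rrH i β) x := by
  have h1 : rrF (rrG i β) x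
      = ∑ S ∈ univ.filter (fun S : Finset (Fin n) => i ∉ S), β S * ∏ j ∈ S, pmOne (x j) := by
    rw [Finset.sum_filter, rrF]
    refine Finset.sum_congr rfl fun S _ => ?_
    by_cases h : i ∈ S <;> simp [rrG, h]
  have h2a : rrF (rrH i β) x
      = ∑ S ∈ univ.filter (fun S : Finset (Fin n) => i ∉ S),
          β (insert i S) * ∏ j ∈ S, pmOne (x j) := by
    rw [Finset.sum_filter, rrF]
    refine Finset.sum_congr rfl fun S _ => ?_
    by_cases h : i ∈ S <;> simp [rrH, h]
  have h2 : pmOne (x i) * rrF (rrH i β) x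
      = ∑ S ∈ univ.filter (fun S : Finset (Fin n) => i ∈ S), β S * ∏ j ∈ S, pmOne (x j) := by
    rw [h2a, Finset.mul_sum]
    refine (Finset.sum_bij' (fun (S : Finset (Fin n)) (_ : S ∈ univ.filter (fun S => i ∈ S)) =>
        S.erase i) (fun S _ => insert i S) ?_ ?_ ?_ ?_ ?_).symm
    · intro S hS; simp
    · intro S hS; simp
    · intro S hS
      simp only [mem_filter, mem_univ, true_and] at hS
      exact Finset.insert_erase hS
    · intro S hS
      simp only [mem_filter, mem_univ, true_and] at hS
      exact Finset.erase_insert hS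
    · intro S hS
      simp only [mem_filter, mem_univ, true_and] at hS
      rw [Finset.insert_erase hS, ← Finset.mul_prod_erase S _ hS]
      ring
  rw [h1, h2, add_comm, Finset.sum_filter_add_sum_filter_not univ (fun S => i ∈ S)]
  rfl

lemma rrF_update {n : ℕ} {i : Fin n} {β : Finset (Fin n) → ℝ}
    (hβ : ∀ S, β S ≠ 0 → i ∉ S) (x : Fin n → Bool) (b : Bool) :
    rrF β (Function.update x i b) = rrF β x := by
  refine Finset.sum_congr rfl fun S _ => ?_
  by_cases h : β S = 0
  · simp [h]
  · have hi := hβ S h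
    congr 1
    refine Finset.prod_congr rfl fun j hj => ?_
    rw [Function.update_of_ne (by rintro rfl; exact hi hj)]

lemma rrG_supp {n : ℕ} (i : Fin n) (β : Finset (Fin n) → ℝ) (S : Finset (Fin n))
    (h : rrG i β S ≠ 0) : i ∉ S := by
  by_contra hc; simp [rrG, hc] at h

lemma rrH_supp {n : ℕ} (i : Fin n) (β : Finset (Fin n) → ℝ) (S : Finset (Fin n))
    (h : rrH i β S ≠ 0) : i ∉ S := by
  by_contra hc; simp [rrH, hc] at h

lemma sum_flip {n : ℕ} (i : Fin n) (φ : (Fin n → Bool) → ℝ) :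
    ∑ x : Fin n → Bool, φ (Function.update x i (!x i)) = ∑ x : Fin n → Bool, φ x := by
  have hinv : Function.Involutive (fun x : Fin n → Bool => Function.update x i (!x i)) := by
    intro x
    simp [Function.update_idem, Function.update_self, Bool.not_not, Function.update_eq_self]
  exact Fintype.sum_bijective _ hinv.bijective _ _ (fun x => rfl)

lemma rrM2_split {n : ℕ} (i : Fin n) (β : Finset (Fin n) → ℝ) :
    rrM2 β = rrM2 (rrG i β) + rrM2 (rrH i β) := by
  have h1 : rrM2 (rrG i β)
      = ∑ S ∈ univ.filter (fun S : Finset (Fin n) => i ∉ S), β S ^ 2 := by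
    rw [Finset.sum_filter, rrM2]
    refine Finset.sum_congr rfl fun S _ => ?_
    by_cases h : i ∈ S <;> simp [rrG, h]
  have h2 : rrM2 (rrH i β)
      = ∑ S ∈ univ.filter (fun S : Finset (Fin n) => i ∈ S), β S ^ 2 := by
    have h2a : rrM2 (rrH i β)
        = ∑ S ∈ univ.filter (fun S : Finset (Fin n) => i ∉ S), β (insert i S) ^ 2 := by
      rw [Finset.sum_filter, rrM2]
      refine Finset.sum_congr rfl fun S _ => ?_
      by_cases h : i ∈ S <;> simp [rrH, h]
    rw [h2a]
    refine (Finset.sum_bij' (fun (S : Finset (Fin n)) (_ : S ∈ univ.filter (fun S => i ∈ S)) =>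
        S.erase i) (fun S _ => insert i S) ?_ ?_ ?_ ?_ ?_).symm
    · intro S hS; simp
    · intro S hS; simp
    · intro S hS
      simp only [mem_filter, mem_univ, true_and] at hS
      exact Finset.insert_erase hS
    · intro S hS
      simp only [mem_filter, mem_univ, true_and] at hS
      exact Finset.erase_insert hS
    · intro S hS
      simp only [mem_filter, mem_univ, true_and] at hS
      rw [Finset.insert_erase hS]
  rw [h1, h2, add_comm, Finset.sum_filter_add_sum_filter_not univ (fun S => i ∈ S), rrM2]


lemma rrF_const {n : ℕ} (β : Finset (Fin n) → ℝ)
    (hβ : ∀ S, β S ≠ 0 → S ⊆ (∅ : Finset (Fin n))) (x : Fin n → Bool) :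
    rrF β x = β ∅ := by
  rw [rrF]
  rw [Finset.sum_eq_single (∅ : Finset (Fin n))]
  · simp
  · intro S _ hS
    have : β S = 0 := by
      by_contra h
      exact hS (Finset.subset_empty.1 (hβ S h))
    simp [this]
  · simp

lemma rrM2_const {n : ℕ} (β : Finset (Fin n) → ℝ)
    (hβ : ∀ S, β S ≠ 0 → S ⊆ (∅ : Finset (Fin n))) :
    rrM2 β = β ∅ ^ 2 := by
  rw [rrM2, Finset.sum_eq_single (∅ : Finset (Fin n))]
  · intro S _ hS
    have : β S = 0 := by
      by_contra h
      exact hS (Finset.subset_empty.1 (hβ S h))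
    simp [this]
  · simp

lemma card_cube (n : ℕ) : (Fintype.card (Fin n → Bool) : ℝ) = 2 ^ n := by
  simp [Fintype.card_fun]

/-- Parseval on the Boolean cube. -/
lemma rrParseval_aux {n : ℕ} (s : Finset (Fin n)) :
    ∀ β : Finset (Fin n) → ℝ, (∀ S, β S ≠ 0 → S ⊆ s) →
      ∑ x : Fin n → Bool, (rrF β x) ^ 2 = 2 ^ n * rrM2 β := by
  induction s using Finset.induction_on with
  | empty =>
    intro β hβ
    have : ∀ x : Fin n → Bool, rrF β x = β ∅ := rrF_const β hβ
    simp only [this, rrM2_const β hβ, Finset.sum_const, card_univ, nsmul_eq_mul]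
    rw [← card_cube n]
  | insert i t hit ih =>
    intro β hβ
    have hgs : ∀ S, rrG i β S ≠ 0 → S ⊆ t := by
      intro S hS
      have hiS := rrG_supp i β S hS
      have : β S ≠ 0 := by simpa [rrG, hiS] using hS
      exact (Finset.subset_insert_iff_of_notMem hiS).1 (hβ S this)
    have hhs : ∀ S, rrH i β S ≠ 0 → S ⊆ t := by
      intro S hS
      have hiS := rrH_supp i β S hS
      have : β (insert i S) ≠ 0 := by simpa [rrH, hiS] using hS
      have h2 := hβ _ this
      intro j hj
      have : j ∈ insert i t := h2 (Finset.mem_insert_of_mem hj)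
      rcases Finset.mem_insert.1 this with rfl | hjt
      · exact absurd hj hiS
      · exact hjt
    have key : ∀ x : Fin n → Bool,
        (rrF β x) ^ 2 + (rrF β (Function.update x i (!x i))) ^ 2
          = 2 * ((rrF (rrG i β) x) ^ 2 + (rrF (rrH i β) x) ^ 2) := by
      intro x
      have e1 : rrF β x = rrF (rrG i β) x + pmOne (x i) * rrF (rrH i β) x := rrF_decomp i β x
      have e2 : rrF β (Function.update x i (!x i))
          = rrF (rrG i β) x - pmOne (x i) * rrF (rrH i β) x := by
        rw [rrF_decomp i β, rrF_update (rrG_supp i β), rrF_update (rrH_supp i β),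
          Function.update_self, pmOne_not]
        ring
      rw [e1, e2]
      linear_combination (2 * (rrF (rrH i β) x) ^ 2) * pmOne_sq (x i)
    have hsum : 2 * ∑ x : Fin n → Bool, (rrF β x) ^ 2
        = 2 * ((∑ x : Fin n → Bool, (rrF (rrG i β) x) ^ 2) + ∑ x : Fin n → Bool, (rrF (rrH i β) x) ^ 2) := by
      calc 2 * ∑ x : Fin n → Bool, (rrF β x) ^ 2
          = (∑ x : Fin n → Bool, (rrF β x) ^ 2)
            + ∑ x : Fin n → Bool, (rrF β (Function.update x i (!x i))) ^ 2 := by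
            rw [sum_flip i (fun y => (rrF β y) ^ 2)]; ring
        _ = ∑ x : Fin n → Bool, ((rrF β x) ^ 2 + (rrF β (Function.update x i (!x i))) ^ 2) := by
            rw [Finset.sum_add_distrib]
        _ = ∑ x : Fin n → Bool, 2 * ((rrF (rrG i β) x) ^ 2 + (rrF (rrH i β) x) ^ 2) := by
            exact Finset.sum_congr rfl fun x _ => key x
        _ = 2 * ((∑ x : Fin n → Bool, (rrF (rrG i β) x) ^ 2) + ∑ x : Fin n → Bool, (rrF (rrH i β) x) ^ 2) := by
            rw [← Finset.mul_sum, Finset.sum_add_distrib]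
    have := ih (rrG i β) hgs
    have := ih (rrH i β) hhs
    have hM2 := rrM2_split i β
    rw [hM2, mul_add]
    linarith

lemma le_of_sq_le_sq' {a b : ℝ} (ha : 0 ≤ a) (hb : 0 ≤ b) (h : a ^ 2 ≤ b ^ 2) : a ≤ b := by
  nlinarith

/-- Hypercontractivity (Bonami): 4th moment of a degree-d multilinear polynomial. -/
lemma rrHyper_aux {n : ℕ} (s : Finset (Fin n)) :
    ∀ (d : ℕ) (β : Finset (Fin n) → ℝ), (∀ S, β S ≠ 0 → S ⊆ s) → DegLE β d →
      ∑ x : Fin n → Bool, (rrF β x) ^ 4 ≤ 2 ^ n * 9 ^ d * (rrM2 β) ^ 2 := by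
  induction s using Finset.induction_on with
  | empty =>
    intro d β hβ _
    have h1 : ∀ x : Fin n → Bool, rrF β x = β ∅ := rrF_const β hβ
    simp only [h1, rrM2_const β hβ, Finset.sum_const, card_univ, nsmul_eq_mul]
    have h2 : (Fintype.card (Fin n → Bool) : ℝ) = 2 ^ n := card_cube n
    rw [h2]
    have h9 : (1 : ℝ) ≤ 9 ^ d := one_le_pow₀ (by norm_num)
    have h4 : (β ∅) ^ 4 = ((β ∅) ^ 2) ^ 2 := by ring
    rw [h4, mul_assoc]
    exact mul_le_mul_of_nonneg_left (le_mul_of_one_le_left (sq_nonneg _) h9) (by positivity)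
  | insert i t hit ih =>
    intro d β hβ hdeg
    have hgs : ∀ S, rrG i β S ≠ 0 → S ⊆ t := by
      intro S hS
      have hiS := rrG_supp i β S hS
      have : β S ≠ 0 := by simpa [rrG, hiS] using hS
      exact (Finset.subset_insert_iff_of_notMem hiS).1 (hβ S this)
    have hhs : ∀ S, rrH i β S ≠ 0 → S ⊆ t := by
      intro S hS
      have hiS := rrH_supp i β S hS
      have : β (insert i S) ≠ 0 := by simpa [rrH, hiS] using hS
      have h2 := hβ _ this
      intro j hj
      have : j ∈ insert i t := h2 (Finset.mem_insert_of_mem hj)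
      rcases Finset.mem_insert.1 this with rfl | hjt
      · exact absurd hj hiS
      · exact hjt
    have hgd : DegLE (rrG i β) d := by
      intro S hS
      have hiS := rrG_supp i β S hS
      have : β S ≠ 0 := by simpa [rrG, hiS] using hS
      exact hdeg S this
    have hhd : DegLE (rrH i β) (d - 1) := by
      intro S hS
      have hiS := rrH_supp i β S hS
      have hne : β (insert i S) ≠ 0 := by simpa [rrH, hiS] using hS
      have := hdeg _ hne
      rw [Finset.card_insert_of_notMem hiS] at this
      omega
    have key : ∀ x : Fin n → Bool,
        (rrF β x) ^ 4 + (rrF β (Function.update x i (!x i))) ^ 4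
          = 2 * ((rrF (rrG i β) x) ^ 4 + 6 * ((rrF (rrG i β) x) ^ 2 * (rrF (rrH i β) x) ^ 2)
              + (rrF (rrH i β) x) ^ 4) := by
      intro x
      have e1 : rrF β x = rrF (rrG i β) x + pmOne (x i) * rrF (rrH i β) x := rrF_decomp i β x
      have e2 : rrF β (Function.update x i (!x i))
          = rrF (rrG i β) x - pmOne (x i) * rrF (rrH i β) x := by
        rw [rrF_decomp i β, rrF_update (rrG_supp i β), rrF_update (rrH_supp i β),
          Function.update_self, pmOne_not]
        ring
      rw [e1, e2]
      linear_combination (12 * (rrF (rrG i β) x) ^ 2 * (rrF (rrH i β) x) ^ 2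
        + 2 * (rrF (rrH i β) x) ^ 4 * ((pmOne (x i)) ^ 2 + 1)) * pmOne_sq (x i)
    have hsum : ∑ x : Fin n → Bool, (rrF β x) ^ 4
        = (∑ x : Fin n → Bool, (rrF (rrG i β) x) ^ 4)
          + 6 * (∑ x : Fin n → Bool, (rrF (rrG i β) x) ^ 2 * (rrF (rrH i β) x) ^ 2)
          + ∑ x : Fin n → Bool, (rrF (rrH i β) x) ^ 4 := by
      have h1 : 2 * ∑ x : Fin n → Bool, (rrF β x) ^ 4
          = ∑ x : Fin n → Bool, ((rrF β x) ^ 4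
              + (rrF β (Function.update x i (!x i))) ^ 4) := by
        rw [Finset.sum_add_distrib, sum_flip i (fun y => (rrF β y) ^ 4)]; ring
      have h2 : (∑ x : Fin n → Bool, ((rrF β x) ^ 4
            + (rrF β (Function.update x i (!x i))) ^ 4))
          = ∑ x : Fin n → Bool, 2 * ((rrF (rrG i β) x) ^ 4
              + 6 * ((rrF (rrG i β) x) ^ 2 * (rrF (rrH i β) x) ^ 2)
              + (rrF (rrH i β) x) ^ 4) := Finset.sum_congr rfl fun x _ => key x
      have h3 : (∑ x : Fin n → Bool, 2 * ((rrF (rrG i β) x) ^ 4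
              + 6 * ((rrF (rrG i β) x) ^ 2 * (rrF (rrH i β) x) ^ 2)
              + (rrF (rrH i β) x) ^ 4))
          = 2 * ((∑ x : Fin n → Bool, (rrF (rrG i β) x) ^ 4)
              + 6 * (∑ x : Fin n → Bool, (rrF (rrG i β) x) ^ 2 * (rrF (rrH i β) x) ^ 2)
              + ∑ x : Fin n → Bool, (rrF (rrH i β) x) ^ 4) := by
        rw [← Finset.mul_sum]
        congr 1
        rw [Finset.sum_add_distrib, Finset.sum_add_distrib, ← Finset.mul_sum]
      rw [h2, h3] at h1
      linarith [h1]
    have hG4 := ih d (rrG i β) hgs hgd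
    have hH4 := ih (d - 1) (rrH i β) hhs hhd
    -- Cauchy–Schwarz for the cross term
    have hcs : (∑ x : Fin n → Bool, (rrF (rrG i β) x) ^ 2 * (rrF (rrH i β) x) ^ 2) ^ 2
        ≤ (∑ x : Fin n → Bool, (rrF (rrG i β) x) ^ 4)
          * ∑ x : Fin n → Bool, (rrF (rrH i β) x) ^ 4 := by
      have := Finset.sum_mul_sq_le_sq_mul_sq Finset.univ
        (fun x : Fin n → Bool => (rrF (rrG i β) x) ^ 2)
        (fun x : Fin n → Bool => (rrF (rrH i β) x) ^ 2)
      calc (∑ x : Fin n → Bool, (rrF (rrG i β) x) ^ 2 * (rrF (rrH i β) x) ^ 2) ^ 2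
          ≤ (∑ x : Fin n → Bool, ((rrF (rrG i β) x) ^ 2) ^ 2)
            * ∑ x : Fin n → Bool, ((rrF (rrH i β) x) ^ 2) ^ 2 := this
        _ = (∑ x : Fin n → Bool, (rrF (rrG i β) x) ^ 4)
            * ∑ x : Fin n → Bool, (rrF (rrH i β) x) ^ 4 := by
            congr 1 <;> exact Finset.sum_congr rfl fun x _ => by ring
    rcases Nat.eq_zero_or_pos d with rfl | hd1
    · -- d = 0: the h-part vanishes
      have hzero : ∀ S, rrH i β S = 0 := by
        intro S
        by_contra hS
        have hiS := rrH_supp i β S hS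
        have hne : β (insert i S) ≠ 0 := by simpa [rrH, hiS] using hS
        have := hdeg _ hne
        rw [Finset.card_insert_of_notMem hiS] at this
        omega
      have hF0 : ∀ x : Fin n → Bool, rrF (rrH i β) x = 0 := by
        intro x; rw [rrF]; exact Finset.sum_eq_zero fun S _ => by rw [hzero]; ring
      have hM20 : rrM2 (rrH i β) = 0 := by
        rw [rrM2]; exact Finset.sum_eq_zero fun S _ => by rw [hzero]; ring
      have hM2 := rrM2_split i β
      rw [hM2, hM20, add_zero, hsum]
      have z1 : ∑ x : Fin n → Bool, (rrF (rrG i β) x) ^ 2 * (rrF (rrH i β) x) ^ 2 = 0 :=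
        Finset.sum_eq_zero fun x _ => by rw [hF0]; ring
      have z2 : ∑ x : Fin n → Bool, (rrF (rrH i β) x) ^ 4 = 0 :=
        Finset.sum_eq_zero fun x _ => by rw [hF0]; ring
      rw [z1, z2]
      simpa using hG4
    · -- d ≥ 1
      have hM2 := rrM2_split i β
      have h2n : (0:ℝ) < 2 ^ n := by positivity
      have hMg := rrM2_nonneg (rrG i β)
      have hMh := rrM2_nonneg (rrH i β)
      have hcross : (∑ x : Fin n → Bool, (rrF (rrG i β) x) ^ 2 * (rrF (rrH i β) x) ^ 2)
          ≤ 2 ^ n * (3 ^ d * 3 ^ (d-1)) * (rrM2 (rrG i β) * rrM2 (rrH i β)) := by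
        refine le_of_sq_le_sq' ?_ (by positivity) ?_
        · exact Finset.sum_nonneg fun x _ => by positivity
        · calc (∑ x : Fin n → Bool, (rrF (rrG i β) x) ^ 2 * (rrF (rrH i β) x) ^ 2) ^ 2
              ≤ (∑ x : Fin n → Bool, (rrF (rrG i β) x) ^ 4)
                * ∑ x : Fin n → Bool, (rrF (rrH i β) x) ^ 4 := hcs
            _ ≤ (2 ^ n * 9 ^ d * (rrM2 (rrG i β)) ^ 2)
                * (2 ^ n * 9 ^ (d-1) * (rrM2 (rrH i β)) ^ 2) := by
                have hG4nn : (0:ℝ) ≤ ∑ x : Fin n → Bool, (rrF (rrG i β) x) ^ 4 :=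
                  Finset.sum_nonneg fun x _ => by positivity
                have hH4nn : (0:ℝ) ≤ ∑ x : Fin n → Bool, (rrF (rrH i β) x) ^ 4 :=
                  Finset.sum_nonneg fun x _ => by positivity
                exact mul_le_mul hG4 hH4 hH4nn (by positivity)
            _ = (2 ^ n * (3 ^ d * 3 ^ (d-1)) * (rrM2 (rrG i β) * rrM2 (rrH i β))) ^ 2 := by
                have e9 : (9:ℝ) ^ d = 3 ^ d * 3 ^ d := by
                  rw [← mul_pow]; norm_num
                have e9' : (9:ℝ) ^ (d-1) = 3 ^ (d-1) * 3 ^ (d-1) := by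
                  rw [← mul_pow]; norm_num
                rw [e9, e9']; ring
      have e3 : (3:ℝ) ^ d * 3 ^ (d-1) * 3 = 9 ^ d := by
        have : (3:ℝ) ^ (d-1) * 3 = 3 ^ d := by
          rw [← pow_succ]
          congr 1
          omega
        calc (3:ℝ) ^ d * 3 ^ (d-1) * 3 = 3 ^ d * (3 ^ (d-1) * 3) := by ring
          _ = 3 ^ d * 3 ^ d := by rw [this]
          _ = 9 ^ d := by rw [← mul_pow]; norm_num
      have e99 : (9:ℝ) ^ (d-1) ≤ 9 ^ d := by
        apply pow_le_pow_right₀ (by norm_num)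
        omega
      rw [hsum, hM2]
      have expand : 2 ^ n * 9 ^ d * (rrM2 (rrG i β) + rrM2 (rrH i β)) ^ 2
          = 2 ^ n * 9 ^ d * (rrM2 (rrG i β)) ^ 2
            + 2 ^ n * (2 * 9 ^ d) * (rrM2 (rrG i β) * rrM2 (rrH i β))
            + 2 ^ n * 9 ^ d * (rrM2 (rrH i β)) ^ 2 := by ring
      rw [expand]
      have c1 : 6 * (∑ x : Fin n → Bool, (rrF (rrG i β) x) ^ 2 * (rrF (rrH i β) x) ^ 2)
          ≤ 2 ^ n * (2 * 9 ^ d) * (rrM2 (rrG i β) * rrM2 (rrH i β)) := by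
        have := mul_le_mul_of_nonneg_left hcross (show (0:ℝ) ≤ 6 by norm_num)
        calc 6 * (∑ x : Fin n → Bool, (rrF (rrG i β) x) ^ 2 * (rrF (rrH i β) x) ^ 2)
            ≤ 6 * (2 ^ n * (3 ^ d * 3 ^ (d-1)) * (rrM2 (rrG i β) * rrM2 (rrH i β))) := this
          _ = 2 ^ n * (2 * (3 ^ d * 3 ^ (d-1) * 3)) * (rrM2 (rrG i β) * rrM2 (rrH i β)) := by
              ring
          _ = 2 ^ n * (2 * 9 ^ d) * (rrM2 (rrG i β) * rrM2 (rrH i β)) := by rw [e3]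
      have c2 : ∑ x : Fin n → Bool, (rrF (rrH i β) x) ^ 4
          ≤ 2 ^ n * 9 ^ d * (rrM2 (rrH i β)) ^ 2 := by
        refine hH4.trans ?_
        have : (0:ℝ) ≤ 2 ^ n * (rrM2 (rrH i β)) ^ 2 := by positivity
        nlinarith [e99]
      linarith [hG4, c1, c2]


lemma rrParseval {n : ℕ} (β : Finset (Fin n) → ℝ) :
    ∑ x : Fin n → Bool, (rrF β x) ^ 2 = 2 ^ n * rrM2 β :=
  rrParseval_aux univ β (fun S _ => Finset.subset_univ S)

lemma rrHyper {n : ℕ} (d : ℕ) (β : Finset (Fin n) → ℝ) (hdeg : DegLE β d) :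
    ∑ x : Fin n → Bool, (rrF β x) ^ 4 ≤ 2 ^ n * 9 ^ d * (rrM2 β) ^ 2 :=
  rrHyper_aux univ d β (fun S _ => Finset.subset_univ S) hdeg


/-! Bridge between `restCoeff` and `rrF`. -/

def rrBeta {n : ℕ} (a : Finset (Fin n) → ℝ) (K : ℕ) (J : Finset (Fin n)) :
    Finset (Fin n) → ℝ :=
  fun H => if H.filter (fun i => K ≤ i.val) = ∅ then a (H ∪ J) else 0

def rrc {n : ℕ} (a : Finset (Fin n) → ℝ) (K : ℕ) (J : Finset (Fin n)) : ℝ :=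
  ∑ I ∈ univ.filter (fun I : Finset (Fin n) => I.filter (fun i => K ≤ i.val) = J), a I ^ 2

lemma rrc_nonneg {n : ℕ} (a : Finset (Fin n) → ℝ) (K : ℕ) (J : Finset (Fin n)) :
    0 ≤ rrc a K J := Finset.sum_nonneg fun _ _ => sq_nonneg _

lemma fiber_bij {n K : ℕ} {J : Finset (Fin n)} (hJ : ∀ j ∈ J, K ≤ (j : ℕ))
    (f : Finset (Fin n) → ℝ) (g : Finset (Fin n) → ℝ)
    (hfg : ∀ H, H.filter (fun i => K ≤ i.val) = ∅ → f (H ∪ J) = g H) :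
    ∑ I ∈ univ.filter (fun I : Finset (Fin n) => I.filter (fun i => K ≤ i.val) = J), f I
      = ∑ H ∈ univ.filter
          (fun H : Finset (Fin n) => H.filter (fun i => K ≤ i.val) = ∅), g H := by
  refine Finset.sum_bij' (fun I _ => I.filter (fun i => ¬ K ≤ i.val))
    (fun H _ => H ∪ J) ?_ ?_ ?_ ?_ ?_
  · intro I hI
    simp only [mem_filter, mem_univ, true_and] at hI ⊢
    rw [Finset.filter_filter]
    exact Finset.filter_false_of_mem (fun i _ => fun hc => hc.1 hc.2)
  · intro H hH
    simp only [mem_filter, mem_univ, true_and] at hH ⊢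
    rw [Finset.filter_union, hH, Finset.empty_union]
    exact Finset.filter_true_of_mem hJ
  · intro I hI
    simp only [mem_filter, mem_univ, true_and] at hI
    show I.filter (fun i => ¬ K ≤ i.val) ∪ J = I
    rw [← hI, Finset.union_comm]
    exact Finset.filter_union_filter_not_eq _ I
  · intro H hH
    simp only [mem_filter, mem_univ, true_and] at hH
    show (H ∪ J).filter (fun i => ¬ K ≤ i.val) = H
    rw [Finset.filter_union]
    have h1 : H.filter (fun i => ¬ K ≤ i.val) = H := by
      apply Finset.filter_true_of_mem
      intro i hi
      exact (Finset.filter_eq_empty_iff.1 hH) hi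
    have h2 : J.filter (fun i => ¬ K ≤ i.val) = ∅ := by
      rw [Finset.filter_eq_empty_iff]
      intro j hj hc
      exact hc (hJ j hj)
    rw [h1, h2, Finset.union_empty]
  · intro I hI
    simp only [mem_filter, mem_univ, true_and] at hI
    have hmem : (I.filter (fun i => ¬ K ≤ i.val)).filter (fun i => K ≤ i.val) = ∅ := by
      rw [Finset.filter_filter]
      exact Finset.filter_false_of_mem (fun i _ => fun hc => hc.1 hc.2)
    have : I.filter (fun i => ¬ K ≤ i.val) ∪ J = I := by
      rw [← hI, Finset.union_comm]
      exact Finset.filter_union_filter_not_eq _ I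
    rw [← hfg _ hmem, this]

lemma filter_lt_eq {n K : ℕ} (I : Finset (Fin n)) :
    I.filter (fun i => i.val < K) = I.filter (fun i => ¬ K ≤ i.val) :=
  Finset.filter_congr fun i _ => by omega

lemma restCoeff_eq_rrF {n K : ℕ} (a : Finset (Fin n) → ℝ) {J : Finset (Fin n)}
    (hJ : ∀ j ∈ J, K ≤ (j : ℕ)) (x : Fin n → Bool) :
    restCoeff a K (fun i => pmOne (x i)) J = rrF (rrBeta a K J) x := by
  rw [restCoeff, if_pos hJ, rrF]
  have hrhs : ∑ S : Finset (Fin n), rrBeta a K J S * ∏ i ∈ S, pmOne (x i)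
      = ∑ H ∈ univ.filter
          (fun H : Finset (Fin n) => H.filter (fun i => K ≤ i.val) = ∅),
          a (H ∪ J) * ∏ i ∈ H, pmOne (x i) := by
    rw [Finset.sum_filter]
    refine Finset.sum_congr rfl fun H _ => ?_
    by_cases h : H.filter (fun i => K ≤ i.val) = ∅ <;> simp [rrBeta, h]
  rw [hrhs]
  refine fiber_bij hJ _ _ ?_
  intro H hH
  congr 1
  · congr 1
    rw [filter_lt_eq, Finset.filter_union]
    have h1 : H.filter (fun i => ¬ K ≤ i.val) = H := by
      apply Finset.filter_true_of_mem
      intro i hi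
      exact (Finset.filter_eq_empty_iff.1 hH) hi
    have h2 : J.filter (fun i => ¬ K ≤ i.val) = ∅ := by
      rw [Finset.filter_eq_empty_iff]
      intro j hj hc
      exact hc (hJ j hj)
    rw [h1, h2, Finset.union_empty]

lemma rrM2_rrBeta {n K : ℕ} (a : Finset (Fin n) → ℝ) {J : Finset (Fin n)}
    (hJ : ∀ j ∈ J, K ≤ (j : ℕ)) :
    rrM2 (rrBeta a K J) = rrc a K J := by
  rw [rrM2, rrc]
  have hrhs : ∑ S : Finset (Fin n), rrBeta a K J S ^ 2
      = ∑ H ∈ univ.filter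
          (fun H : Finset (Fin n) => H.filter (fun i => K ≤ i.val) = ∅),
          a (H ∪ J) ^ 2 := by
    rw [Finset.sum_filter]
    refine Finset.sum_congr rfl fun H _ => ?_
    by_cases h : H.filter (fun i => K ≤ i.val) = ∅ <;> simp [rrBeta, h]
  rw [hrhs]
  exact (fiber_bij hJ (fun I => a I ^ 2) (fun H => a (H ∪ J) ^ 2) (fun H _ => rfl)).symm

lemma rrBeta_deg {n K : ℕ} {a : Finset (Fin n) → ℝ} {d : ℕ} (hdeg : DegLE a d)
    (J : Finset (Fin n)) : DegLE (rrBeta a K J) d := by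
  intro H hH
  rw [rrBeta] at hH
  by_cases h : H.filter (fun i => K ≤ i.val) = ∅
  · rw [if_pos h] at hH
    exact le_trans (Finset.card_le_card Finset.subset_union_left) (hdeg _ hH)
  · rw [if_neg h] at hH
    exact absurd rfl hH

lemma rrc_eq_zero {n K : ℕ} (a : Finset (Fin n) → ℝ) {J : Finset (Fin n)}
    (hJ : ¬ ∀ j ∈ J, K ≤ (j : ℕ)) : rrc a K J = 0 := by
  rw [rrc]
  have : univ.filter (fun I : Finset (Fin n) => I.filter (fun i => K ≤ i.val) = J) = ∅ := by
    rw [Finset.filter_eq_empty_iff]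
    intro I _ hI
    refine absurd (fun j hj => ?_) hJ
    rw [← hI] at hj
    exact (Finset.mem_filter.1 hj).2
  rw [this, Finset.sum_empty]

/-- Parseval for restriction coefficients. -/
lemma sum_sq_restCoeff {n K : ℕ} (a : Finset (Fin n) → ℝ) (J : Finset (Fin n)) :
    ∑ x : Fin n → Bool, (restCoeff a K (fun i => pmOne (x i)) J) ^ 2
      = 2 ^ n * rrc a K J := by
  by_cases hJ : ∀ j ∈ J, K ≤ (j : ℕ)
  · have : ∀ x : Fin n → Bool,
        restCoeff a K (fun i => pmOne (x i)) J = rrF (rrBeta a K J) x :=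
      restCoeff_eq_rrF a hJ
    simp only [this]
    rw [rrParseval, rrM2_rrBeta a hJ]
  · simp only [restCoeff, if_neg hJ]
    rw [rrc_eq_zero a hJ]
    simp

/-- Fourth moment bound for restriction coefficients. -/
lemma sum_q4_restCoeff {n K d : ℕ} {a : Finset (Fin n) → ℝ} (hdeg : DegLE a d)
    (J : Finset (Fin n)) :
    ∑ x : Fin n → Bool, (restCoeff a K (fun i => pmOne (x i)) J) ^ 4
      ≤ 2 ^ n * 9 ^ d * (rrc a K J) ^ 2 := by
  by_cases hJ : ∀ j ∈ J, K ≤ (j : ℕ)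
  · have : ∀ x : Fin n → Bool,
        restCoeff a K (fun i => pmOne (x i)) J = rrF (rrBeta a K J) x :=
      restCoeff_eq_rrF a hJ
    simp only [this]
    have := rrHyper d (rrBeta a K J) (rrBeta_deg hdeg J)
    rwa [rrM2_rrBeta a hJ] at this
  · simp only [restCoeff, if_neg hJ]
    have : (0:ℝ) ≤ 2 ^ n * 9 ^ d * (rrc a K J) ^ 2 := by positivity
    simpa using this

/-- Cross term bound via Cauchy–Schwarz. -/
lemma sum_cross_restCoeff {n K d : ℕ} {a : Finset (Fin n) → ℝ} (hdeg : DegLE a d)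
    (J J' : Finset (Fin n)) :
    ∑ x : Fin n → Bool,
        (restCoeff a K (fun i => pmOne (x i)) J) ^ 2
          * (restCoeff a K (fun i => pmOne (x i)) J') ^ 2
      ≤ 2 ^ n * 9 ^ d * (rrc a K J * rrc a K J') := by
  have h4 := sum_q4_restCoeff (K := K) hdeg J
  have h4' := sum_q4_restCoeff (K := K) hdeg J'
  refine le_of_sq_le_sq' (Finset.sum_nonneg fun x _ => by positivity) ?_ ?_
  · have := rrc_nonneg a K J
    have := rrc_nonneg a K J'
    positivity
  · have hcs := Finset.sum_mul_sq_le_sq_mul_sq Finset.univ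
      (fun x : Fin n → Bool => (restCoeff a K (fun i => pmOne (x i)) J) ^ 2)
      (fun x : Fin n → Bool => (restCoeff a K (fun i => pmOne (x i)) J') ^ 2)
    have e1 : ∀ (b : (Fin n → Bool) → ℝ),
        ∑ x : Fin n → Bool, (b x ^ 2) ^ 2 = ∑ x : Fin n → Bool, b x ^ 4 := by
      intro b; exact Finset.sum_congr rfl fun x _ => by ring
    rw [e1, e1] at hcs
    have h4nn : (0:ℝ) ≤ ∑ x : Fin n → Bool,
        (restCoeff a K (fun i => pmOne (x i)) J') ^ 4 :=
      Finset.sum_nonneg fun x _ => by positivity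
    calc (∑ x : Fin n → Bool,
            (restCoeff a K (fun i => pmOne (x i)) J) ^ 2
              * (restCoeff a K (fun i => pmOne (x i)) J') ^ 2) ^ 2
        ≤ (∑ x : Fin n → Bool, (restCoeff a K (fun i => pmOne (x i)) J) ^ 4)
          * ∑ x : Fin n → Bool, (restCoeff a K (fun i => pmOne (x i)) J') ^ 4 := hcs
      _ ≤ (2 ^ n * 9 ^ d * (rrc a K J) ^ 2) * (2 ^ n * 9 ^ d * (rrc a K J') ^ 2) :=
          mul_le_mul h4 h4' h4nn (by positivity)
      _ = (2 ^ n * 9 ^ d * (rrc a K J * rrc a K J')) ^ 2 := by ring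

/-- Generic bilinear pairing bound. -/
lemma pair_sum_le {n : ℕ} {ι : Type*} (A B : Finset ι) (f : ι → (Fin n → Bool) → ℝ)
    (c : ι → ℝ) (M : ℝ)
    (h : ∀ J ∈ A, ∀ J' ∈ B, ∑ x : Fin n → Bool, f J x * f J' x ≤ M * (c J * c J')) :
    ∑ x : Fin n → Bool, (∑ J ∈ A, f J x) * (∑ J' ∈ B, f J' x)
      ≤ M * ((∑ J ∈ A, c J) * (∑ J' ∈ B, c J')) := by
  have step1 : ∑ x : Fin n → Bool, (∑ J ∈ A, f J x) * (∑ J' ∈ B, f J' x)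
      = ∑ J ∈ A, ∑ J' ∈ B, ∑ x : Fin n → Bool, f J x * f J' x := by
    simp_rw [Finset.sum_mul_sum]
    rw [Finset.sum_comm]
    exact Finset.sum_congr rfl fun J _ => Finset.sum_comm
  have step2 : M * ((∑ J ∈ A, c J) * (∑ J' ∈ B, c J'))
      = ∑ J ∈ A, ∑ J' ∈ B, M * (c J * c J') := by
    rw [Finset.sum_mul_sum, Finset.mul_sum]
    exact Finset.sum_congr rfl fun J _ => Finset.mul_sum _ _ _
  rw [step1, step2]
  exact Finset.sum_le_sum fun J hJ => Finset.sum_le_sum fun J' hJ' => h J hJ J' hJ'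


lemma wsq_nonneg {n : ℕ} (b : Finset (Fin n) → ℝ) (j : Fin n) : 0 ≤ wsq b j :=
  Finset.sum_nonneg fun _ _ => sq_nonneg _

def wc {n : ℕ} (a : Finset (Fin n) → ℝ) (K : ℕ) (j : Fin n) : ℝ :=
  ∑ J ∈ univ.filter (fun J : Finset (Fin n) => j ∈ J), rrc a K J

lemma wc_nonneg {n : ℕ} (a : Finset (Fin n) → ℝ) (K : ℕ) (j : Fin n) : 0 ≤ wc a K j :=
  Finset.sum_nonneg fun J _ => rrc_nonneg a K J

lemma wc_eq_wsq {n K : ℕ} (a : Finset (Fin n) → ℝ) {j : Fin n} (hj : K ≤ (j : ℕ)) :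
    wc a K j = wsq a j := by
  rw [wc, wsq]
  simp only [rrc]
  rw [Finset.sum_fiberwise_eq_sum_filter univ (univ.filter (fun J : Finset (Fin n) => j ∈ J))
    (fun I => I.filter (fun i => K ≤ i.val)) (fun I => a I ^ 2)]
  congr 1
  ext I
  simp only [Finset.mem_filter, Finset.mem_univ, true_and]
  constructor
  · intro h; exact h.1
  · intro h; exact ⟨h, hj⟩

lemma wc_eq_zero {n K : ℕ} (a : Finset (Fin n) → ℝ) {j : Fin n} (hj : ¬ K ≤ (j : ℕ)) :
    wc a K j = 0 :=
  Finset.sum_eq_zero fun J hJ =>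
    rrc_eq_zero a (fun hall => hj (hall j (Finset.mem_filter.1 hJ).2))

lemma sum_wc {n K : ℕ} (a : Finset (Fin n) → ℝ) : ∑ j, wc a K j = sigmaSq a K := by
  rw [sigmaSq, ← Finset.sum_filter_add_sum_filter_not univ
    (fun j : Fin n => K ≤ (j : ℕ)) (wc a K)]
  have h1 : ∑ j ∈ univ.filter (fun j : Fin n => K ≤ (j : ℕ)), wc a K j
      = ∑ j ∈ univ.filter (fun j : Fin n => K ≤ (j : ℕ)), wsq a j :=
    Finset.sum_congr rfl fun j hj => wc_eq_wsq a (Finset.mem_filter.1 hj).2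
  have h2 : ∑ j ∈ univ.filter (fun j : Fin n => ¬ K ≤ (j : ℕ)), wc a K j = 0 :=
    Finset.sum_eq_zero fun j hj => wc_eq_zero a (Finset.mem_filter.1 hj).2
  rw [h1, h2, add_zero]

lemma pairW {n K d : ℕ} {a : Finset (Fin n) → ℝ} (hdeg : DegLE a d) (j j' : Fin n) :
    ∑ x : Fin n → Bool,
        wsq (restCoeff a K (fun i => pmOne (x i))) j
          * wsq (restCoeff a K (fun i => pmOne (x i))) j'
      ≤ 2 ^ n * 9 ^ d * (wc a K j * wc a K j') :=
  pair_sum_le (univ.filter (fun J : Finset (Fin n) => j ∈ J))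
    (univ.filter (fun J : Finset (Fin n) => j' ∈ J))
    (fun J x => (restCoeff a K (fun i => pmOne (x i)) J) ^ 2) (rrc a K) (2 ^ n * 9 ^ d)
    (fun J _ J' _ => sum_cross_restCoeff hdeg J J')

lemma sumS {n K : ℕ} (a : Finset (Fin n) → ℝ) :
    ∑ x : Fin n → Bool, ∑ j, wsq (restCoeff a K (fun i => pmOne (x i))) j
      = 2 ^ n * sigmaSq a K := by
  rw [Finset.sum_comm]
  have h1 : ∀ j : Fin n,
      ∑ x : Fin n → Bool, wsq (restCoeff a K (fun i => pmOne (x i))) j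
        = 2 ^ n * wc a K j := by
    intro j
    calc ∑ x : Fin n → Bool, wsq (restCoeff a K (fun i => pmOne (x i))) j
        = ∑ J ∈ univ.filter (fun J : Finset (Fin n) => j ∈ J),
            ∑ x : Fin n → Bool, (restCoeff a K (fun i => pmOne (x i)) J) ^ 2 :=
          Finset.sum_comm
      _ = ∑ J ∈ univ.filter (fun J : Finset (Fin n) => j ∈ J), 2 ^ n * rrc a K J :=
          Finset.sum_congr rfl fun J _ => sum_sq_restCoeff a J
      _ = 2 ^ n * wc a K j := (Finset.mul_sum _ _ _).symm
  rw [Finset.sum_congr rfl fun j _ => h1 j, ← Finset.mul_sum, sum_wc]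

lemma sumS2 {n K d : ℕ} {a : Finset (Fin n) → ℝ} (hdeg : DegLE a d) :
    ∑ x : Fin n → Bool, (∑ j, wsq (restCoeff a K (fun i => pmOne (x i))) j) ^ 2
      ≤ 2 ^ n * 9 ^ d * (sigmaSq a K) ^ 2 := by
  have h := pair_sum_le univ univ
    (fun j x => wsq (restCoeff a K (fun i => pmOne (x i))) j) (wc a K) (2 ^ n * 9 ^ d)
    (fun j _ j' _ => pairW hdeg j j')
  rw [sum_wc] at h
  calc ∑ x : Fin n → Bool, (∑ j, wsq (restCoeff a K (fun i => pmOne (x i))) j) ^ 2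
      = ∑ x : Fin n → Bool, (∑ j, wsq (restCoeff a K (fun i => pmOne (x i))) j)
          * (∑ j, wsq (restCoeff a K (fun i => pmOne (x i))) j) := by
        exact Finset.sum_congr rfl fun x _ => by ring
    _ ≤ 2 ^ n * 9 ^ d * (sigmaSq a K * sigmaSq a K) := h
    _ = 2 ^ n * 9 ^ d * (sigmaSq a K) ^ 2 := by ring

lemma sumT {n K d : ℕ} {a : Finset (Fin n) → ℝ} (hdeg : DegLE a d) (ε : ℝ)
    (hcrit : ∀ j : Fin n, K ≤ (j : ℕ) → wsq a j ≤ ε ^ 2 * sigmaSq a K) :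
    ∑ x : Fin n → Bool, ∑ j, (wsq (restCoeff a K (fun i => pmOne (x i))) j) ^ 2
      ≤ 2 ^ n * 9 ^ d * (ε ^ 2 * (sigmaSq a K) ^ 2) := by
  rw [Finset.sum_comm]
  have h1 : ∀ j : Fin n,
      ∑ x : Fin n → Bool, (wsq (restCoeff a K (fun i => pmOne (x i))) j) ^ 2
        ≤ 2 ^ n * 9 ^ d * (wc a K j) ^ 2 := by
    intro j
    have h := pairW (K := K) hdeg j j
    calc ∑ x : Fin n → Bool, (wsq (restCoeff a K (fun i => pmOne (x i))) j) ^ 2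
        = ∑ x : Fin n → Bool, wsq (restCoeff a K (fun i => pmOne (x i))) j
            * wsq (restCoeff a K (fun i => pmOne (x i))) j :=
          Finset.sum_congr rfl fun x _ => by ring
      _ ≤ 2 ^ n * 9 ^ d * (wc a K j * wc a K j) := h
      _ = 2 ^ n * 9 ^ d * (wc a K j) ^ 2 := by ring
  have h2 : ∑ j : Fin n, (wc a K j) ^ 2 ≤ ε ^ 2 * (sigmaSq a K) ^ 2 := by
    have hsplit := Finset.sum_filter_add_sum_filter_not univ
      (fun j : Fin n => K ≤ (j : ℕ)) (fun j => (wc a K j) ^ 2)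
    have hz : ∑ j ∈ univ.filter (fun j : Fin n => ¬ K ≤ (j : ℕ)), (wc a K j) ^ 2 = 0 :=
      Finset.sum_eq_zero fun j hj => by
        rw [wc_eq_zero a (Finset.mem_filter.1 hj).2]; ring
    have hb : ∑ j ∈ univ.filter (fun j : Fin n => K ≤ (j : ℕ)), (wc a K j) ^ 2
        ≤ ε ^ 2 * sigmaSq a K * ∑ j ∈ univ.filter (fun j : Fin n => K ≤ (j : ℕ)), wsq a j := by
      rw [Finset.mul_sum]
      refine Finset.sum_le_sum fun j hj => ?_
      have hjK := (Finset.mem_filter.1 hj).2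
      rw [wc_eq_wsq a hjK]
      calc (wsq a j) ^ 2 = wsq a j * wsq a j := by ring
        _ ≤ (ε ^ 2 * sigmaSq a K) * wsq a j :=
            mul_le_mul_of_nonneg_right (hcrit j hjK) (wsq_nonneg a j)
    rw [← hsplit, hz, add_zero]
    calc ∑ j ∈ univ.filter (fun j : Fin n => K ≤ (j : ℕ)), (wc a K j) ^ 2
        ≤ ε ^ 2 * sigmaSq a K * ∑ j ∈ univ.filter (fun j : Fin n => K ≤ (j : ℕ)), wsq a j := hb
      _ = ε ^ 2 * (sigmaSq a K) ^ 2 := by rw [← sigmaSq]; ring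
  calc ∑ j : Fin n, ∑ x : Fin n → Bool, (wsq (restCoeff a K (fun i => pmOne (x i))) j) ^ 2
      ≤ ∑ j : Fin n, 2 ^ n * 9 ^ d * (wc a K j) ^ 2 := Finset.sum_le_sum fun j _ => h1 j
    _ = 2 ^ n * 9 ^ d * ∑ j : Fin n, (wc a K j) ^ 2 := by rw [← Finset.mul_sum]
    _ ≤ 2 ^ n * 9 ^ d * (ε ^ 2 * (sigmaSq a K) ^ 2) := by
        have : (0:ℝ) ≤ 2 ^ n * 9 ^ d := by positivity
        exact mul_le_mul_of_nonneg_left h2 this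


set_option maxHeartbeats 1000000 in
/-- Lemma 5.1: for each `d ≥ 1` there are constants `a_d` and `γ_d > 0`
such that for any multilinear polynomial of degree at most `d` with decreasing weights and
critical index `K = K(P,ε)`, a uniformly random restriction of the first `K` variables
yields an `(a_d·ε)`-regular polynomial with probability at least `γ_d`. -/
theorem random_restriction_regular (d : ℕ) (hd : 1 ≤ d) :
    ∃ (ad γd : ℝ), 0 < γd ∧
      ∀ (ε : ℝ), 0 < ε → ε < 1 →
        ∀ (n : ℕ) (a : Finset (Fin n) → ℝ), DegLE a d → OrderedWeights a →
          γd ≤ (1 / 2 ^ n : ℝ) * ∑ x : Fin n → Bool,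
            (if Regular (restCoeff a (critIndex a ε) (fun i => pmOne (x i))) (ad * ε)
              then (1 : ℝ) else 0) := by
  refine ⟨6 * 9 ^ d, 1 / (8 * 9 ^ d), by positivity, ?_⟩
  intro ε hε hε1 n a hdeg _
  set K := critIndex a ε with hKdef
  have h9 : (0:ℝ) < 9 ^ d := by positivity
  have h2n : (0:ℝ) < 2 ^ n := by positivity
  have hγ1 : (1:ℝ) / (8 * 9 ^ d) ≤ 1 := by
    rw [div_le_one (by positivity)]
    have : (1:ℝ) ≤ 9 ^ d := one_le_pow₀ (by norm_num)
    linarith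
  -- the defining property of the critical index
  have hcrit : ∀ j : Fin n, K ≤ (j : ℕ) → wsq a j ≤ ε ^ 2 * sigmaSq a K := by
    have hne : n ∈ {k : ℕ | ∀ j : Fin n, k ≤ (j : ℕ) → wsq a j ≤ ε ^ 2 * sigmaSq a k} :=
      fun j hj => absurd hj (Nat.not_le.2 j.isLt)
    exact Nat.sInf_mem ⟨n, hne⟩
  have hs2nn : 0 ≤ sigmaSq a K := Finset.sum_nonneg fun j _ => wsq_nonneg a j
  rcases eq_or_lt_of_le hs2nn with hzero | hs2pos
  · -- degenerate case: the tail weight vanishes, every restriction is regular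
    have hwz : ∀ j : Fin n, K ≤ (j : ℕ) → wsq a j = 0 := by
      intro j hj
      exact (Finset.sum_eq_zero_iff_of_nonneg fun j _ => wsq_nonneg a j).1 hzero.symm j
        (Finset.mem_filter.2 ⟨Finset.mem_univ _, hj⟩)
    have hQz : ∀ (x : Fin n → Bool) (j : Fin n),
        wsq (restCoeff a K (fun i => pmOne (x i))) j = 0 := by
      intro x j
      rw [wsq]
      refine Finset.sum_eq_zero fun J hJ => ?_
      have hjJ : j ∈ J := (Finset.mem_filter.1 hJ).2
      have : restCoeff a K (fun i => pmOne (x i)) J = 0 := by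
        by_cases hJt : ∀ i ∈ J, K ≤ (i : ℕ)
        · rw [restCoeff, if_pos hJt]
          refine Finset.sum_eq_zero fun I hI => ?_
          have hIJ : I.filter (fun i => K ≤ i.val) = J := (Finset.mem_filter.1 hI).2
          have hjI : j ∈ I := by
            have : j ∈ I.filter (fun i => K ≤ i.val) := hIJ.symm ▸ hjJ
            exact (Finset.mem_filter.1 this).1
          have haI : a I = 0 := by
            have hw := hwz j (hJt j hjJ)
            have := (Finset.sum_eq_zero_iff_of_nonneg
              fun I _ => sq_nonneg (a I)).1 hw I
              (Finset.mem_filter.2 ⟨Finset.mem_univ _, hjI⟩)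
            exact pow_eq_zero_iff two_ne_zero |>.1 this
          rw [haI, zero_mul]
        · rw [restCoeff, if_neg hJt]
      rw [this]; ring
    have hreg : ∀ x : Fin n → Bool,
        Regular (restCoeff a K (fun i => pmOne (x i))) (6 * 9 ^ d * ε) := by
      intro x
      rw [Regular]
      simp [hQz x]
    have hone : ∀ x : Fin n → Bool,
        (if Regular (restCoeff a K (fun i => pmOne (x i))) (6 * 9 ^ d * ε)
          then (1:ℝ) else 0) = 1 := fun x => if_pos (hreg x)
    rw [Finset.sum_congr rfl fun x _ => hone x, Finset.sum_const, card_univ, nsmul_eq_mul,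
      mul_one]
    rw [card_cube n]
    calc (1:ℝ) / (8 * 9 ^ d) ≤ 1 := hγ1
      _ = 1 / 2 ^ n * 2 ^ n := by field_simp
  · -- main case
    have hES := sumS (K := K) a
    have hES2 := sumS2 (K := K) hdeg
    have hET := sumT (K := K) hdeg ε hcrit
    set Aset : Finset (Fin n → Bool) := univ.filter (fun x =>
      sigmaSq a K / 2 ≤ ∑ j, wsq (restCoeff a K (fun i => pmOne (x i))) j) with hAdef
    set Bset : Finset (Fin n → Bool) := univ.filter (fun x =>
      ∑ j, (wsq (restCoeff a K (fun i => pmOne (x i))) j) ^ 2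
        ≤ 8 * (9 ^ d) ^ 2 * ε ^ 2 * (sigmaSq a K) ^ 2) with hBdef
    have hSnn : ∀ x : Fin n → Bool,
        0 ≤ ∑ j, wsq (restCoeff a K (fun i => pmOne (x i))) j :=
      fun x => Finset.sum_nonneg fun j _ => wsq_nonneg _ j
    have hTnn : ∀ x : Fin n → Bool,
        0 ≤ ∑ j, (wsq (restCoeff a K (fun i => pmOne (x i))) j) ^ 2 :=
      fun x => Finset.sum_nonneg fun j _ => sq_nonneg _
    -- lower bound on the head sum over Aset
    have hAsum : 2 ^ n * sigmaSq a K / 2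
        ≤ ∑ x ∈ Aset, ∑ j, wsq (restCoeff a K (fun i => pmOne (x i))) j := by
      have hsplit := Finset.sum_filter_add_sum_filter_not univ (fun x : Fin n → Bool =>
        sigmaSq a K / 2 ≤ ∑ j, wsq (restCoeff a K (fun i => pmOne (x i))) j)
        (fun x => ∑ j, wsq (restCoeff a K (fun i => pmOne (x i))) j)
      have hcompl : ∑ x ∈ univ.filter (fun x : Fin n → Bool =>
          ¬ (sigmaSq a K / 2 ≤ ∑ j, wsq (restCoeff a K (fun i => pmOne (x i))) j)),
            ∑ j, wsq (restCoeff a K (fun i => pmOne (x i))) j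
          ≤ 2 ^ n * (sigmaSq a K / 2) := by
        calc ∑ x ∈ univ.filter (fun x : Fin n → Bool =>
              ¬ (sigmaSq a K / 2 ≤ ∑ j, wsq (restCoeff a K (fun i => pmOne (x i))) j)),
                ∑ j, wsq (restCoeff a K (fun i => pmOne (x i))) j
            ≤ ∑ _x ∈ univ.filter (fun x : Fin n → Bool =>
              ¬ (sigmaSq a K / 2 ≤ ∑ j, wsq (restCoeff a K (fun i => pmOne (x i))) j)),
                (sigmaSq a K / 2) := by
              refine Finset.sum_le_sum fun x hx => ?_
              exact le_of_lt (not_le.1 (Finset.mem_filter.1 hx).2)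
          _ = ((univ.filter (fun x : Fin n → Bool =>
              ¬ (sigmaSq a K / 2 ≤ ∑ j, wsq (restCoeff a K (fun i => pmOne (x i))) j))).card
                : ℝ) * (sigmaSq a K / 2) := by rw [Finset.sum_const, nsmul_eq_mul]
          _ ≤ 2 ^ n * (sigmaSq a K / 2) := by
              refine mul_le_mul_of_nonneg_right ?_ (by positivity)
              calc ((univ.filter _).card : ℝ)
                  ≤ ((univ : Finset (Fin n → Bool)).card : ℝ) := by
                    exact_mod_cast Nat.cast_le.2 (Finset.card_filter_le _ _)
                _ = 2 ^ n := by rw [Finset.card_univ]; exact card_cube n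
      rw [← hsplit] at hES
      rw [hAdef]
      linarith
    -- Paley–Zygmund: |Aset| is large
    have hAcard : 2 ^ n / (4 * 9 ^ d) ≤ (Aset.card : ℝ) := by
      have hcs := Finset.sum_mul_sq_le_sq_mul_sq Aset
        (fun x => ∑ j, wsq (restCoeff a K (fun i => pmOne (x i))) j)
        (fun _x => (1:ℝ))
      have hsub : ∑ x ∈ Aset, (∑ j, wsq (restCoeff a K (fun i => pmOne (x i))) j) ^ 2
          ≤ 2 ^ n * 9 ^ d * (sigmaSq a K) ^ 2 := by
        refine le_trans (Finset.sum_le_sum_of_subset_of_nonneg (Finset.subset_univ _)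
          fun x _ _ => sq_nonneg _) hES2
      have h1 : (∑ x ∈ Aset, ∑ j, wsq (restCoeff a K (fun i => pmOne (x i))) j) ^ 2
          ≤ (2 ^ n * 9 ^ d * (sigmaSq a K) ^ 2) * (Aset.card : ℝ) := by
        calc (∑ x ∈ Aset, ∑ j, wsq (restCoeff a K (fun i => pmOne (x i))) j) ^ 2
            = (∑ x ∈ Aset, (∑ j, wsq (restCoeff a K (fun i => pmOne (x i))) j) * 1) ^ 2 := by
              simp
          _ ≤ (∑ x ∈ Aset, (∑ j, wsq (restCoeff a K (fun i => pmOne (x i))) j) ^ 2)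
              * (∑ _x ∈ Aset, (1:ℝ) ^ 2) := hcs
          _ ≤ (2 ^ n * 9 ^ d * (sigmaSq a K) ^ 2) * (Aset.card : ℝ) := by
              have hcard : (∑ _x ∈ Aset, (1:ℝ) ^ 2) = (Aset.card : ℝ) := by
                simp
              rw [hcard]
              exact mul_le_mul_of_nonneg_right hsub (Nat.cast_nonneg _)
      have h2 : (2 ^ n * sigmaSq a K / 2) ^ 2
          ≤ (2 ^ n * 9 ^ d * (sigmaSq a K) ^ 2) * (Aset.card : ℝ) := by
        refine le_trans (pow_le_pow_left₀ (by positivity) hAsum 2) h1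
      rw [div_le_iff₀ (by positivity)]
      have hpos : (0:ℝ) < 2 ^ n * (sigmaSq a K) ^ 2 := by positivity
      nlinarith [h2, hpos, mul_pos h2n (mul_pos hs2pos hs2pos)]
    -- Markov: the complement of Bset is small
    have hBccard : ((univ.filter (fun x : Fin n → Bool =>
        ¬ (∑ j, (wsq (restCoeff a K (fun i => pmOne (x i))) j) ^ 2
          ≤ 8 * (9 ^ d) ^ 2 * ε ^ 2 * (sigmaSq a K) ^ 2))).card : ℝ)
        ≤ 2 ^ n / (8 * 9 ^ d) := by
      set Bc := univ.filter (fun x : Fin n → Bool =>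
        ¬ (∑ j, (wsq (restCoeff a K (fun i => pmOne (x i))) j) ^ 2
          ≤ 8 * (9 ^ d) ^ 2 * ε ^ 2 * (sigmaSq a K) ^ 2)) with hBcdef
      have hlow : (Bc.card : ℝ) * (8 * (9 ^ d) ^ 2 * ε ^ 2 * (sigmaSq a K) ^ 2)
          ≤ ∑ x ∈ Bc, ∑ j, (wsq (restCoeff a K (fun i => pmOne (x i))) j) ^ 2 := by
        have := Finset.card_nsmul_le_sum Bc
          (fun x => ∑ j, (wsq (restCoeff a K (fun i => pmOne (x i))) j) ^ 2)
          (8 * (9 ^ d) ^ 2 * ε ^ 2 * (sigmaSq a K) ^ 2)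
          (fun x hx => le_of_lt (not_le.1 (Finset.mem_filter.1 hx).2))
        rw [nsmul_eq_mul] at this
        exact this
      have hup : ∑ x ∈ Bc, ∑ j, (wsq (restCoeff a K (fun i => pmOne (x i))) j) ^ 2
          ≤ 2 ^ n * 9 ^ d * (ε ^ 2 * (sigmaSq a K) ^ 2) :=
        le_trans (Finset.sum_le_sum_of_subset_of_nonneg (Finset.subset_univ _)
          fun x _ _ => hTnn x) hET
      have hMpos : (0:ℝ) < 8 * (9 ^ d) ^ 2 * ε ^ 2 * (sigmaSq a K) ^ 2 := by positivity
      rw [le_div_iff₀ (by positivity)]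
      nlinarith [hlow, hup, mul_pos (mul_pos h9 (mul_pos (mul_pos hε hε) hs2pos)) hs2pos]
    -- combine
    have hsubAB : Aset ⊆ (Aset ∩ Bset) ∪ (univ.filter (fun x : Fin n → Bool =>
        ¬ (∑ j, (wsq (restCoeff a K (fun i => pmOne (x i))) j) ^ 2
          ≤ 8 * (9 ^ d) ^ 2 * ε ^ 2 * (sigmaSq a K) ^ 2))) := by
      intro x hx
      by_cases hb : x ∈ Bset
      · exact Finset.mem_union.2 (Or.inl (Finset.mem_inter.2 ⟨hx, hb⟩))
      · refine Finset.mem_union.2 (Or.inr (Finset.mem_filter.2 ⟨Finset.mem_univ _, ?_⟩))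
        intro hcond
        exact hb (by rw [hBdef]; exact Finset.mem_filter.2 ⟨Finset.mem_univ _, hcond⟩)
    have hABcard : 2 ^ n / (8 * 9 ^ d) ≤ ((Aset ∩ Bset).card : ℝ) := by
      have hc := le_trans (Finset.card_le_card hsubAB) (Finset.card_union_le _ _)
      have hc' : (Aset.card : ℝ) ≤ ((Aset ∩ Bset).card : ℝ)
          + ((univ.filter (fun x : Fin n → Bool =>
            ¬ (∑ j, (wsq (restCoeff a K (fun i => pmOne (x i))) j) ^ 2
              ≤ 8 * (9 ^ d) ^ 2 * ε ^ 2 * (sigmaSq a K) ^ 2))).card : ℝ) := by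
        exact_mod_cast hc
      have heq : (2:ℝ) ^ n / (4 * 9 ^ d)
          = 2 ^ n / (8 * 9 ^ d) + 2 ^ n / (8 * 9 ^ d) := by
        field_simp
        ring
      linarith
    -- every point in the intersection yields a regular restriction
    have hGood : ∀ x ∈ Aset ∩ Bset,
        Regular (restCoeff a K (fun i => pmOne (x i))) (6 * 9 ^ d * ε) := by
      intro x hx
      obtain ⟨hxA, hxB⟩ := Finset.mem_inter.1 hx
      rw [hAdef] at hxA
      rw [hBdef] at hxB
      have hA' : sigmaSq a K / 2 ≤ ∑ j, wsq (restCoeff a K (fun i => pmOne (x i))) j :=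
        (Finset.mem_filter.1 hxA).2
      have hB' : ∑ j, (wsq (restCoeff a K (fun i => pmOne (x i))) j) ^ 2
          ≤ 8 * (9 ^ d) ^ 2 * ε ^ 2 * (sigmaSq a K) ^ 2 :=
        (Finset.mem_filter.1 hxB).2
      rw [Regular]
      have h4 : (sigmaSq a K) ^ 2
          ≤ 4 * (∑ j, wsq (restCoeff a K (fun i => pmOne (x i))) j) ^ 2 := by
        nlinarith [hA', hs2pos, hSnn x]
      have hfac : (0:ℝ) ≤ 8 * (9 ^ d) ^ 2 * ε ^ 2 := by positivity
      have hstep := mul_le_mul_of_nonneg_left h4 hfac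
      have hS2nn : (0:ℝ) ≤ (∑ j, wsq (restCoeff a K (fun i => pmOne (x i))) j) ^ 2 :=
        sq_nonneg _
      nlinarith [hB', hstep, mul_nonneg (mul_nonneg (sq_nonneg ((9:ℝ)^d)) (sq_nonneg ε)) hS2nn]
    -- final counting
    have hind : ((Aset ∩ Bset).card : ℝ)
        ≤ ∑ x : Fin n → Bool,
            (if Regular (restCoeff a K (fun i => pmOne (x i))) (6 * 9 ^ d * ε)
              then (1:ℝ) else 0) := by
      calc ((Aset ∩ Bset).card : ℝ)
          = ∑ _x ∈ Aset ∩ Bset, (1:ℝ) := by rw [Finset.sum_const, nsmul_eq_mul, mul_one]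
        _ = ∑ x ∈ Aset ∩ Bset,
            (if Regular (restCoeff a K (fun i => pmOne (x i))) (6 * 9 ^ d * ε)
              then (1:ℝ) else 0) :=
            Finset.sum_congr rfl fun x hx => (if_pos (hGood x hx)).symm
        _ ≤ ∑ x : Fin n → Bool,
            (if Regular (restCoeff a K (fun i => pmOne (x i))) (6 * 9 ^ d * ε)
              then (1:ℝ) else 0) := by
            refine Finset.sum_le_sum_of_subset_of_nonneg (Finset.subset_univ _) ?_
            intro x _ _
            split_ifs <;> norm_num
    have hfin : (2:ℝ) ^ n / (8 * 9 ^ d)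
        ≤ ∑ x : Fin n → Bool,
            (if Regular (restCoeff a K (fun i => pmOne (x i))) (6 * 9 ^ d * ε)
              then (1:ℝ) else 0) := le_trans hABcard hind
    calc (1:ℝ) / (8 * 9 ^ d)
        = 1 / 2 ^ n * (2 ^ n / (8 * 9 ^ d)) := by field_simp
      _ ≤ 1 / 2 ^ n * ∑ x : Fin n → Bool,
            (if Regular (restCoeff a K (fun i => pmOne (x i))) (6 * 9 ^ d * ε)
              then (1:ℝ) else 0) := by
          exact mul_le_mul_of_nonneg_left hfin (by positivity)


end
end

section
/- For every integer d ≥ 1 there exist constants b_d, c_d ∈ R and δ_d > 0 such that the following holds for every ε ∈ (0,1) and every multilinear polynomial P of degree at most d on n variables whose variables are ordered so that w_1(P) ≥ … ≥ w_n(P), every θ ∈ R, and f(x) = sign(P(x) − θ). If the ε-critical index satisfies K(P,ε) ≥ L where L = c_d · log(1/ε)/ε², then a uniformly random partial assignment (x_1,…,x_L) ∈ {-1,1}^L is (b_d · ε)-determining for f with probability at least δ_d. -/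
open Finset MeasureTheory ProbabilityTheory
open scoped Classical

noncomputable section

namespace RRD
variable {n : ℕ}

def chi {n : ℕ} (I : Finset (Fin n)) (x : Fin n → Bool) : ℝ := ∏ i ∈ I, pmOne (x i)

lemma pmOne_mul_self (b : Bool) : pmOne b * pmOne b = 1 := by cases b <;> simp [pmOne]

lemma pmOne_sq (b : Bool) : pmOne b ^ 2 = 1 := by cases b <;> simp [pmOne]

lemma pmOne_not (b : Bool) : pmOne (!b) = - pmOne b := by cases b <;> simp [pmOne]

lemma chi_empty (x : Fin n → Bool) : chi ∅ x = 1 := by simp [chi]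

lemma chi_update_not_mem {I : Finset (Fin n)} {i : Fin n} (h : i ∉ I) (x : Fin n → Bool)
    (b : Bool) : chi I (Function.update x i b) = chi I x :=
  Finset.prod_congr rfl fun j hj => by
    have hji : j ≠ i := fun e => h (e ▸ hj)
    rw [Function.update_of_ne hji]

def flip (i : Fin n) (x : Fin n → Bool) : Fin n → Bool := Function.update x i (!x i)

lemma flip_invol (i : Fin n) : Function.Involutive (flip i) := by
  intro x; funext j
  by_cases h : j = i
  · subst h; simp [flip]
  · simp [flip, Function.update_of_ne h]

lemma chi_flip {I : Finset (Fin n)} {i : Fin n} (h : i ∈ I) (x : Fin n → Bool) :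
    chi I (flip i x) = - chi I x := by
  unfold chi
  rw [← Finset.mul_prod_erase _ _ h, ← Finset.mul_prod_erase _ (fun j => pmOne (x j)) h]
  have h1 : ∀ j ∈ I.erase i, pmOne (flip i x j) = pmOne (x j) := by
    intro j hj
    rw [show flip i x j = x j from Function.update_of_ne (Finset.ne_of_mem_erase hj) _ _]
  rw [Finset.prod_congr rfl h1, show flip i x i = !x i from Function.update_self _ _ _,
    pmOne_not]
  ring

lemma sum_chi (I : Finset (Fin n)) :
    ∑ x : Fin n → Bool, chi I x = if I = ∅ then (2 ^ n : ℝ) else 0 := by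
  split
  · next h =>
    subst h
    simp [chi_empty, Finset.card_univ, Fintype.card_fun]
  · next h =>
    obtain ⟨i, hi⟩ := Finset.nonempty_iff_ne_empty.mpr h
    have h1 : ∑ x : Fin n → Bool, chi I x = ∑ x : Fin n → Bool, chi I (flip i x) :=
      Fintype.sum_bijective (flip i) (flip_invol i).bijective _ _ fun x => by
        rw [flip_invol i x]
    have h2 : ∀ x, chi I (flip i x) = - chi I x := fun x => chi_flip hi x
    simp_rw [h2] at h1
    rw [Finset.sum_neg_distrib] at h1
    linarith

lemma chi_mul_chi (I J : Finset (Fin n)) (x : Fin n → Bool) :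
    chi I x * chi J x = chi ((I \ J) ∪ (J \ I)) x := by
  unfold chi
  have hI : (∏ i ∈ I, pmOne (x i)) =
      (∏ i ∈ I \ J, pmOne (x i)) * ∏ i ∈ I ∩ J, pmOne (x i) := by
    rw [← Finset.prod_union (Finset.disjoint_sdiff_inter I J), Finset.sdiff_union_inter]
  have hJ : (∏ i ∈ J, pmOne (x i)) =
      (∏ i ∈ J \ I, pmOne (x i)) * ∏ i ∈ I ∩ J, pmOne (x i) := by
    rw [Finset.inter_comm I J, ← Finset.prod_union (Finset.disjoint_sdiff_inter J I),
      Finset.sdiff_union_inter]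
  rw [hI, hJ, Finset.prod_union disjoint_sdiff_sdiff]
  have : (∏ i ∈ I ∩ J, pmOne (x i)) * ∏ i ∈ I ∩ J, pmOne (x i) = 1 := by
    rw [← Finset.prod_mul_distrib]
    exact Finset.prod_eq_one fun i _ => pmOne_mul_self _
  calc ((∏ i ∈ I \ J, pmOne (x i)) * ∏ i ∈ I ∩ J, pmOne (x i)) *
        ((∏ i ∈ J \ I, pmOne (x i)) * ∏ i ∈ I ∩ J, pmOne (x i))
      = ((∏ i ∈ I \ J, pmOne (x i)) * ∏ i ∈ J \ I, pmOne (x i)) *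
        ((∏ i ∈ I ∩ J, pmOne (x i)) * ∏ i ∈ I ∩ J, pmOne (x i)) := by ring
    _ = (∏ i ∈ I \ J, pmOne (x i)) * ∏ i ∈ J \ I, pmOne (x i) := by rw [this, mul_one]

lemma sum_chi_mul_chi (I J : Finset (Fin n)) :
    ∑ x : Fin n → Bool, chi I x * chi J x = if I = J then (2 ^ n : ℝ) else 0 := by
  simp_rw [chi_mul_chi, sum_chi]
  congr 1
  · simp only [eq_iff_iff, Finset.union_eq_empty, Finset.sdiff_eq_empty_iff_subset]
    constructor
    · rintro ⟨h1, h2⟩; exact le_antisymm h1 h2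
    · rintro rfl; exact ⟨le_rfl, le_rfl⟩

lemma parseval {ι : Type*} [DecidableEq ι] (S : Finset ι) (b : ι → ℝ)
    (φ : ι → Finset (Fin n)) (hφ : Set.InjOn φ S) :
    ∑ x : Fin n → Bool, (∑ k ∈ S, b k * chi (φ k) x) ^ 2 = 2 ^ n * ∑ k ∈ S, b k ^ 2 := by
  have key : ∀ x : Fin n → Bool, (∑ k ∈ S, b k * chi (φ k) x) ^ 2 =
      ∑ k ∈ S, ∑ l ∈ S, (b k * b l) * (chi (φ k) x * chi (φ l) x) := by
    intro x
    rw [sq, Finset.sum_mul_sum]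
    exact Finset.sum_congr rfl fun k _ => Finset.sum_congr rfl fun l _ => by ring
  simp_rw [key]
  rw [Finset.sum_comm]
  have inner : ∀ k ∈ S, ∑ x : Fin n → Bool, ∑ l ∈ S, (b k * b l) * (chi (φ k) x * chi (φ l) x)
      = 2 ^ n * b k ^ 2 := by
    intro k hk
    rw [Finset.sum_comm]
    have : ∀ l ∈ S, ∑ x : Fin n → Bool, (b k * b l) * (chi (φ k) x * chi (φ l) x)
        = if φ k = φ l then (b k * b l) * 2 ^ n else 0 := by
      intro l _
      rw [← Finset.mul_sum, sum_chi_mul_chi]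
      split <;> simp
    rw [Finset.sum_congr rfl this, Finset.sum_eq_single_of_mem k hk]
    · simp; ring
    · intro l hl hlk
      rw [if_neg (fun h => hlk (hφ hl hk h.symm))]
  rw [Finset.sum_congr rfl inner, ← Finset.mul_sum]

lemma sum_sum_chi {ι : Type*} (S : Finset ι) (b : ι → ℝ) (φ : ι → Finset (Fin n))
    (hne : ∀ k ∈ S, φ k ≠ ∅) :
    ∑ x : Fin n → Bool, (∑ k ∈ S, b k * chi (φ k) x) = 0 := by
  rw [Finset.sum_comm]
  refine Finset.sum_eq_zero fun k hk => ?_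
  rw [← Finset.mul_sum, sum_chi, if_neg (hne k hk), mul_zero]

end RRD
namespace RRD
variable {n : ℕ}

lemma sum_pmOne_mul (i : Fin n) (g : (Fin n → Bool) → ℝ)
    (hg : ∀ x b, g (Function.update x i b) = g x) :
    ∑ x : Fin n → Bool, pmOne (x i) * g x = 0 := by
  have h1 : ∑ x : Fin n → Bool, pmOne (x i) * g x
      = ∑ x : Fin n → Bool, pmOne (flip i x i) * g (flip i x) :=
    Fintype.sum_bijective (flip i) (flip_invol i).bijective _ _ fun x => by
      rw [flip_invol i x]
  have h2 : ∀ x, pmOne (flip i x i) * g (flip i x) = - (pmOne (x i) * g x) := by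
    intro x
    rw [show flip i x i = !x i from Function.update_self _ _ _,
      show g (flip i x) = g x from hg x (!x i), pmOne_not]
    ring
  simp_rw [h2] at h1
  rw [Finset.sum_neg_distrib] at h1
  linarith

lemma pow_four_expand (a b e : ℝ) (he : e ^ 2 = 1) :
    (a + e * b) ^ 4 = a ^ 4 + 6 * a ^ 2 * b ^ 2 + b ^ 4 + e * (4 * a ^ 3 * b + 4 * a * b ^ 3) := by
  linear_combination (b ^ 4 * (e ^ 2 + 1) + 4 * a * b ^ 3 * e + 6 * a ^ 2 * b ^ 2) * he

lemma sum_insert_reindex (i : Fin n) (g : Finset (Fin n) → ℝ) :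
    ∑ I ∈ Finset.univ.filter (fun I : Finset (Fin n) => i ∈ I), g I
      = ∑ J ∈ Finset.univ.filter (fun J : Finset (Fin n) => i ∉ J), g (insert i J) := by
  refine Finset.sum_nbij' (fun I => I.erase i) (fun J => insert i J) ?_ ?_ ?_ ?_ ?_
  · intro I hI; simp
  · intro J hJ
    simp only [Finset.mem_filter, Finset.mem_univ, true_and] at hJ ⊢
    exact Finset.mem_insert_self i J
  · intro I hI
    simp only [Finset.mem_filter, Finset.mem_univ, true_and] at hI
    exact Finset.insert_erase hI
  · intro J hJ
    simp only [Finset.mem_filter, Finset.mem_univ, true_and] at hJ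
    exact Finset.erase_insert hJ
  · intro I hI
    simp only [Finset.mem_filter, Finset.mem_univ, true_and] at hI
    rw [Finset.insert_erase hI]

lemma hc_const (d : ℕ) (c : Finset (Fin n) → ℝ) (h : ∀ I, c I ≠ 0 → I = ∅) :
    ∑ x : Fin n → Bool, (∑ I, c I * chi I x) ^ 4
      ≤ 2 ^ n * 9 ^ d * (∑ I, c I ^ 2) ^ 2 := by
  have hQ : ∀ x : Fin n → Bool, (∑ I, c I * chi I x) = c ∅ := by
    intro x
    rw [Finset.sum_eq_single ∅]
    · rw [chi_empty, mul_one]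
    · intro I _ hI
      by_cases h0 : c I = 0
      · rw [h0, zero_mul]
      · exact absurd (h I h0) hI
    · simp
  simp_rw [hQ]
  rw [Finset.sum_const, Finset.card_univ, Fintype.card_fun, Fintype.card_bool,
    Fintype.card_fin, nsmul_eq_mul]
  push_cast
  have h1 : c ∅ ^ 2 ≤ ∑ I, c I ^ 2 :=
    Finset.single_le_sum (fun I _ => sq_nonneg (c I)) (Finset.mem_univ ∅)
  have h2 : (c ∅ ^ 2) ^ 2 ≤ (∑ I, c I ^ 2) ^ 2 := pow_le_pow_left₀ (sq_nonneg _) h1 2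
  have h9 : (1 : ℝ) ≤ 9 ^ d := by
    calc (1:ℝ) = 1 ^ d := (one_pow d).symm
      _ ≤ 9 ^ d := pow_le_pow_left₀ (by norm_num) (by norm_num) d
  have h2n : (0 : ℝ) < 2 ^ n := by positivity
  calc (2 ^ n : ℝ) * (c ∅) ^ 4 = 2 ^ n * 1 * (c ∅ ^ 2) ^ 2 := by ring
    _ ≤ 2 ^ n * 9 ^ d * (∑ I, c I ^ 2) ^ 2 := by
        apply mul_le_mul
        · exact mul_le_mul_of_nonneg_left h9 h2n.le
        · exact h2
        · positivity
        · positivity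

set_option maxHeartbeats 1000000 in
lemma hypercontractive (s : Finset (Fin n)) :
    ∀ (d : ℕ) (c : Finset (Fin n) → ℝ),
    (∀ I, c I ≠ 0 → I ⊆ s ∧ I.card ≤ d) →
    ∑ x : Fin n → Bool, (∑ I, c I * chi I x) ^ 4
      ≤ 2 ^ n * 9 ^ d * (∑ I, c I ^ 2) ^ 2 := by
  induction s using Finset.induction with
  | empty =>
    intro d c hc
    exact hc_const d c fun I h0 => Finset.subset_empty.mp (hc I h0).1
  | @insert i s' hi ih =>
    intro d c hc
    match d with
    | 0 =>
      refine hc_const 0 c fun I h0 => Finset.card_eq_zero.mp (Nat.le_zero.mp (hc I h0).2)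
    | (d' + 1) =>
      set c₀ : Finset (Fin n) → ℝ := fun I => if i ∈ I then 0 else c I with hc₀def
      set c₁ : Finset (Fin n) → ℝ := fun J => if i ∈ J then 0 else c (insert i J) with hc₁def
      set Q₀ : (Fin n → Bool) → ℝ := fun x => ∑ I, c₀ I * chi I x with hQ₀def
      set Q₁ : (Fin n → Bool) → ℝ := fun x => ∑ I, c₁ I * chi I x with hQ₁def
      -- rewriting sums over univ as sums over filters
      have hQ₀filter : ∀ x, Q₀ x = ∑ I ∈ Finset.univ.filter (fun I => i ∉ I), c I * chi I x := by
        intro x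
        rw [Finset.sum_filter]
        refine Finset.sum_congr rfl fun I _ => ?_
        by_cases h : i ∈ I <;> simp [hc₀def, h]
      have hQ₁filter : ∀ x, Q₁ x
          = ∑ J ∈ Finset.univ.filter (fun J => i ∉ J), c (insert i J) * chi J x := by
        intro x
        rw [Finset.sum_filter]
        refine Finset.sum_congr rfl fun J _ => ?_
        by_cases h : i ∈ J <;> simp [hc₁def, h]
      have hdec : ∀ x, (∑ I, c I * chi I x) = Q₀ x + pmOne (x i) * Q₁ x := by
        intro x
        rw [← Finset.sum_filter_add_sum_filter_not Finset.univ (fun I => i ∈ I)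
          (fun I => c I * chi I x)]
        rw [hQ₀filter, hQ₁filter, Finset.mul_sum]
        have : ∑ I ∈ Finset.univ.filter (fun I => i ∈ I), c I * chi I x
            = ∑ J ∈ Finset.univ.filter (fun J => i ∉ J), c (insert i J) * (chi (insert i J) x) :=
          sum_insert_reindex i (fun I => c I * chi I x)
        rw [this]
        rw [add_comm]
        congr 1
        refine Finset.sum_congr rfl fun J hJ => ?_
        simp only [Finset.mem_filter, Finset.mem_univ, true_and] at hJ
        rw [show chi (insert i J) x = pmOne (x i) * chi J x from Finset.prod_insert hJ]
        ring
      -- support conditions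
      have hsupp₀ : ∀ I, c₀ I ≠ 0 → I ⊆ s' ∧ I.card ≤ d' + 1 := by
        intro I h0
        by_cases h : i ∈ I
        · simp [hc₀def, h] at h0
        · simp only [hc₀def, if_neg h] at h0
          obtain ⟨hsub, hcard⟩ := hc I h0
          exact ⟨(Finset.subset_insert_iff_of_notMem h).mp hsub, hcard⟩
      have hsupp₁ : ∀ J, c₁ J ≠ 0 → J ⊆ s' ∧ J.card ≤ d' := by
        intro J h0
        by_cases h : i ∈ J
        · simp [hc₁def, h] at h0
        · simp only [hc₁def, if_neg h] at h0
          obtain ⟨hsub, hcard⟩ := hc _ h0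
          constructor
          · intro j hj
            have : j ∈ insert i s' := hsub (Finset.mem_insert_of_mem hj)
            rcases Finset.mem_insert.mp this with h1 | h1
            · exact absurd (h1 ▸ hj) h
            · exact h1
          · rw [Finset.card_insert_of_notMem h] at hcard
            omega
      -- sums of squares split
      have hsq₀ : (∑ I, c₀ I ^ 2) = ∑ I ∈ Finset.univ.filter (fun I => i ∉ I), c I ^ 2 := by
        rw [Finset.sum_filter]
        refine Finset.sum_congr rfl fun I _ => ?_
        by_cases h : i ∈ I <;> simp [hc₀def, h]
      have hsq₁ : (∑ I, c₁ I ^ 2) = ∑ I ∈ Finset.univ.filter (fun I : Finset (Fin n) => i ∈ I), c I ^ 2 := by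
        rw [sum_insert_reindex i (fun I => c I ^ 2), Finset.sum_filter]
        refine Finset.sum_congr rfl fun J _ => ?_
        by_cases h : i ∈ J <;> simp [hc₁def, h]
      have hsplit : (∑ I, c I ^ 2) = (∑ I, c₀ I ^ 2) + (∑ I, c₁ I ^ 2) := by
        rw [hsq₀, hsq₁, add_comm,
          Finset.sum_filter_add_sum_filter_not Finset.univ (fun I => i ∈ I)]
      -- invariance under update of coordinate i
      have hup₀ : ∀ x b, Q₀ (Function.update x i b) = Q₀ x := by
        intro x b
        refine Finset.sum_congr rfl fun I _ => ?_
        by_cases h : i ∈ I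
        · simp [hc₀def, h]
        · rw [chi_update_not_mem h]
      have hup₁ : ∀ x b, Q₁ (Function.update x i b) = Q₁ x := by
        intro x b
        refine Finset.sum_congr rfl fun I _ => ?_
        by_cases h : i ∈ I
        · simp [hc₁def, h]
        · rw [chi_update_not_mem h]
      -- expansion
      have hexp : ∀ x, (∑ I, c I * chi I x) ^ 4
          = Q₀ x ^ 4 + 6 * Q₀ x ^ 2 * Q₁ x ^ 2 + Q₁ x ^ 4
            + pmOne (x i) * (4 * Q₀ x ^ 3 * Q₁ x + 4 * Q₀ x * Q₁ x ^ 3) := by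
        intro x
        rw [hdec x, pow_four_expand _ _ _ (pmOne_sq (x i))]
      have hodd : ∑ x : Fin n → Bool,
          pmOne (x i) * (4 * Q₀ x ^ 3 * Q₁ x + 4 * Q₀ x * Q₁ x ^ 3) = 0 := by
        apply sum_pmOne_mul
        intro x b
        rw [hup₀, hup₁]
      have hsum : ∑ x : Fin n → Bool, (∑ I, c I * chi I x) ^ 4
          = (∑ x : Fin n → Bool, Q₀ x ^ 4) + 6 * (∑ x : Fin n → Bool, Q₀ x ^ 2 * Q₁ x ^ 2)
            + (∑ x : Fin n → Bool, Q₁ x ^ 4) := by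
        simp_rw [hexp]
        rw [Finset.sum_add_distrib, Finset.sum_add_distrib, Finset.sum_add_distrib, hodd,
          add_zero, Finset.mul_sum]
        ring_nf
      -- bounds
      set X := ∑ I, c₀ I ^ 2 with hX
      set Y := ∑ I, c₁ I ^ 2 with hY
      have hXnn : 0 ≤ X := Finset.sum_nonneg fun I _ => sq_nonneg _
      have hYnn : 0 ≤ Y := Finset.sum_nonneg fun I _ => sq_nonneg _
      have h0 : ∑ x : Fin n → Bool, Q₀ x ^ 4 ≤ 2 ^ n * 9 ^ (d' + 1) * X ^ 2 :=
        ih (d' + 1) c₀ hsupp₀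
      have h1 : ∑ x : Fin n → Bool, Q₁ x ^ 4 ≤ 2 ^ n * 9 ^ d' * Y ^ 2 :=
        ih d' c₁ hsupp₁
      have h04nn : (0:ℝ) ≤ ∑ x : Fin n → Bool, Q₀ x ^ 4 :=
        Finset.sum_nonneg fun x _ => by positivity
      have h14nn : (0:ℝ) ≤ ∑ x : Fin n → Bool, Q₁ x ^ 4 :=
        Finset.sum_nonneg fun x _ => by positivity
      have hcs : (∑ x : Fin n → Bool, Q₀ x ^ 2 * Q₁ x ^ 2) ^ 2
          ≤ (∑ x : Fin n → Bool, Q₀ x ^ 4) * (∑ x : Fin n → Bool, Q₁ x ^ 4) := by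
        have := Finset.sum_mul_sq_le_sq_mul_sq Finset.univ (fun x => Q₀ x ^ 2) (fun x => Q₁ x ^ 2)
        simp_rw [show ∀ x : Fin n → Bool, (Q₀ x ^ 2) ^ 2 = Q₀ x ^ 4 from fun x => by ring,
          show ∀ x : Fin n → Bool, (Q₁ x ^ 2) ^ 2 = Q₁ x ^ 4 from fun x => by ring] at this
        exact this
      set p := (3:ℝ) ^ d' with hp
      have hpnn : (0:ℝ) ≤ p := by positivity
      have h9d' : (9:ℝ) ^ d' = p ^ 2 := by
        rw [hp, ← pow_mul, show (9:ℝ) = 3 ^ 2 by norm_num, ← pow_mul]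
        ring_nf
      have h9d1 : (9:ℝ) ^ (d' + 1) = 9 * p ^ 2 := by rw [pow_succ, h9d']; ring
      have hmid : ∑ x : Fin n → Bool, Q₀ x ^ 2 * Q₁ x ^ 2 ≤ 2 ^ n * (3 * p ^ 2) * (X * Y) := by
        have hmidnn : (0:ℝ) ≤ ∑ x : Fin n → Bool, Q₀ x ^ 2 * Q₁ x ^ 2 :=
          Finset.sum_nonneg fun x _ => by positivity
        refine le_of_pow_le_pow_left₀ two_ne_zero (by positivity) ?_
        calc (∑ x : Fin n → Bool, Q₀ x ^ 2 * Q₁ x ^ 2) ^ 2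
            ≤ (∑ x : Fin n → Bool, Q₀ x ^ 4) * (∑ x : Fin n → Bool, Q₁ x ^ 4) := hcs
          _ ≤ (2 ^ n * 9 ^ (d' + 1) * X ^ 2) * (2 ^ n * 9 ^ d' * Y ^ 2) := by
              apply mul_le_mul h0 h1 h14nn (by positivity)
          _ = (2 ^ n * (3 * p ^ 2) * (X * Y)) ^ 2 := by rw [h9d', h9d1]; ring
      calc ∑ x : Fin n → Bool, (∑ I, c I * chi I x) ^ 4
          = (∑ x : Fin n → Bool, Q₀ x ^ 4) + 6 * (∑ x : Fin n → Bool, Q₀ x ^ 2 * Q₁ x ^ 2)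
            + (∑ x : Fin n → Bool, Q₁ x ^ 4) := hsum
        _ ≤ (2 ^ n * 9 ^ (d' + 1) * X ^ 2) + 6 * (2 ^ n * (3 * p ^ 2) * (X * Y))
            + (2 ^ n * 9 ^ d' * Y ^ 2) := by
            have h6 : 6 * (∑ x : Fin n → Bool, Q₀ x ^ 2 * Q₁ x ^ 2)
                ≤ 6 * (2 ^ n * (3 * p ^ 2) * (X * Y)) := by linarith
            linarith
        _ ≤ 2 ^ n * 9 ^ (d' + 1) * (∑ I, c I ^ 2) ^ 2 := by
            rw [hsplit, h9d1, h9d']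
            have h2n : (0:ℝ) ≤ 2 ^ n := by positivity
            nlinarith [sq_nonneg (X + Y), sq_nonneg (X - Y), mul_nonneg hXnn hYnn,
              mul_nonneg (mul_nonneg h2n (sq_nonneg p)) (sq_nonneg Y)]

end RRD
namespace RRD

lemma max_zero_eq (z : ℝ) : max z 0 = (z + |z|) / 2 := by
  rcases le_or_gt 0 z with h | h
  · rw [max_eq_left h, abs_of_nonneg h]; ring
  · rw [max_eq_right h.le, abs_of_neg h]; ring

lemma anticoncentration {α : Type*} [Fintype α] (d : ℕ) (Z : α → ℝ) (W N : ℝ)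
    (hW : 0 < W) (hN : 0 < N) (hcard : (Fintype.card α : ℝ) = N)
    (h0 : ∑ x : α, Z x = 0) (h2 : ∑ x : α, Z x ^ 2 = N * W ^ 2)
    (h4 : ∑ x : α, Z x ^ 4 ≤ 9 ^ d * N * W ^ 4) :
    N ≤ 16 * 9 ^ d * ((Finset.univ.filter (fun x : α => W / (4 * 3 ^ d) ≤ Z x)).card : ℝ) := by
  classical
  set T3 : ℝ := 3 ^ d with hT3
  have hT3pos : (0:ℝ) < T3 := by positivity
  have h9 : (9:ℝ) ^ d = T3 ^ 2 := by
    rw [hT3, ← pow_mul, show (9:ℝ) = 3 ^ 2 by norm_num, ← pow_mul]; ring_nf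
  set A1 := ∑ x : α, |Z x| with hA1
  set A3 := ∑ x : α, |Z x| ^ 3 with hA3
  have hA1nn : 0 ≤ A1 := Finset.sum_nonneg fun x _ => abs_nonneg _
  have hA3nn : 0 ≤ A3 := Finset.sum_nonneg fun x _ => by positivity
  -- Cauchy-Schwarz 1 : (∑ Z²)² ≤ A1 * A3
  have cs1 : (∑ x : α, Z x ^ 2) ^ 2 ≤ A1 * A3 := by
    have := Finset.sum_mul_sq_le_sq_mul_sq Finset.univ
      (fun x => Real.sqrt |Z x|) (fun x => |Z x| * Real.sqrt |Z x|)
    have e1 : ∀ x : α, Real.sqrt |Z x| * (|Z x| * Real.sqrt |Z x|) = Z x ^ 2 := by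
      intro x
      rw [show Real.sqrt |Z x| * (|Z x| * Real.sqrt |Z x|)
          = (Real.sqrt |Z x| * Real.sqrt |Z x|) * |Z x| by ring,
        Real.mul_self_sqrt (abs_nonneg _), ← abs_mul, abs_mul_self, sq]
    have e2 : ∀ x : α, (Real.sqrt |Z x|) ^ 2 = |Z x| := fun x => Real.sq_sqrt (abs_nonneg _)
    have e3 : ∀ x : α, (|Z x| * Real.sqrt |Z x|) ^ 2 = |Z x| ^ 3 := by
      intro x
      rw [mul_pow, Real.sq_sqrt (abs_nonneg _)]
      ring
    simp_rw [e1, e2, e3] at this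
    exact this
  -- Cauchy-Schwarz 2 : A3² ≤ (∑ Z²)(∑ Z⁴)
  have cs2 : A3 ^ 2 ≤ (∑ x : α, Z x ^ 2) * (∑ x : α, Z x ^ 4) := by
    have := Finset.sum_mul_sq_le_sq_mul_sq Finset.univ (fun x => |Z x|) (fun x => Z x ^ 2)
    have e1 : ∀ x : α, |Z x| * Z x ^ 2 = |Z x| ^ 3 := by
      intro x
      rw [← sq_abs (Z x)]; ring
    have e2 : ∀ x : α, (|Z x|) ^ 2 = Z x ^ 2 := fun x => sq_abs _
    have e3 : ∀ x : α, (Z x ^ 2) ^ 2 = Z x ^ 4 := fun x => by ring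
    simp_rw [e1, e2, e3] at this
    exact this
  -- lower bound on A1
  have key : N * W / T3 ≤ A1 := by
    by_contra hcon
    push_neg at hcon
    have hA1sq : A1 ^ 2 < (N * W / T3) ^ 2 := by
      apply pow_lt_pow_left₀ hcon hA1nn two_ne_zero
    have e2' : (∑ x : α, Z x ^ 2) = N * W ^ 2 := h2
    have c1 : (N * W ^ 2) ^ 2 ≤ A1 * A3 := by rw [← e2']; exact cs1
    have c2 : A3 ^ 2 ≤ (N * W ^ 2) * (9 ^ d * N * W ^ 4) := by
      calc A3 ^ 2 ≤ (∑ x : α, Z x ^ 2) * (∑ x : α, Z x ^ 4) := cs2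
        _ ≤ (N * W ^ 2) * (9 ^ d * N * W ^ 4) := by
            rw [e2']
            apply mul_le_mul_of_nonneg_left h4 (by positivity)
    have c3 : ((N * W ^ 2) ^ 2) ^ 2 ≤ (A1 * A3) ^ 2 :=
      pow_le_pow_left₀ (by positivity) c1 2
    have c4 : (A1 * A3) ^ 2 = A1 ^ 2 * A3 ^ 2 := by ring
    have c5 : A1 ^ 2 * A3 ^ 2 ≤ A1 ^ 2 * ((N * W ^ 2) * (9 ^ d * N * W ^ 4)) :=
      mul_le_mul_of_nonneg_left c2 (sq_nonneg _)
    have c6 : A1 ^ 2 * ((N * W ^ 2) * (9 ^ d * N * W ^ 4))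
        < (N * W / T3) ^ 2 * ((N * W ^ 2) * (9 ^ d * N * W ^ 4)) := by
      apply mul_lt_mul_of_pos_right hA1sq
      have : (0:ℝ) < 9 ^ d := by positivity
      positivity
    have c7 : (N * W / T3) ^ 2 * ((N * W ^ 2) * (9 ^ d * N * W ^ 4))
        = ((N * W ^ 2) ^ 2) ^ 2 := by
      rw [h9]
      field_simp
    nlinarith [c3, c4, c5, c6, c7]
  -- positive part
  set t : ℝ := W / (4 * T3) with ht
  have htpos : 0 < t := by positivity
  have hpos : ∑ x : α, max (Z x) 0 = A1 / 2 := by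
    simp_rw [max_zero_eq]
    rw [← Finset.sum_div, Finset.sum_add_distrib, h0, zero_add]
  set M : ℝ := ((Finset.univ.filter (fun x : α => t ≤ Z x)).card : ℝ) with hM
  have hMnn : 0 ≤ M := Nat.cast_nonneg _
  set Q := ∑ x : α, (if t ≤ Z x then |Z x| else 0) with hQ
  have hbound : ∀ x : α, max (Z x) 0 ≤ t + (if t ≤ Z x then |Z x| else 0) := by
    intro x
    by_cases h : t ≤ Z x
    · rw [if_pos h]
      have : max (Z x) 0 ≤ |Z x| := max_le (le_abs_self _) (abs_nonneg _)
      linarith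
    · rw [if_neg h]
      push_neg at h
      rw [add_zero]
      exact max_le h.le htpos.le
  have hsum1 : A1 / 2 ≤ N * t + Q := by
    rw [← hpos]
    calc ∑ x : α, max (Z x) 0 ≤ ∑ x : α, (t + (if t ≤ Z x then |Z x| else 0)) :=
          Finset.sum_le_sum fun x _ => hbound x
      _ = N * t + Q := by
          rw [Finset.sum_add_distrib, Finset.sum_const, Finset.card_univ, nsmul_eq_mul, hcard]
  have hcsQ : Q ^ 2 ≤ M * (N * W ^ 2) := by
    have := Finset.sum_mul_sq_le_sq_mul_sq Finset.univ
      (fun x => if t ≤ Z x then (1:ℝ) else 0) (fun x => |Z x|)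
    have e1 : ∀ x : α, (if t ≤ Z x then (1:ℝ) else 0) * |Z x|
        = (if t ≤ Z x then |Z x| else 0) := by
      intro x; split <;> simp
    have e2 : ∀ x : α, (if t ≤ Z x then (1:ℝ) else 0) ^ 2 = (if t ≤ Z x then (1:ℝ) else 0) := by
      intro x; split <;> norm_num
    have e3 : ∀ x : α, |Z x| ^ 2 = Z x ^ 2 := fun x => sq_abs _
    simp_rw [e1, e2, e3] at this
    rw [Finset.sum_boole, h2] at this
    exact this
  have hQlb : N * W / (4 * T3) ≤ Q := by
    have h1 : N * W / (2 * T3) ≤ A1 / 2 := by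
      rw [div_le_div_iff₀ (by positivity) (by norm_num)]
      calc N * W * 2 = (N * W / T3) * T3 * 2 := by field_simp
        _ ≤ A1 * T3 * 2 := by
            apply mul_le_mul_of_nonneg_right _ (by norm_num)
            exact mul_le_mul_of_nonneg_right key hT3pos.le
        _ = A1 * (2 * T3) := by ring
    have h2' : N * t = N * W / (4 * T3) := by rw [ht]; field_simp
    have h3 : N * W / (2 * T3) - N * W / (4 * T3) = N * W / (4 * T3) := by
      field_simp; ring
    linarith
  have hQ2 : (N * W / (4 * T3)) ^ 2 ≤ Q ^ 2 :=
    pow_le_pow_left₀ (by positivity) hQlb 2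
  have hfinal : (N * W / (4 * T3)) ^ 2 ≤ M * (N * W ^ 2) := le_trans hQ2 hcsQ
  have hexp : (N * W / (4 * T3)) ^ 2 = (N / (16 * T3 ^ 2)) * (N * W ^ 2) := by
    field_simp
    ring
  rw [hexp] at hfinal
  have hNW2 : (0:ℝ) < N * W ^ 2 := by positivity
  have : N / (16 * T3 ^ 2) ≤ M := le_of_mul_le_mul_right hfinal hNW2
  rw [h9]
  rw [div_le_iff₀ (by positivity)] at this
  linarith

end RRD
namespace RRD

lemma wsq_nonneg {n : ℕ} (a : Finset (Fin n) → ℝ) (i : Fin n) : 0 ≤ wsq a i :=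
  Finset.sum_nonneg fun I _ => sq_nonneg _

lemma sigmaSq_nonneg {n : ℕ} (a : Finset (Fin n) → ℝ) (k : ℕ) : 0 ≤ sigmaSq a k :=
  Finset.sum_nonneg fun j _ => wsq_nonneg a j

lemma sigma_card {n : ℕ} (a : Finset (Fin n) → ℝ) (k : ℕ) :
    sigmaSq a k = ∑ I : Finset (Fin n), ((I.filter (fun i : Fin n => k ≤ (i:ℕ))).card : ℝ) * a I ^ 2 := by
  unfold sigmaSq wsq
  rw [Finset.sum_filter]
  have step1 : ∀ j : Fin n,
      (if k ≤ (j:ℕ) then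
          ∑ I ∈ Finset.univ.filter (fun I : Finset (Fin n) => j ∈ I), a I ^ 2 else 0)
      = ∑ I : Finset (Fin n), (if k ≤ (j:ℕ) ∧ j ∈ I then a I ^ 2 else 0) := by
    intro j
    rw [Finset.sum_filter]
    split
    · next h => exact Finset.sum_congr rfl fun I _ => by simp [h]
    · next h => exact (Finset.sum_eq_zero fun I _ => by simp [h]).symm
  simp_rw [step1]
  rw [Finset.sum_comm]
  refine Finset.sum_congr rfl fun I _ => ?_
  have e1 : ∑ j : Fin n, (if k ≤ (j:ℕ) ∧ j ∈ I then a I ^ 2 else 0)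
      = ∑ j ∈ Finset.univ.filter (fun j : Fin n => k ≤ (j:ℕ) ∧ j ∈ I), a I ^ 2 :=
    (Finset.sum_filter _ _).symm
  have hset : Finset.univ.filter (fun j : Fin n => k ≤ (j:ℕ) ∧ j ∈ I)
      = I.filter (fun i : Fin n => k ≤ (i:ℕ)) := by
    ext j
    simp only [Finset.mem_filter, Finset.mem_univ, true_and]
    tauto
  rw [e1, hset, Finset.sum_const, nsmul_eq_mul]

lemma sigma_zero_card {n : ℕ} (a : Finset (Fin n) → ℝ) :
    sigmaSq a 0 = ∑ I : Finset (Fin n), (I.card : ℝ) * a I ^ 2 := by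
  rw [sigma_card]
  refine Finset.sum_congr rfl fun I _ => ?_
  have hfilter : I.filter (fun i : Fin n => (0:ℕ) ≤ (i:ℕ)) = I :=
    Finset.filter_true_of_mem fun i _ => Nat.zero_le _
  rw [hfilter]

lemma decay_step {n : ℕ} (a : Finset (Fin n) → ℝ) (ε : ℝ) (hord : OrderedWeights a)
    (k : ℕ) (hk : k < critIndex a ε) :
    sigmaSq a (k + 1) ≤ (1 - ε ^ 2) * sigmaSq a k := by
  have hknotmem : ¬ (∀ j : Fin n, k ≤ (j : ℕ) → wsq a j ≤ ε ^ 2 * sigmaSq a k) := by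
    intro hmem
    have h := Nat.sInf_le
      (show k ∈ {m : ℕ | ∀ j : Fin n, m ≤ (j : ℕ) → wsq a j ≤ ε ^ 2 * sigmaSq a m} from hmem)
    unfold critIndex at hk
    omega
  push_neg at hknotmem
  obtain ⟨j, hkj, hjlt⟩ := hknotmem
  have hkn : k < n := lt_of_le_of_lt hkj j.isLt
  set i0 : Fin n := ⟨k, hkn⟩ with hi0
  have hij : i0 ≤ j := by
    rw [Fin.le_def]
    exact hkj
  have hw : ε ^ 2 * sigmaSq a k < wsq a i0 := lt_of_lt_of_le hjlt (hord i0 j hij)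
  have hsplit : sigmaSq a k = wsq a i0 + sigmaSq a (k + 1) := by
    unfold sigmaSq
    have hset : Finset.univ.filter (fun j' : Fin n => k ≤ (j' : ℕ))
        = insert i0 (Finset.univ.filter (fun j' : Fin n => k + 1 ≤ (j' : ℕ))) := by
      ext j'
      simp only [Finset.mem_filter, Finset.mem_univ, true_and, Finset.mem_insert]
      constructor
      · intro h
        rcases Nat.eq_or_lt_of_le h with h1 | h1
        · left; rw [Fin.ext_iff]; simp only [hi0, Fin.val_mk]; omega
        · right; omega
      · rintro (rfl | h)
        · exact le_rfl
        · omega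
    rw [hset, Finset.sum_insert (by simp [hi0])]
  linarith

lemma decay_iter {n : ℕ} (a : Finset (Fin n) → ℝ) (ε : ℝ) (hord : OrderedWeights a)
    (hε1 : ε ≤ 1) (hε0 : 0 ≤ ε) :
    ∀ k, k ≤ critIndex a ε → sigmaSq a k ≤ (1 - ε ^ 2) ^ k * sigmaSq a 0 := by
  intro k
  induction k with
  | zero => intro _; simp
  | succ m ihm =>
    intro hk
    have h1 : sigmaSq a (m + 1) ≤ (1 - ε ^ 2) * sigmaSq a m :=
      decay_step a ε hord m (by omega)
    have h2 : sigmaSq a m ≤ (1 - ε ^ 2) ^ m * sigmaSq a 0 := ihm (by omega)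
    have hnn : (0:ℝ) ≤ 1 - ε ^ 2 := by nlinarith
    calc sigmaSq a (m + 1) ≤ (1 - ε ^ 2) * sigmaSq a m := h1
      _ ≤ (1 - ε ^ 2) * ((1 - ε ^ 2) ^ m * sigmaSq a 0) := mul_le_mul_of_nonneg_left h2 hnn
      _ = (1 - ε ^ 2) ^ (m + 1) * sigmaSq a 0 := by ring

end RRD

namespace RRD

lemma flip_sq {t u T : ℝ} (ht : 0 < t) (hux : t ≤ u ∨ u ≤ -t)
    (hiff : ¬ (0 ≤ u + T ↔ 0 ≤ u)) : t ^ 2 ≤ T ^ 2 := by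
  by_cases h1 : 0 ≤ u + T <;> by_cases h2 : 0 ≤ u
  · exact absurd (iff_of_true h1 h2) hiff
  · push_neg at h2
    rcases hux with h3 | h3
    · linarith
    · nlinarith
  · push_neg at h1
    rcases hux with h3 | h3
    · nlinarith
    · linarith
  · exact absurd (iff_of_false h1 h2) hiff

lemma count_arith {q p g b N : ℝ} (hq : 0 < q) (hN : N ≤ 16 * q * p)
    (h1 : p ≤ g + b) (hb : b ≤ N / (32 * q)) : N / (32 * q) ≤ g := by
  have hp : N / (16 * q) ≤ p := by
    rw [div_le_iff₀ (by positivity)]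
    linarith
  have harith : N / (16 * q) - N / (32 * q) = N / (32 * q) := by
    field_simp
    ring
  linarith

lemma side1 {t z c θ : ℝ} (h1 : t ≤ z) (h2 : 0 ≤ c - θ) : t ≤ c + z - θ := by linarith

lemma side2 {t z c θ : ℝ} (h1 : t ≤ -z) (h2 : c - θ < 0) : c + z - θ ≤ -t := by linarith

end RRD
namespace RRD
variable {n : ℕ}

def tailpart (L : ℕ) (I : Finset (Fin n)) : Finset (Fin n) :=
  I.filter (fun i : Fin n => ¬ (i:ℕ) < L)

def headpart (L : ℕ) (I : Finset (Fin n)) : Finset (Fin n) :=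
  I.filter (fun i : Fin n => (i:ℕ) < L)

def tc (a : Finset (Fin n) → ℝ) (L : ℕ) (x : Fin n → Bool) (J : Finset (Fin n)) : ℝ :=
  ∑ I ∈ Finset.univ.filter (fun I : Finset (Fin n) => tailpart L I = J),
    a I * chi (headpart L I) x

lemma tailpart_eq_filter_le (L : ℕ) (I : Finset (Fin n)) :
    tailpart L I = I.filter (fun i : Fin n => L ≤ (i:ℕ)) := by
  unfold tailpart
  ext i
  simp [Nat.not_lt]

lemma tailpart_empty (L : ℕ) : tailpart L (∅ : Finset (Fin n)) = ∅ := Finset.filter_empty _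

lemma headpart_union_tailpart (L : ℕ) (I : Finset (Fin n)) :
    headpart L I ∪ tailpart L I = I :=
  Finset.filter_union_filter_not_eq _ I

lemma headpart_eq_of_tailpart_empty {L : ℕ} {I : Finset (Fin n)} (h : tailpart L I = ∅) :
    headpart L I = I := by
  have := headpart_union_tailpart L I
  rw [h, Finset.union_empty] at this
  exact this

lemma F_eq (a : Finset (Fin n) → ℝ) (L : ℕ) (x y : Fin n → Bool) :
    mlEval a (fun i => pmOne (if (i:ℕ) < L then x i else y i))
      = ∑ I : Finset (Fin n), a I * chi (headpart L I) x * chi (tailpart L I) y := by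
  unfold mlEval
  refine Finset.sum_congr rfl fun I _ => ?_
  rw [← Finset.prod_filter_mul_prod_filter_not I (fun i : Fin n => (i:ℕ) < L)]
  have h1 : ∏ i ∈ I.filter (fun i : Fin n => (i:ℕ) < L),
      pmOne (if (i:ℕ) < L then x i else y i) = chi (headpart L I) x := by
    refine Finset.prod_congr rfl fun i hi => ?_
    rw [if_pos (Finset.mem_filter.mp hi).2]
  have h2 : ∏ i ∈ I.filter (fun i : Fin n => ¬ (i:ℕ) < L),
      pmOne (if (i:ℕ) < L then x i else y i) = chi (tailpart L I) y := by
    refine Finset.prod_congr rfl fun i hi => ?_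
    rw [if_neg (Finset.mem_filter.mp hi).2]
  rw [h1, h2, mul_assoc]

lemma F_fiber (a : Finset (Fin n) → ℝ) (L : ℕ) (x y : Fin n → Bool) :
    mlEval a (fun i => pmOne (if (i:ℕ) < L then x i else y i))
      = ∑ J : Finset (Fin n), tc a L x J * chi J y := by
  rw [F_eq]
  rw [← Finset.sum_fiberwise Finset.univ (fun I => tailpart L I)
    (fun I => a I * chi (headpart L I) x * chi (tailpart L I) y)]
  refine Finset.sum_congr rfl fun J _ => ?_
  unfold tc
  rw [Finset.sum_mul]
  refine Finset.sum_congr rfl fun I hI => ?_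
  rw [(Finset.mem_filter.mp hI).2]

lemma fiber_empty_split (L : ℕ) :
    Finset.univ.filter (fun I : Finset (Fin n) => tailpart L I = ∅)
      = insert ∅ (Finset.univ.filter
          (fun I : Finset (Fin n) => I ≠ ∅ ∧ tailpart L I = ∅)) := by
  ext I
  simp only [Finset.mem_filter, Finset.mem_univ, true_and, Finset.mem_insert]
  constructor
  · intro h
    by_cases hI : I = ∅
    · exact Or.inl hI
    · exact Or.inr ⟨hI, h⟩
  · rintro (rfl | ⟨_, h⟩)
    · exact tailpart_empty L
    · exact h

lemma tc_empty (a : Finset (Fin n) → ℝ) (L : ℕ) (x : Fin n → Bool) :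
    tc a L x ∅ = a ∅ + ∑ I ∈ Finset.univ.filter
        (fun I : Finset (Fin n) => I ≠ ∅ ∧ tailpart L I = ∅), a I * chi I x := by
  unfold tc
  rw [fiber_empty_split, Finset.sum_insert (by simp)]
  have hhe : headpart L (∅ : Finset (Fin n)) = ∅ := by
    unfold headpart
    exact Finset.filter_empty _
  have h1 : a ∅ * chi (headpart L (∅ : Finset (Fin n))) x = a ∅ := by
    rw [hhe, chi_empty, mul_one]
  have h2 : ∑ I ∈ Finset.univ.filter
      (fun I : Finset (Fin n) => I ≠ ∅ ∧ tailpart L I = ∅), a I * chi (headpart L I) x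
      = ∑ I ∈ Finset.univ.filter
        (fun I : Finset (Fin n) => I ≠ ∅ ∧ tailpart L I = ∅), a I * chi I x :=
    Finset.sum_congr rfl fun I hI => by
      rw [headpart_eq_of_tailpart_empty (Finset.mem_filter.mp hI).2.2]
  rw [h1, h2]

lemma sum_x_tc_sq (a : Finset (Fin n) → ℝ) (L : ℕ) (J : Finset (Fin n)) :
    ∑ x : Fin n → Bool, (tc a L x J) ^ 2
      = 2 ^ n * ∑ I ∈ Finset.univ.filter (fun I : Finset (Fin n) => tailpart L I = J),
          a I ^ 2 := by
  unfold tc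
  apply parseval
  intro I₁ h₁ I₂ h₂ heq
  simp only [Finset.coe_filter, Set.mem_setOf_eq, Finset.mem_univ, true_and] at h₁ h₂
  have e1 := headpart_union_tailpart L I₁
  have e2 := headpart_union_tailpart L I₂
  rw [← e1, ← e2, heq, h₁, h₂]

lemma sum_fibers_ne_empty (a : Finset (Fin n) → ℝ) (L : ℕ) :
    ∑ J ∈ Finset.univ.erase (∅ : Finset (Fin n)),
        (∑ I ∈ Finset.univ.filter (fun I : Finset (Fin n) => tailpart L I = J), a I ^ 2)
      = ∑ I ∈ Finset.univ.filter (fun I : Finset (Fin n) => tailpart L I ≠ ∅), a I ^ 2 := by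
  rw [← Finset.sum_fiberwise (Finset.univ.filter
      (fun I : Finset (Fin n) => tailpart L I ≠ ∅)) (fun I => tailpart L I)
      (fun I => a I ^ 2)]
  rw [← Finset.add_sum_erase _ _ (Finset.mem_univ (∅ : Finset (Fin n)))]
  have h0 : ∑ I ∈ (Finset.univ.filter
      (fun I : Finset (Fin n) => tailpart L I ≠ ∅)).filter
      (fun I => tailpart L I = ∅), a I ^ 2 = 0 := by
    apply Finset.sum_eq_zero
    intro I hI
    rw [Finset.mem_filter, Finset.mem_filter] at hI
    exact absurd hI.2 hI.1.2
  rw [h0, zero_add]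
  refine Finset.sum_congr rfl fun J hJ => ?_
  have hJne : J ≠ ∅ := Finset.ne_of_mem_erase hJ
  refine Finset.sum_congr ?_ fun I _ => rfl
  ext I
  simp only [Finset.mem_filter, Finset.mem_univ, true_and]
  constructor
  · intro h
    exact ⟨fun h0 => hJne (by rw [← h, h0]), h⟩
  · tauto

lemma TM_le_sigma (a : Finset (Fin n) → ℝ) (L : ℕ) :
    ∑ I ∈ Finset.univ.filter (fun I : Finset (Fin n) => tailpart L I ≠ ∅), a I ^ 2
      ≤ sigmaSq a L := by
  rw [sigma_card]
  have key : ∀ I : Finset (Fin n), I.filter (fun i : Fin n => L ≤ (i:ℕ)) = tailpart L I :=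
    fun I => (tailpart_eq_filter_le L I).symm
  calc ∑ I ∈ Finset.univ.filter (fun I : Finset (Fin n) => tailpart L I ≠ ∅), a I ^ 2
      ≤ ∑ I ∈ Finset.univ.filter (fun I : Finset (Fin n) => tailpart L I ≠ ∅),
          ((tailpart L I).card : ℝ) * a I ^ 2 := by
        refine Finset.sum_le_sum fun I hI => ?_
        have h1 : 1 ≤ (tailpart L I).card := Finset.card_pos.mpr
          (Finset.nonempty_iff_ne_empty.mpr (Finset.mem_filter.mp hI).2)
        have : (1:ℝ) ≤ ((tailpart L I).card : ℝ) := by exact_mod_cast h1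
        nlinarith [sq_nonneg (a I)]
    _ ≤ ∑ I : Finset (Fin n), ((tailpart L I).card : ℝ) * a I ^ 2 := by
        apply Finset.sum_le_sum_of_subset_of_nonneg (Finset.filter_subset _ _)
        intro I _ _
        positivity
    _ = ∑ I : Finset (Fin n), ((I.filter (fun i : Fin n => L ≤ (i:ℕ))).card : ℝ) * a I ^ 2 := by
        refine Finset.sum_congr rfl fun I _ => ?_
        rw [key I]

lemma sigma0_le (a : Finset (Fin n) → ℝ) (d : ℕ) (hdeg : DegLE a d) (L : ℕ) :
    sigmaSq a 0 ≤ (d:ℝ) *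
      ((∑ I ∈ Finset.univ.filter
          (fun I : Finset (Fin n) => I ≠ ∅ ∧ tailpart L I = ∅), a I ^ 2)
        + ∑ I ∈ Finset.univ.filter (fun I : Finset (Fin n) => tailpart L I ≠ ∅), a I ^ 2) := by
  have hpart : (∑ I ∈ Finset.univ.filter
        (fun I : Finset (Fin n) => I ≠ ∅ ∧ tailpart L I = ∅), a I ^ 2)
      + (∑ I ∈ Finset.univ.filter (fun I : Finset (Fin n) => tailpart L I ≠ ∅), a I ^ 2)
      = ∑ I ∈ Finset.univ.filter (fun I : Finset (Fin n) => I ≠ ∅), a I ^ 2 := by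
    rw [← Finset.sum_filter_add_sum_filter_not
      (Finset.univ.filter (fun I : Finset (Fin n) => I ≠ ∅))
      (fun I => tailpart L I = ∅) (fun I => a I ^ 2)]
    congr 1
    · rw [Finset.filter_filter]
    · refine Finset.sum_congr ?_ fun I _ => rfl
      ext I
      simp only [Finset.mem_filter, Finset.mem_univ, true_and]
      constructor
      · intro h
        exact ⟨fun hI => h (by rw [hI, tailpart_empty]), h⟩
      · tauto
  rw [hpart, sigma_zero_card]
  have step : ∑ I : Finset (Fin n), (I.card : ℝ) * a I ^ 2
      = ∑ I ∈ Finset.univ.filter (fun I : Finset (Fin n) => I ≠ ∅), (I.card : ℝ) * a I ^ 2 := by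
    rw [Finset.sum_filter]
    refine Finset.sum_congr rfl fun I _ => ?_
    by_cases h : I = ∅
    · simp [h]
    · rw [if_pos h]
  rw [step, Finset.mul_sum]
  refine Finset.sum_le_sum fun I hI => ?_
  by_cases h0 : a I = 0
  · simp [h0]
  · have hcard : (I.card : ℝ) ≤ (d : ℝ) := by exact_mod_cast hdeg I h0
    nlinarith [sq_nonneg (a I)]

end RRD

open RRD

set_option maxHeartbeats 2000000 in
/-- Lemma 5.2: for each `d ≥ 1` there are constants `b_d, c_d` and
`δ_d > 0` such that for `f = sign(P - θ)` with `P` multilinear of degree at most `d`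
(weights decreasing), if the `ε`-critical index is at least `L = ⌈c_d log(1/ε)/ε²⌉`, then
a uniformly random assignment of the first `L` variables is `(b_d·ε)`-determining with
probability at least `δ_d`. -/
theorem random_restriction_determining (d : ℕ) (hd : 1 ≤ d) :
    ∃ (bd cd δd : ℝ), 0 < δd ∧
      ∀ (ε : ℝ), 0 < ε → ε < 1 →
        ∀ (n : ℕ) (a : Finset (Fin n) → ℝ) (θ : ℝ), DegLE a d → OrderedWeights a →
          ∀ L : ℕ, L = ⌈cd * Real.log (1 / ε) / ε ^ 2⌉₊ → L ≤ critIndex a ε →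
            δd ≤ (1 / 2 ^ n : ℝ) * ∑ x : Fin n → Bool,
              (if ∃ b : Bool, (1 / 2 ^ n : ℝ) * (∑ y : Fin n → Bool,
                  (if decide (0 ≤ mlEval a
                        (fun i => pmOne (if i.val < L then x i else y i)) - θ) ≠ b
                    then (1 : ℝ) else 0)) ≤ bd * ε
                then (1 : ℝ) else 0) := by
  classical
  set m : ℕ := d + 10 with hm
  set bd : ℝ := 1024 * d * 81 ^ d with hbd
  set δd : ℝ := 1 / (32 * 9 ^ d) with hδd
  have hd1 : (1:ℝ) ≤ (d:ℝ) := by exact_mod_cast hd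
  have h81 : (1:ℝ) ≤ 81 ^ d := by
    calc (1:ℝ) = 1 ^ d := (one_pow d).symm
      _ ≤ 81 ^ d := pow_le_pow_left₀ (by norm_num) (by norm_num) d
  have h9d1 : (1:ℝ) ≤ 9 ^ d := by
    calc (1:ℝ) = 1 ^ d := (one_pow d).symm
      _ ≤ 9 ^ d := pow_le_pow_left₀ (by norm_num) (by norm_num) d
  have hδd1 : δd ≤ 1 := by
    rw [hδd, div_le_one (by positivity)]
    linarith
  refine ⟨bd, ((m : ℕ) : ℝ), δd, by positivity, ?_⟩
  intro ε hε0 hε1 n a θ hdeg hord L hL hLcrit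
  have hNpos : (0:ℝ) < 2 ^ n := by positivity
  -- helper: if the condition holds for every x, the average is 1 ≥ δd
  have hfull : (∀ x : Fin n → Bool, ∃ b : Bool, (1 / 2 ^ n : ℝ) * (∑ y : Fin n → Bool,
        (if decide (0 ≤ mlEval a
              (fun i => pmOne (if i.val < L then x i else y i)) - θ) ≠ b
          then (1 : ℝ) else 0)) ≤ bd * ε) →
      δd ≤ (1 / 2 ^ n : ℝ) * ∑ x : Fin n → Bool,
        (if ∃ b : Bool, (1 / 2 ^ n : ℝ) * (∑ y : Fin n → Bool,
            (if decide (0 ≤ mlEval a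
                  (fun i => pmOne (if i.val < L then x i else y i)) - θ) ≠ b
              then (1 : ℝ) else 0)) ≤ bd * ε
          then (1 : ℝ) else 0) := by
    intro hC
    have h1 : ∀ x : Fin n → Bool, (if ∃ b : Bool, (1 / 2 ^ n : ℝ) * (∑ y : Fin n → Bool,
        (if decide (0 ≤ mlEval a
              (fun i => pmOne (if i.val < L then x i else y i)) - θ) ≠ b
          then (1 : ℝ) else 0)) ≤ bd * ε
        then (1 : ℝ) else 0) = 1 := fun x => if_pos (hC x)
    rw [Finset.sum_congr rfl fun x _ => h1 x, Finset.sum_const, Finset.card_univ,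
      Fintype.card_fun, Fintype.card_bool, Fintype.card_fin, nsmul_eq_mul, mul_one]
    push_cast
    rw [one_div, inv_mul_cancel₀ (ne_of_gt hNpos)]
    exact hδd1
  -- case ε > 1/2 : trivial since bd * ε ≥ 1
  by_cases hεhalf : (1/2 : ℝ) < ε
  · apply hfull
    intro x
    refine ⟨true, ?_⟩
    have hbound : (∑ y : Fin n → Bool,
        (if decide (0 ≤ mlEval a
              (fun i => pmOne (if i.val < L then x i else y i)) - θ) ≠ true
          then (1 : ℝ) else 0)) ≤ 2 ^ n := by
      calc (∑ y : Fin n → Bool,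
          (if decide (0 ≤ mlEval a
                (fun i => pmOne (if i.val < L then x i else y i)) - θ) ≠ true
            then (1 : ℝ) else 0)) ≤ ∑ _y : Fin n → Bool, (1:ℝ) :=
            Finset.sum_le_sum fun y _ => by split <;> norm_num
        _ = 2 ^ n := by
            rw [Finset.sum_const, Finset.card_univ, Fintype.card_fun, Fintype.card_bool,
              Fintype.card_fin, nsmul_eq_mul, mul_one]
            push_cast
            ring
    have h1 : (1:ℝ) ≤ bd * ε := by
      have ht : (1:ℝ) ≤ (d:ℝ) * 81 ^ d := by nlinarith
      have hbdge : (2:ℝ) ≤ bd := by rw [hbd]; nlinarith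
      have h2e : 2 * ε ≤ bd * ε := mul_le_mul_of_nonneg_right hbdge hε0.le
      linarith
    calc (1 / 2 ^ n : ℝ) * (∑ y : Fin n → Bool,
        (if decide (0 ≤ mlEval a
              (fun i => pmOne (if i.val < L then x i else y i)) - θ) ≠ true
          then (1 : ℝ) else 0)) ≤ (1 / 2 ^ n : ℝ) * 2 ^ n := by
          apply mul_le_mul_of_nonneg_left hbound (by positivity)
      _ = 1 := by field_simp
      _ ≤ bd * ε := h1
  push_neg at hεhalf
  -- case sigmaSq a 0 = 0 : polynomial is constant
  by_cases hσ0 : sigmaSq a 0 ≤ 0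
  · have hσeq : sigmaSq a 0 = 0 := le_antisymm hσ0 (sigmaSq_nonneg a 0)
    have hall : ∀ I : Finset (Fin n), I ≠ ∅ → a I = 0 := by
      intro I hI
      rw [sigma_zero_card] at hσeq
      have hterm := (Finset.sum_eq_zero_iff_of_nonneg
        (fun I _ => by positivity : ∀ I ∈ Finset.univ, 0 ≤ (I.card : ℝ) * a I ^ 2)).mp
        hσeq I (Finset.mem_univ I)
      have hcard : (0:ℝ) < (I.card : ℝ) := by
        have := Finset.card_pos.mpr (Finset.nonempty_iff_ne_empty.mpr hI)
        exact_mod_cast this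
      have : a I ^ 2 = 0 := by
        by_contra hne
        have : 0 < a I ^ 2 := lt_of_le_of_ne (sq_nonneg _) (Ne.symm hne)
        nlinarith
      exact pow_eq_zero_iff two_ne_zero |>.mp this
    have hconst : ∀ z : Fin n → ℝ, mlEval a z = a ∅ := by
      intro z
      unfold mlEval
      rw [Finset.sum_eq_single ∅]
      · simp
      · intro I _ hI
        rw [hall I hI, zero_mul]
      · simp
    apply hfull
    intro x
    refine ⟨decide (0 ≤ a ∅ - θ), ?_⟩
    have h1 : ∀ y : Fin n → Bool,
        (if decide (0 ≤ mlEval a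
              (fun i => pmOne (if i.val < L then x i else y i)) - θ) ≠ decide (0 ≤ a ∅ - θ)
          then (1 : ℝ) else 0) = 0 := by
      intro y
      rw [if_neg]
      rw [hconst]
      simp
    rw [Finset.sum_congr rfl fun y _ => h1 y, Finset.sum_const_zero, mul_zero]
    positivity
  push_neg at hσ0
  -- main case
  -- decay bound : (1-ε²)^L ≤ ε^m
  have hm1 : 1 ≤ m := by omega
  have hee : (1 - ε ^ 2 : ℝ) ^ L ≤ ε ^ m := by
    have h1 : (1 - ε ^ 2 : ℝ) ≤ Real.exp (-ε ^ 2) := by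
      have := Real.add_one_le_exp (-ε ^ 2)
      linarith
    have h2 : ((1:ℝ) - ε ^ 2) ^ L ≤ Real.exp (-ε ^ 2) ^ L :=
      pow_le_pow_left₀ (by nlinarith) h1 L
    have h3 : Real.exp (-ε ^ 2) ^ L = Real.exp ((L:ℝ) * (-ε ^ 2)) :=
      (Real.exp_nat_mul _ L).symm
    have hLge : ((m:ℝ)) * Real.log (1 / ε) / ε ^ 2 ≤ (L:ℝ) := by
      rw [hL]
      exact Nat.le_ceil _
    have hmul : (m:ℝ) * Real.log (1 / ε) ≤ (L:ℝ) * ε ^ 2 := by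
      rw [div_le_iff₀ (by positivity)] at hLge
      linarith
    have hlog2 : Real.log (1 / ε) = - Real.log ε := by rw [one_div, Real.log_inv]
    have h4 : (L:ℝ) * (-ε ^ 2) ≤ (m:ℝ) * Real.log ε := by
      rw [hlog2] at hmul
      nlinarith
    have h5 : Real.exp ((L:ℝ) * (-ε ^ 2)) ≤ Real.exp ((m:ℝ) * Real.log ε) :=
      Real.exp_le_exp.mpr h4
    have h6 : Real.exp ((m:ℝ) * Real.log ε) = ε ^ m := by
      rw [Real.exp_nat_mul, Real.exp_log hε0]
    calc (1 - ε ^ 2 : ℝ) ^ L ≤ Real.exp (-ε ^ 2) ^ L := h2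
      _ = Real.exp ((L:ℝ) * (-ε ^ 2)) := h3
      _ ≤ Real.exp ((m:ℝ) * Real.log ε) := h5
      _ = ε ^ m := h6
  have hεm_half : ε ^ m ≤ (1/2:ℝ) ^ m := pow_le_pow_left₀ hε0.le hεhalf m
  have h2d : ((1:ℝ)/2) ^ m ≤ 1 / (2 * d) := by
    have hdn : (2 * d : ℕ) ≤ 2 ^ m := by
      have h1 : d < 2 ^ d := Nat.lt_two_pow_self
      have h2 : 2 * d ≤ 2 ^ (d + 1) := by
        rw [pow_succ]
        omega
      calc 2 * d ≤ 2 ^ (d + 1) := h2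
        _ ≤ 2 ^ m := Nat.pow_le_pow_right (by norm_num) (by omega)
    have hdr : (2 * d : ℝ) ≤ 2 ^ m := by exact_mod_cast hdn
    rw [div_pow, one_pow]
    exact one_div_le_one_div_of_le (by positivity) hdr
  have hεm_le_ε : ε ^ m ≤ ε := by
    calc ε ^ m ≤ ε ^ 1 := pow_le_pow_of_le_one hε0.le hε1.le hm1
      _ = ε := pow_one ε
  -- tail mass and head variance
  set V := ∑ I ∈ Finset.univ.filter
      (fun I : Finset (Fin n) => I ≠ ∅ ∧ tailpart L I = ∅), a I ^ 2 with hV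
  set TM := ∑ I ∈ Finset.univ.filter
      (fun I : Finset (Fin n) => tailpart L I ≠ ∅), a I ^ 2 with hTM
  have hVnn : 0 ≤ V := Finset.sum_nonneg fun I _ => sq_nonneg _
  have hTMnn : 0 ≤ TM := Finset.sum_nonneg fun I _ => sq_nonneg _
  have hTM2 : TM ≤ ε ^ m * sigmaSq a 0 := by
    calc TM ≤ sigmaSq a L := TM_le_sigma a L
      _ ≤ (1 - ε ^ 2) ^ L * sigmaSq a 0 := decay_iter a ε hord hε1.le hε0.le L hLcrit
      _ ≤ ε ^ m * sigmaSq a 0 := mul_le_mul_of_nonneg_right hee hσ0.le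
  have hTM3 : TM ≤ (1 / (2 * d)) * sigmaSq a 0 := by
    calc TM ≤ ε ^ m * sigmaSq a 0 := hTM2
      _ ≤ (1 / (2 * d)) * sigmaSq a 0 :=
          mul_le_mul_of_nonneg_right (le_trans hεm_half h2d) hσ0.le
  have hσd : sigmaSq a 0 ≤ (d:ℝ) * (V + TM) := sigma0_le a d hdeg L
  have hVlb : sigmaSq a 0 / (2 * d) ≤ V := by
    rw [div_le_iff₀ (by positivity)]
    have h1 : (d:ℝ) * TM ≤ (d:ℝ) * ((1 / (2 * d)) * sigmaSq a 0) :=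
      mul_le_mul_of_nonneg_left hTM3 (by positivity)
    have h2 : (d:ℝ) * ((1 / (2 * d)) * sigmaSq a 0) = sigmaSq a 0 / 2 := by
      field_simp
    nlinarith
  have hVpos : 0 < V := lt_of_lt_of_le (by positivity) hVlb
  set W : ℝ := Real.sqrt V with hWdef
  have hW : 0 < W := Real.sqrt_pos.mpr hVpos
  have hW2 : W ^ 2 = V := Real.sq_sqrt hVpos.le
  -- the centered head polynomial Z
  set Z : (Fin n → Bool) → ℝ := fun x => ∑ I ∈ Finset.univ.filter
      (fun I : Finset (Fin n) => I ≠ ∅ ∧ tailpart L I = ∅), a I * chi I x with hZdef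
  have hZ0 : ∑ x : Fin n → Bool, Z x = 0 :=
    sum_sum_chi _ a (fun I => I) (fun I hI => (Finset.mem_filter.mp hI).2.1)
  have hZ2 : ∑ x : Fin n → Bool, Z x ^ 2 = 2 ^ n * V :=
    parseval _ a (fun I => I) (fun I _ J _ h => h)
  set c : Finset (Fin n) → ℝ :=
    fun I => if I ≠ ∅ ∧ tailpart L I = ∅ then a I else 0 with hcdef
  have hZc : ∀ x, Z x = ∑ I : Finset (Fin n), c I * chi I x := by
    intro x
    rw [hZdef]
    simp only []
    rw [Finset.sum_filter]
    refine Finset.sum_congr rfl fun I _ => ?_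
    by_cases h : I ≠ ∅ ∧ tailpart L I = ∅ <;> simp [hcdef, h]
  have hcV : ∑ I : Finset (Fin n), c I ^ 2 = V := by
    rw [hV, Finset.sum_filter]
    refine Finset.sum_congr rfl fun I _ => ?_
    by_cases h : I ≠ ∅ ∧ tailpart L I = ∅ <;> simp [hcdef, h]
  have hZ4 : ∑ x : Fin n → Bool, Z x ^ 4 ≤ 2 ^ n * 9 ^ d * V ^ 2 := by
    have hcsupp : ∀ I, c I ≠ 0 → I ⊆ Finset.univ ∧ I.card ≤ d := by
      intro I h0
      refine ⟨Finset.subset_univ I, ?_⟩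
      by_cases h : I ≠ ∅ ∧ tailpart L I = ∅
      · apply hdeg
        intro ha
        apply h0
        simp [hcdef, h, ha]
      · exact absurd (by simp [hcdef, h]) h0
    have := hypercontractive Finset.univ d c hcsupp
    rw [hcV] at this
    calc ∑ x : Fin n → Bool, Z x ^ 4
        = ∑ x : Fin n → Bool, (∑ I : Finset (Fin n), c I * chi I x) ^ 4 :=
          Finset.sum_congr rfl fun x _ => by rw [hZc]
      _ ≤ 2 ^ n * 9 ^ d * V ^ 2 := this
  -- anticoncentration (both sides)
  set t : ℝ := W / (4 * 3 ^ d) with htdef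
  have htpos : 0 < t := by rw [htdef]; positivity
  have hanti : ∀ Z' : (Fin n → Bool) → ℝ, (∑ x : Fin n → Bool, Z' x = 0) →
      (∑ x : Fin n → Bool, Z' x ^ 2 = 2 ^ n * V) →
      (∑ x : Fin n → Bool, Z' x ^ 4 ≤ 2 ^ n * 9 ^ d * V ^ 2) →
      (2:ℝ) ^ n ≤ 16 * 9 ^ d *
        ((Finset.univ.filter (fun x : Fin n → Bool => t ≤ Z' x)).card : ℝ) := by
    intro Z' h0 h2 h4
    rw [htdef, hWdef]
    apply anticoncentration d Z' W ((2:ℝ) ^ n) hW hNpos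
    · rw [Fintype.card_fun, Fintype.card_bool, Fintype.card_fin]
      push_cast
      ring
    · exact h0
    · rw [h2, hW2]
    · calc ∑ x : Fin n → Bool, Z' x ^ 4 ≤ 2 ^ n * 9 ^ d * V ^ 2 := h4
        _ = 9 ^ d * 2 ^ n * W ^ 4 := by
            rw [show (W:ℝ) ^ 4 = (W ^ 2) ^ 2 by ring, hW2]
            ring
  -- the tail-mass random variable S
  set S : (Fin n → Bool) → ℝ := fun x =>
    ∑ J ∈ Finset.univ.erase (∅ : Finset (Fin n)), (tc a L x J) ^ 2 with hSdef
  have hSnn : ∀ x, 0 ≤ S x := fun x => Finset.sum_nonneg fun J _ => sq_nonneg _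
  have hsumS : ∑ x : Fin n → Bool, S x = 2 ^ n * TM := by
    rw [hSdef]
    simp only []
    rw [Finset.sum_comm]
    have h1 : ∀ J ∈ Finset.univ.erase (∅ : Finset (Fin n)),
        ∑ x : Fin n → Bool, (tc a L x J) ^ 2
          = 2 ^ n * ∑ I ∈ Finset.univ.filter
              (fun I : Finset (Fin n) => tailpart L I = J), a I ^ 2 :=
      fun J _ => sum_x_tc_sq a L J
    rw [Finset.sum_congr rfl h1, ← Finset.mul_sum, sum_fibers_ne_empty a L]
  set lam : ℝ := 32 * 9 ^ d * TM with hlamdef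
  have hmarkov : ((Finset.univ.filter (fun x : Fin n → Bool => ¬ S x ≤ lam)).card : ℝ)
      ≤ 2 ^ n / (32 * 9 ^ d) := by
    by_cases hTM0 : TM = 0
    · have hS0 : ∀ x : Fin n → Bool, S x = 0 := by
        have := (Finset.sum_eq_zero_iff_of_nonneg
          (fun x _ => hSnn x)).mp (by rw [hsumS, hTM0, mul_zero])
        intro x
        exact this x (Finset.mem_univ x)
      have hempty : Finset.univ.filter (fun x : Fin n → Bool => ¬ S x ≤ lam) = ∅ := by
        apply Finset.filter_eq_empty_iff.mpr
        intro x _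
        rw [not_not, hS0 x, hlamdef, hTM0]
        simp
      rw [hempty]
      simp
      positivity
    · have hTMpos : 0 < TM := lt_of_le_of_ne hTMnn (Ne.symm hTM0)
      have hlampos : 0 < lam := by rw [hlamdef]; positivity
      set B := Finset.univ.filter (fun x : Fin n → Bool => ¬ S x ≤ lam) with hB
      have hcl : (B.card : ℝ) * lam ≤ 2 ^ n * TM := by
        calc (B.card : ℝ) * lam = ∑ _x ∈ B, lam := by rw [Finset.sum_const, nsmul_eq_mul]
          _ ≤ ∑ x ∈ B, S x := Finset.sum_le_sum fun x hx => by
              have := (Finset.mem_filter.mp hx).2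
              linarith [lt_of_not_ge this]
          _ ≤ ∑ x : Fin n → Bool, S x :=
              Finset.sum_le_sum_of_subset_of_nonneg (Finset.filter_subset _ _)
                fun x _ _ => hSnn x
          _ = 2 ^ n * TM := hsumS
      rw [hlamdef] at hcl
      rw [le_div_iff₀ (by positivity)]
      calc (B.card : ℝ) * (32 * 9 ^ d) = ((B.card : ℝ) * (32 * 9 ^ d) * TM) / TM := by
            field_simp
        _ ≤ (2 ^ n * TM) / TM := by
            apply div_le_div_of_nonneg_right ?_ hTMnn
            calc (B.card : ℝ) * (32 * 9 ^ d) * TM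
                  = (B.card : ℝ) * (32 * 9 ^ d * TM) := by ring
              _ ≤ 2 ^ n * TM := hcl
        _ = 2 ^ n := by field_simp
  -- key scalar inequality : lam ≤ (bd ε) t²
  have h3sq : ((3:ℝ) ^ d) ^ 2 = 9 ^ d := by
    rw [← pow_mul, show (9:ℝ) = 3 ^ 2 by norm_num, ← pow_mul]
    ring_nf
  have ht2 : t ^ 2 = V / (16 * 9 ^ d) := by
    rw [htdef, div_pow, hW2, mul_pow, h3sq]
    norm_num
  have klam : lam ≤ (bd * ε) * t ^ 2 := by
    rw [ht2, hbd, hlamdef]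
    have hb81 : (81:ℝ) ^ d = 9 ^ d * 9 ^ d := by
      rw [show (81:ℝ) = 9 * 9 by norm_num, mul_pow]
    have e : (1024 * (d:ℝ) * (9 ^ d * 9 ^ d) * ε) * (V / (16 * 9 ^ d))
        = 64 * d * 9 ^ d * ε * V := by
      field_simp
      ring
    rw [hb81]
    have hTMe : TM ≤ ε * sigmaSq a 0 :=
      le_trans hTM2 (mul_le_mul_of_nonneg_right hεm_le_ε hσ0.le)
    have hσ2 : sigmaSq a 0 ≤ 2 * d * V := by
      rw [div_le_iff₀ (by positivity)] at hVlb
      linarith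
    calc 32 * 9 ^ d * TM ≤ 32 * 9 ^ d * (ε * sigmaSq a 0) :=
          mul_le_mul_of_nonneg_left hTMe (by positivity)
      _ ≤ 32 * 9 ^ d * (ε * (2 * d * V)) :=
          mul_le_mul_of_nonneg_left (mul_le_mul_of_nonneg_left hσ2 hε0.le) (by positivity)
      _ = 64 * d * 9 ^ d * ε * V := by ring
      _ = (1024 * (d:ℝ) * (9 ^ d * 9 ^ d) * ε) * (V / (16 * 9 ^ d)) := e.symm
  -- decomposition of the evaluated polynomial
  have hFdec : ∀ x y : Fin n → Bool,
      mlEval a (fun i => pmOne (if (i:ℕ) < L then x i else y i))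
        = (a ∅ + Z x) + ∑ J ∈ Finset.univ.erase (∅ : Finset (Fin n)), tc a L x J * chi J y := by
    intro x y
    have htcZ : tc a L x ∅ = a ∅ + Z x := tc_empty a L x
    rw [F_fiber a L x y, ← Finset.add_sum_erase _ _ (Finset.mem_univ (∅ : Finset (Fin n))),
      chi_empty, mul_one, htcZ]
  have hTy : ∀ x : Fin n → Bool, ∑ y : Fin n → Bool,
      (∑ J ∈ Finset.univ.erase (∅ : Finset (Fin n)), tc a L x J * chi J y) ^ 2
        = 2 ^ n * S x := fun x =>
    parseval _ (tc a L x) (fun J => J) (fun J _ K _ h => h)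
  -- the per-x core bound
  have hcore : ∀ x : Fin n → Bool,
      (t ≤ a ∅ + Z x - θ ∨ a ∅ + Z x - θ ≤ -t) → S x ≤ lam →
      ∃ b : Bool, (1 / 2 ^ n : ℝ) * (∑ y : Fin n → Bool,
          (if decide (0 ≤ mlEval a
                (fun i => pmOne (if i.val < L then x i else y i)) - θ) ≠ b
            then (1 : ℝ) else 0)) ≤ bd * ε := by
    intro x hux hSx
    refine ⟨decide (0 ≤ a ∅ + Z x - θ), ?_⟩
    have hpoint : ∀ y : Fin n → Bool,
        (if decide (0 ≤ mlEval a
              (fun i => pmOne (if i.val < L then x i else y i)) - θ)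
            ≠ decide (0 ≤ a ∅ + Z x - θ) then (1:ℝ) else 0) * t ^ 2
          ≤ (∑ J ∈ Finset.univ.erase (∅ : Finset (Fin n)), tc a L x J * chi J y) ^ 2 := by
      intro y
      by_cases hne : decide (0 ≤ mlEval a
          (fun i => pmOne (if i.val < L then x i else y i)) - θ)
          ≠ decide (0 ≤ a ∅ + Z x - θ)
      · rw [if_pos hne, one_mul]
        have hFT : mlEval a (fun i => pmOne (if i.val < L then x i else y i)) - θ
            = (a ∅ + Z x - θ) + ∑ J ∈ Finset.univ.erase (∅ : Finset (Fin n)),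
                tc a L x J * chi J y := by
          rw [hFdec x y]
          ring
        set T := ∑ J ∈ Finset.univ.erase (∅ : Finset (Fin n)), tc a L x J * chi J y with hTdef
        set u := a ∅ + Z x - θ with hu
        rw [hFT] at hne
        have hiff : ¬ (0 ≤ u + T ↔ 0 ≤ u) := fun h => hne (decide_eq_decide.mpr h)
        exact flip_sq htpos hux hiff
      · rw [if_neg hne, zero_mul]
        positivity
    have hsum1 : (∑ y : Fin n → Bool,
        (if decide (0 ≤ mlEval a
              (fun i => pmOne (if i.val < L then x i else y i)) - θ)
            ≠ decide (0 ≤ a ∅ + Z x - θ) then (1:ℝ) else 0)) * t ^ 2 ≤ 2 ^ n * lam := by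
      rw [Finset.sum_mul]
      calc ∑ y : Fin n → Bool,
          (if decide (0 ≤ mlEval a
                (fun i => pmOne (if i.val < L then x i else y i)) - θ)
              ≠ decide (0 ≤ a ∅ + Z x - θ) then (1:ℝ) else 0) * t ^ 2
          ≤ ∑ y : Fin n → Bool,
            (∑ J ∈ Finset.univ.erase (∅ : Finset (Fin n)), tc a L x J * chi J y) ^ 2 :=
            Finset.sum_le_sum fun y _ => hpoint y
        _ = 2 ^ n * S x := hTy x
        _ ≤ 2 ^ n * lam := mul_le_mul_of_nonneg_left hSx (by positivity)
    have hfin : (∑ y : Fin n → Bool,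
        (if decide (0 ≤ mlEval a
              (fun i => pmOne (if i.val < L then x i else y i)) - θ)
            ≠ decide (0 ≤ a ∅ + Z x - θ) then (1:ℝ) else 0)) ≤ 2 ^ n * (bd * ε) := by
      have h1 : (∑ y : Fin n → Bool,
          (if decide (0 ≤ mlEval a
                (fun i => pmOne (if i.val < L then x i else y i)) - θ)
              ≠ decide (0 ≤ a ∅ + Z x - θ) then (1:ℝ) else 0)) * t ^ 2
          ≤ (2 ^ n * (bd * ε)) * t ^ 2 := by
        calc _ ≤ (2:ℝ) ^ n * lam := hsum1
          _ ≤ 2 ^ n * ((bd * ε) * t ^ 2) := mul_le_mul_of_nonneg_left klam (by positivity)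
          _ = (2 ^ n * (bd * ε)) * t ^ 2 := by ring
      exact le_of_mul_le_mul_right h1 (by positivity)
    calc (1 / 2 ^ n : ℝ) * (∑ y : Fin n → Bool,
        (if decide (0 ≤ mlEval a
              (fun i => pmOne (if i.val < L then x i else y i)) - θ)
            ≠ decide (0 ≤ a ∅ + Z x - θ) then (1:ℝ) else 0))
        ≤ (1 / 2 ^ n : ℝ) * (2 ^ n * (bd * ε)) :=
          mul_le_mul_of_nonneg_left hfin (by positivity)
      _ = bd * ε := by field_simp
  -- final counting argument
  have hfinish : ∀ P : (Fin n → Bool) → Prop,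
      ((2:ℝ) ^ n ≤ 16 * 9 ^ d * ((Finset.univ.filter P).card : ℝ)) →
      (∀ x : Fin n → Bool, P x → S x ≤ lam →
        ∃ b : Bool, (1 / 2 ^ n : ℝ) * (∑ y : Fin n → Bool,
            (if decide (0 ≤ mlEval a
                  (fun i => pmOne (if i.val < L then x i else y i)) - θ) ≠ b
              then (1 : ℝ) else 0)) ≤ bd * ε) →
      δd ≤ (1 / 2 ^ n : ℝ) * ∑ x : Fin n → Bool,
        (if ∃ b : Bool, (1 / 2 ^ n : ℝ) * (∑ y : Fin n → Bool,
            (if decide (0 ≤ mlEval a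
                  (fun i => pmOne (if i.val < L then x i else y i)) - θ) ≠ b
              then (1 : ℝ) else 0)) ≤ bd * ε
          then (1 : ℝ) else 0) := by
    intro P hPcount hPimpl
    have hsub : Finset.univ.filter P ⊆
        Finset.univ.filter (fun x => P x ∧ S x ≤ lam)
          ∪ Finset.univ.filter (fun x : Fin n → Bool => ¬ S x ≤ lam) := by
      intro x hx
      rw [Finset.mem_filter] at hx
      rw [Finset.mem_union, Finset.mem_filter, Finset.mem_filter]
      by_cases h : S x ≤ lam
      · exact Or.inl ⟨hx.1, hx.2, h⟩
      · exact Or.inr ⟨hx.1, h⟩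
    have hc1 : ((Finset.univ.filter P).card : ℝ)
        ≤ ((Finset.univ.filter (fun x => P x ∧ S x ≤ lam)).card : ℝ)
          + ((Finset.univ.filter (fun x : Fin n → Bool => ¬ S x ≤ lam)).card : ℝ) := by
      have := le_trans (Finset.card_le_card hsub) (Finset.card_union_le _ _)
      exact_mod_cast this
    have hc2 : (2:ℝ) ^ n / (32 * 9 ^ d)
        ≤ ((Finset.univ.filter (fun x => P x ∧ S x ≤ lam)).card : ℝ) :=
      count_arith (by positivity) hPcount hc1 hmarkov
    have hind : ∀ x : Fin n → Bool,
        (if P x ∧ S x ≤ lam then (1:ℝ) else 0)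
          ≤ (if ∃ b : Bool, (1 / 2 ^ n : ℝ) * (∑ y : Fin n → Bool,
              (if decide (0 ≤ mlEval a
                    (fun i => pmOne (if i.val < L then x i else y i)) - θ) ≠ b
                then (1 : ℝ) else 0)) ≤ bd * ε
            then (1 : ℝ) else 0) := by
      intro x
      by_cases h : P x ∧ S x ≤ lam
      · rw [if_pos h, if_pos (hPimpl x h.1 h.2)]
      · rw [if_neg h]
        split <;> norm_num
    calc δd = (1 / 2 ^ n : ℝ) * ((2:ℝ) ^ n / (32 * 9 ^ d)) := by
          rw [hδd]
          field_simp
      _ ≤ (1 / 2 ^ n : ℝ) *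
          ((Finset.univ.filter (fun x => P x ∧ S x ≤ lam)).card : ℝ) :=
          mul_le_mul_of_nonneg_left hc2 (by positivity)
      _ = (1 / 2 ^ n : ℝ) * ∑ x : Fin n → Bool,
          (if P x ∧ S x ≤ lam then (1:ℝ) else 0) := by
          rw [Finset.sum_boole]
      _ ≤ (1 / 2 ^ n : ℝ) * ∑ x : Fin n → Bool,
          (if ∃ b : Bool, (1 / 2 ^ n : ℝ) * (∑ y : Fin n → Bool,
              (if decide (0 ≤ mlEval a
                    (fun i => pmOne (if i.val < L then x i else y i)) - θ) ≠ b
                then (1 : ℝ) else 0)) ≤ bd * ε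
            then (1 : ℝ) else 0) :=
          mul_le_mul_of_nonneg_left (Finset.sum_le_sum fun x _ => hind x) (by positivity)
  -- choose the side determined by the sign of a ∅ - θ
  by_cases hsgn : 0 ≤ a ∅ - θ
  · refine hfinish (fun x => t ≤ Z x) (hanti Z hZ0 hZ2 hZ4) ?_
    intro x hPx hSx
    exact hcore x (Or.inl (side1 hPx hsgn)) hSx
  · push_neg at hsgn
    have hn0 : ∑ x : Fin n → Bool, (- Z x) = 0 := by
      rw [Finset.sum_neg_distrib, hZ0, neg_zero]
    have hn2 : ∑ x : Fin n → Bool, (- Z x) ^ 2 = 2 ^ n * V := by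
      rw [← hZ2]
      exact Finset.sum_congr rfl fun x _ => by ring
    have hn4 : ∑ x : Fin n → Bool, (- Z x) ^ 4 ≤ 2 ^ n * 9 ^ d * V ^ 2 := by
      have he : ∀ x : Fin n → Bool, (- Z x) ^ 4 = Z x ^ 4 := fun x => by ring
      rw [Finset.sum_congr rfl fun x _ => he x]
      exact hZ4
    refine hfinish (fun x => t ≤ - Z x) (hanti (fun x => - Z x) hn0 hn2 hn4) ?_
    intro x hPx hSx
    exact hcore x (Or.inr (side2 hPx hsgn)) hSx

end
end

section
/- For every integer d ≥ 1 there exist constants α_d > 0 and β_d > 0 such that for every multilinear polynomial Q of degree at most d on n variables and X uniform on {-1,1}^n, Pr[ Q(X) ≥ E[Q(X)] + α_d · σ(Q) ] ≥ β_d, where σ(Q) = √Var(Q(X)). In particular, Pr[ Q(X) ≥ E[Q(X)] ] ≥ β_d. -/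
open Finset MeasureTheory ProbabilityTheory
open scoped Classical

noncomputable section

namespace PF
variable {n : ℕ}

def chi (I : Finset (Fin n)) (x : Fin n → Bool) : ℝ := ∏ i ∈ I, pmOne (x i)

lemma chi_full (I : Finset (Fin n)) (x : Fin n → Bool) :
    chi I x = ∏ i : Fin n, (if i ∈ I then pmOne (x i) else 1) := by
  rw [Finset.prod_ite_mem, univ_inter]; rfl

lemma sum_chi_mul (I J : Finset (Fin n)) :
    ∑ x : Fin n → Bool, chi I x * chi J x = if I = J then (2:ℝ)^n else 0 := by
  have key : ∀ x : Fin n → Bool, chi I x * chi J x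
      = ∏ i : Fin n, ((if i ∈ I then pmOne (x i) else 1) * (if i ∈ J then pmOne (x i) else 1)) := by
    intro x; rw [chi_full, chi_full, ← Finset.prod_mul_distrib]
  simp only [key]
  rw [← Fintype.piFinset_univ, Finset.sum_prod_piFinset univ (fun i b => (if i ∈ I then pmOne b else 1) * (if i ∈ J then pmOne b else 1))]
  have factor : ∀ i : Fin n, (∑ b ∈ (univ : Finset Bool),
      ((if i ∈ I then pmOne b else 1) * (if i ∈ J then pmOne b else 1)))
      = if (i ∈ I ↔ i ∈ J) then 2 else 0 := by
    intro i
    by_cases hI : i ∈ I <;> by_cases hJ : i ∈ J <;>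
      simp [hI, hJ, pmOne] <;> norm_num
  simp only [factor]
  by_cases h : I = J
  · subst h; simp
  · rw [if_neg h]
    have : ∃ i, ¬ (i ∈ I ↔ i ∈ J) := by
      by_contra hc
      push_neg at hc
      exact h (Finset.ext fun i => (hc i))
    obtain ⟨i, hi⟩ := this
    exact Finset.prod_eq_zero (mem_univ i) (by simp [hi])

end PF

namespace PF

def Q {n : ℕ} (a : Finset (Fin n) → ℝ) (x : Fin n → Bool) : ℝ :=
  mlEval a (fun i => pmOne (x i))

lemma Q_eq (a : Finset (Fin n) → ℝ) (x : Fin n → Bool) :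
    Q a x = ∑ I : Finset (Fin n), a I * chi I x := rfl

lemma sum_chi (I : Finset (Fin n)) :
    ∑ x : Fin n → Bool, chi I x = if I = ∅ then (2:ℝ)^n else 0 := by
  have := sum_chi_mul I (∅ : Finset (Fin n))
  simpa [chi] using this

lemma sum_Q (a : Finset (Fin n) → ℝ) :
    ∑ x : Fin n → Bool, Q a x = 2^n * a ∅ := by
  simp only [Q_eq]
  rw [Finset.sum_comm]
  have : ∀ I : Finset (Fin n), ∑ x : Fin n → Bool, a I * chi I x
      = a I * (if I = ∅ then (2:ℝ)^n else 0) := by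
    intro I; rw [← Finset.mul_sum, sum_chi]
  simp only [this]
  simp [Finset.sum_ite_eq', mul_comm]

lemma sum_Qsq (a : Finset (Fin n) → ℝ) :
    ∑ x : Fin n → Bool, (Q a x)^2 = 2^n * ∑ I : Finset (Fin n), (a I)^2 := by
  simp only [Q_eq, sq]
  simp only [Finset.sum_mul_sum]
  rw [Finset.sum_comm]
  have h1 : ∀ I : Finset (Fin n), ∑ x : Fin n → Bool, ∑ J : Finset (Fin n),
      (a I * chi I x) * (a J * chi J x) = (a I)^2 * 2^n := by
    intro I
    rw [Finset.sum_comm]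
    have h2 : ∀ J : Finset (Fin n), ∑ x : Fin n → Bool,
        (a I * chi I x) * (a J * chi J x)
        = (a I * a J) * (if I = J then (2:ℝ)^n else 0) := by
      intro J
      rw [← sum_chi_mul I J, Finset.mul_sum]
      congr 1; ext x; ring
    simp only [h2]
    simp only [mul_ite, mul_zero]
    rw [Finset.sum_ite_eq univ I (fun J => a I * a J * 2^n)]
    simp [sq]
  simp only [h1]
  rw [← Finset.sum_mul]
  simp [sq, mul_comm]

end PF

namespace PF

def aA (a : Finset (Fin (n+1)) → ℝ) (J : Finset (Fin n)) : ℝ := a (J.map (Fin.succEmb n))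
def aB (a : Finset (Fin (n+1)) → ℝ) (J : Finset (Fin n)) : ℝ :=
  a (insert 0 (J.map (Fin.succEmb n)))

lemma zero_not_mem_map (J : Finset (Fin n)) : (0 : Fin (n+1)) ∉ J.map (Fin.succEmb n) := by
  simp only [Finset.mem_map]
  rintro ⟨j, -, hj⟩
  exact Fin.succ_ne_zero j hj

lemma recon1 (I : Finset (Fin (n+1))) (hI : (0 : Fin (n+1)) ∉ I) :
    (I.preimage Fin.succ (Fin.succ_injective n).injOn).map (Fin.succEmb n) = I := by
  ext i
  simp only [Finset.mem_map, Finset.mem_preimage, Fin.coe_succEmb]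
  constructor
  · rintro ⟨j, hj, rfl⟩; exact hj
  · intro hi
    rcases Fin.eq_zero_or_eq_succ i with rfl | ⟨j, rfl⟩
    · exact absurd hi hI
    · exact ⟨j, hi, rfl⟩

lemma recon2 (I : Finset (Fin (n+1))) (hI : (0 : Fin (n+1)) ∈ I) :
    insert 0 (((I.erase 0).preimage Fin.succ (Fin.succ_injective n).injOn).map
      (Fin.succEmb n)) = I := by
  ext i
  simp only [Finset.mem_insert, Finset.mem_map, Finset.mem_preimage, Finset.mem_erase,
    Fin.coe_succEmb]
  constructor
  · rintro (rfl | ⟨j, hj, rfl⟩)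
    · exact hI
    · exact hj.2
  · intro hi
    rcases Fin.eq_zero_or_eq_succ i with rfl | ⟨j, rfl⟩
    · exact Or.inl rfl
    · exact Or.inr ⟨j, ⟨Fin.succ_ne_zero j, hi⟩, rfl⟩

lemma sum_finset_succ (f : Finset (Fin (n+1)) → ℝ) :
    ∑ I : Finset (Fin (n+1)), f I
      = ∑ J : Finset (Fin n),
          (f (J.map (Fin.succEmb n)) + f (insert 0 (J.map (Fin.succEmb n)))) := by
  rw [Finset.sum_add_distrib]
  rw [← Finset.sum_filter_add_sum_filter_not univ
        (fun I : Finset (Fin (n+1)) => (0 : Fin (n+1)) ∉ I) f]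
  congr 1
  · refine Finset.sum_nbij' (i := fun I : Finset (Fin (n+1)) =>
      I.preimage Fin.succ (Fin.succ_injective n).injOn)
      (j := fun J : Finset (Fin n) => J.map (Fin.succEmb n)) ?_ ?_ ?_ ?_ ?_
    · intro I _; exact mem_univ _
    · intro J _
      simp only [Finset.mem_filter, mem_univ, true_and]
      exact zero_not_mem_map J
    · intro I hI
      simp only [Finset.mem_filter, mem_univ, true_and] at hI
      exact recon1 I hI
    · intro J _
      ext j
      simp [Finset.mem_preimage]
    · intro I hI
      simp only [Finset.mem_filter, mem_univ, true_and] at hI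
      rw [recon1 I hI]
  · refine Finset.sum_nbij' (i := fun I : Finset (Fin (n+1)) =>
      (I.erase 0).preimage Fin.succ (Fin.succ_injective n).injOn)
      (j := fun J : Finset (Fin n) => insert 0 (J.map (Fin.succEmb n))) ?_ ?_ ?_ ?_ ?_
    · intro I _; exact mem_univ _
    · intro J _
      simp only [Finset.mem_filter, mem_univ, true_and, not_not]
      exact Finset.mem_insert_self _ _
    · intro I hI
      simp only [Finset.mem_filter, mem_univ, true_and, not_not] at hI
      exact recon2 I hI
    · intro J _
      ext j
      simp [Finset.mem_preimage, Finset.mem_erase, Fin.succ_ne_zero]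
    · intro I hI
      simp only [Finset.mem_filter, mem_univ, true_and, not_not] at hI
      rw [recon2 I hI]

end PF

namespace PF

lemma Q_cons (a : Finset (Fin (n+1)) → ℝ) (b : Bool) (x : Fin n → Bool) :
    Q a (Fin.cons b x) = Q (aA a) x + pmOne b * Q (aB a) x := by
  simp only [Q_eq]
  rw [sum_finset_succ (fun I => a I * chi I (Fin.cons b x))]
  rw [Finset.sum_add_distrib, Finset.mul_sum]
  congr 1
  · apply Finset.sum_congr rfl
    intro J _
    congr 1
    unfold chi
    rw [Finset.prod_map]
    apply Finset.prod_congr rfl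
    intro j _
    simp [Fin.cons_succ]
  · apply Finset.sum_congr rfl
    intro J _
    unfold chi aB
    rw [Finset.prod_insert (zero_not_mem_map J), Fin.cons_zero, Finset.prod_map]
    have : ∀ j ∈ J, pmOne ((Fin.cons b x : Fin (n+1) → Bool) ((Fin.succEmb n) j)) = pmOne (x j) := by
      intro j _; simp [Fin.cons_succ]
    rw [Finset.prod_congr rfl this]
    ring

lemma degA {a : Finset (Fin (n+1)) → ℝ} {d : ℕ} (h : DegLE a d) : DegLE (aA a) d := by
  intro J hJ
  have := h _ hJ
  simpa using this

lemma degB {a : Finset (Fin (n+1)) → ℝ} {d : ℕ} (h : DegLE a d) : DegLE (aB a) (d - 1) := by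
  intro J hJ
  have := h _ hJ
  rw [Finset.card_insert_of_notMem (zero_not_mem_map J), Finset.card_map] at this
  omega

lemma sum_cube_succ (f : (Fin (n+1) → Bool) → ℝ) :
    ∑ x : Fin (n+1) → Bool, f x
      = ∑ x : Fin n → Bool, (f (Fin.cons true x) + f (Fin.cons false x)) := by
  rw [← (Fin.consEquiv (fun _ : Fin (n+1) => Bool)).sum_comp f]
  rw [Fintype.sum_prod_type]
  rw [Fintype.sum_bool]
  rw [Finset.sum_add_distrib]
  rfl

end PF

namespace PF

lemma Q_zero_of_deg_zero {a : Finset (Fin (n+1)) → ℝ} (h : DegLE a 0) (x : Fin n → Bool) :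
    Q (aB a) x = 0 := by
  have hz : ∀ J : Finset (Fin n), aB a J = 0 := by
    intro J
    by_contra hc
    have := h _ hc
    rw [Finset.card_insert_of_notMem (zero_not_mem_map J), Finset.card_map] at this
    omega
  simp [Q_eq, hz]

lemma sq_sum_nonneg (g : (Fin n → Bool) → ℝ) : 0 ≤ ∑ x : Fin n → Bool, (g x)^2 :=
  Finset.sum_nonneg fun x _ => sq_nonneg _

lemma arith1 (N A4 B4 AB A2 B2 E : ℝ) (hN : 0 < N) (hE : 0 < E)
    (hA2 : 0 ≤ A2) (hB2 : 0 ≤ B2) (hAB : 0 ≤ AB) (hB4 : 0 ≤ B4) (hA4 : 0 ≤ A4)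
    (hCS : AB^2 ≤ A4*B4) (hIA : N*A4 ≤ 9*E*A2^2) (hIB : N*B4 ≤ E*B2^2) :
    (N*2) * (2*A4 + 12*AB + 2*B4) ≤ (9*E) * (2*A2 + 2*B2)^2 := by
  have key : N*AB ≤ 3*E*(A2*B2) := by
    have hsq : (N*AB)^2 ≤ (3*E*(A2*B2))^2 := by
      have h2 : (N*A4)*(N*B4) ≤ (9*E*A2^2)*(E*B2^2) :=
        mul_le_mul hIA hIB (mul_nonneg hN.le hB4)
          (mul_nonneg (by positivity) (sq_nonneg _))
      nlinarith [sq_nonneg N]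
    nlinarith [mul_nonneg hN.le hAB, mul_nonneg (mul_nonneg (by positivity : (0:ℝ) ≤ 3*E) hA2) hB2]
  nlinarith [mul_nonneg hA2 hB2, sq_nonneg B2, hE.le]

lemma hyper : ∀ (n d : ℕ) (a : Finset (Fin n) → ℝ), DegLE a d →
    (2:ℝ)^n * ∑ x : Fin n → Bool, (Q a x)^4
      ≤ 9^d * (∑ x : Fin n → Bool, (Q a x)^2)^2 := by
  intro n
  induction n with
  | zero =>
    intro d a _
    have hu : ∀ g : (Fin 0 → Bool) → ℝ,
        ∑ x : Fin 0 → Bool, g x = g (fun i => i.elim0) :=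
      fun g => Fintype.sum_subsingleton _ _
    rw [hu, hu]
    have h9 : (1:ℝ) ≤ 9^d := one_le_pow₀ (by norm_num)
    have : (Q a (fun i => i.elim0))^4 = ((Q a (fun i => i.elim0))^2)^2 := by ring
    rw [pow_zero, one_mul, this]
    nlinarith [sq_nonneg ((Q a (fun i => i.elim0))^2)]
  | succ n ih =>
    intro d a h
    have pmt : pmOne true = 1 := rfl
    have pmf : pmOne false = -1 := rfl
    have hsplit2 : ∑ x : Fin (n+1) → Bool, (Q a x)^2
        = 2 * (∑ x : Fin n → Bool, (Q (aA a) x)^2)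
          + 2 * (∑ x : Fin n → Bool, (Q (aB a) x)^2) := by
      rw [sum_cube_succ (fun x => (Q a x)^2)]
      simp only [Q_cons, pmt, pmf]
      rw [Finset.mul_sum, Finset.mul_sum, ← Finset.sum_add_distrib]
      apply Finset.sum_congr rfl
      intro x _; ring
    have hsplit4 : ∑ x : Fin (n+1) → Bool, (Q a x)^4
        = 2 * (∑ x : Fin n → Bool, (Q (aA a) x)^4)
          + 12 * (∑ x : Fin n → Bool, (Q (aA a) x)^2 * (Q (aB a) x)^2)
          + 2 * (∑ x : Fin n → Bool, (Q (aB a) x)^4) := by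
      rw [sum_cube_succ (fun x => (Q a x)^4)]
      simp only [Q_cons, pmt, pmf]
      rw [Finset.mul_sum, Finset.mul_sum, Finset.mul_sum, ← Finset.sum_add_distrib,
        ← Finset.sum_add_distrib]
      apply Finset.sum_congr rfl
      intro x _; ring
    set SA2 := ∑ x : Fin n → Bool, (Q (aA a) x)^2 with hSA2
    set SB2 := ∑ x : Fin n → Bool, (Q (aB a) x)^2 with hSB2
    set SA4 := ∑ x : Fin n → Bool, (Q (aA a) x)^4 with hSA4
    set SB4 := ∑ x : Fin n → Bool, (Q (aB a) x)^4 with hSB4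
    set SAB := ∑ x : Fin n → Bool, (Q (aA a) x)^2 * (Q (aB a) x)^2 with hSAB
    have hSA2n : 0 ≤ SA2 := sq_sum_nonneg _
    have hSB2n : 0 ≤ SB2 := sq_sum_nonneg _
    have hSA4n : 0 ≤ SA4 := Finset.sum_nonneg fun x _ => by positivity
    have hSB4n : 0 ≤ SB4 := Finset.sum_nonneg fun x _ => by positivity
    have hSABn : 0 ≤ SAB := Finset.sum_nonneg fun x _ => by positivity
    have hCS : SAB^2 ≤ SA4 * SB4 := by
      have := Finset.sum_mul_sq_le_sq_mul_sq Finset.univ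
        (fun x : Fin n → Bool => (Q (aA a) x)^2) (fun x => (Q (aB a) x)^2)
      calc SAB^2 ≤ (∑ x : Fin n → Bool, ((Q (aA a) x)^2)^2)
            * (∑ x : Fin n → Bool, ((Q (aB a) x)^2)^2) := this
        _ = SA4 * SB4 := by
            rw [hSA4, hSB4]
            congr 1 <;> (apply Finset.sum_congr rfl; intro x _; ring)
    have hIA := ih d (aA a) (degA h)
    have hIB := ih (d-1) (aB a) (degB h)
    rw [hsplit2, hsplit4]
    have h2n : (0:ℝ) < 2^n := by positivity
    rcases Nat.eq_zero_or_pos d with rfl | hd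
    · have hz : ∀ x : Fin n → Bool, Q (aB a) x = 0 := Q_zero_of_deg_zero h
      have hB0 : SB2 = 0 := by rw [hSB2]; apply Finset.sum_eq_zero; intro x _; rw [hz]; ring
      have hB40 : SB4 = 0 := by rw [hSB4]; apply Finset.sum_eq_zero; intro x _; rw [hz]; ring
      have hAB0 : SAB = 0 := by rw [hSAB]; apply Finset.sum_eq_zero; intro x _; rw [hz]; ring
      rw [hB0, hB40, hAB0]
      simp only [pow_zero, one_mul] at hIA ⊢
      rw [pow_succ]
      nlinarith
    · obtain ⟨e, rfl⟩ : ∃ e, d = e + 1 := ⟨d - 1, by omega⟩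
      have hse : e + 1 - 1 = e := rfl
      rw [hse] at hIB
      rw [pow_succ (2:ℝ) n, pow_succ (9:ℝ) e, mul_comm ((9:ℝ)^e) 9]
      rw [pow_succ (9:ℝ) e, mul_comm ((9:ℝ)^e) 9] at hIA
      exact arith1 (2^n) SA4 SB4 SAB SA2 SB2 (9^e) h2n (by positivity)
        hSA2n hSB2n hSABn hSB4n hSA4n hCS hIA hIB
end PF

namespace PF

lemma card_cube : (Fintype.card (Fin n → Bool) : ℝ) = 2^n := by
  simp [Fintype.card_fun]

set_option maxHeartbeats 2000000 in
lemma main (d n : ℕ) (a : Finset (Fin n) → ℝ) (ha : DegLE a d) :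
    (1/(64 * 9^d) : ℝ) ≤ (1 / 2 ^ n : ℝ) * ∑ x : Fin n → Bool,
      (if a ∅ + (1/(32 * 3^d) : ℝ) * Real.sqrt (∑ I : Finset (Fin n),
            (if I = ∅ then 0 else a I)^2) ≤ Q a x
        then (1 : ℝ) else 0) := by
  classical
  set μ := a ∅ with hμ
  set b : Finset (Fin n) → ℝ := fun I => if I = ∅ then 0 else a I with hb
  set v : ℝ := ∑ I : Finset (Fin n), (b I)^2 with hv
  set α : ℝ := 1/(32 * 3^d) with hα
  set β : ℝ := 1/(64 * 9^d) with hβ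
  have hN : (0:ℝ) < 2^n := by positivity
  have hα0 : 0 < α := by rw [hα]; positivity
  have hβ0 : 0 < β := by rw [hβ]; positivity
  have hβ1 : β ≤ 1 := by
    rw [hβ]
    rw [div_le_one (by positivity)]
    have : (1:ℝ) ≤ 9^d := one_le_pow₀ (by norm_num)
    nlinarith
  have hbdeg : DegLE b d := by
    intro I hI
    apply ha I
    intro hc
    rw [hb] at hI
    simp only [hc] at hI
    by_cases h : I = ∅ <;> simp [h] at hI
  have hRdef : ∀ x, Q b x = Q a x - μ := by
    intro x
    rw [hμ]
    simp only [Q_eq]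
    have hpt : ∀ I : Finset (Fin n),
        b I * chi I x = a I * chi I x - (if I = ∅ then a I * chi I x else 0) := by
      intro I; by_cases h : I = ∅ <;> simp [hb, h]
    rw [Finset.sum_congr rfl (fun I _ => hpt I), Finset.sum_sub_distrib]
    congr 1
    rw [Finset.sum_ite_eq' univ (∅ : Finset (Fin n)) (fun I => a I * chi I x)]
    simp [chi]
  have hv0 : 0 ≤ v := Finset.sum_nonneg fun I _ => sq_nonneg _
  have hsumR : ∑ x : Fin n → Bool, Q b x = 0 := by
    rw [sum_Q]; simp [hb]
  have hsumR2 : ∑ x : Fin n → Bool, (Q b x)^2 = 2^n * v := by rw [hv]; exact sum_Qsq b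
  have hsumR4 : ∑ x : Fin n → Bool, (Q b x)^4 ≤ 9^d * (2^n * v^2) := by
    have h := hyper n d b hbdeg
    rw [hsumR2] at h
    rw [show (9:ℝ)^d * ((2:ℝ)^n*v)^2 = 2^n * (9^d * (2^n * v^2)) by ring] at h
    exact (mul_le_mul_iff_of_pos_left hN).mp h
  clear_value b μ v α β
  rcases eq_or_lt_of_le hv0 with hveq | hvpos
  · -- degenerate case : variance zero
    have hQ0 : ∀ x : Fin n → Bool, Q b x = 0 := by
      intro x
      have h2 : ∑ y : Fin n → Bool, (Q b y)^2 = 0 := by rw [hsumR2, ← hveq]; ring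
      have := (Finset.sum_eq_zero_iff_of_nonneg
        (fun y _ => sq_nonneg (Q b y))).mp h2 x (mem_univ x)
      exact (pow_eq_zero_iff two_ne_zero).mp this
    have hcond : ∀ x : Fin n → Bool,
        (if μ + α * Real.sqrt v ≤ Q a x then (1:ℝ) else 0) = 1 := by
      intro x
      rw [if_pos]
      have hx := hRdef x
      rw [hQ0 x] at hx
      rw [← hveq, Real.sqrt_zero, mul_zero, add_zero]
      linarith [hx.symm]
    calc β ≤ 1 := hβ1
      _ = (1 / 2 ^ n : ℝ) * ∑ x : Fin n → Bool,
          (if μ + α * Real.sqrt v ≤ Q a x then (1:ℝ) else 0) := by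
        rw [Finset.sum_congr rfl (fun x _ => hcond x)]
        rw [Finset.sum_const, nsmul_eq_mul, Finset.card_univ, card_cube]
        field_simp
  · -- main case : positive variance
    set σ := Real.sqrt v with hσdef
    have hσ : 0 < σ := Real.sqrt_pos.mpr hvpos
    have hσ2 : σ^2 = v := Real.sq_sqrt hv0
    clear_value σ
    set c : ℝ := 3^d with hc
    have hcpos : 0 < c := by rw [hc]; positivity
    have hc2 : c^2 = 9^d := by
      rw [hc, ← pow_mul, mul_comm, pow_mul]; norm_num
    set m := ∑ x : Fin n → Bool, |Q b x| with hm
    clear_value m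
    have point1 : ∀ r : ℝ, (2*c*σ)^2 * r^2 ≤ (2*c*σ)^3 * |r| + r^4 := by
      intro r
      have ht : 0 < 2*c*σ := by positivity
      rcases le_total |r| (2*c*σ) with hle | hle
      · nlinarith [abs_nonneg r, sq_abs r,
          mul_nonneg (mul_nonneg (sq_nonneg (2*c*σ)) (abs_nonneg r)) (sub_nonneg.mpr hle),
          pow_le_pow_left₀ (abs_nonneg r) (le_refl |r|) 4, sq_nonneg (r^2)]
      · nlinarith [abs_nonneg r, sq_abs r,
          mul_nonneg (sq_nonneg r) (sub_nonneg.mpr (mul_self_le_mul_self ht.le hle)),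
          mul_nonneg (mul_nonneg (mul_nonneg ht.le ht.le) ht.le) (abs_nonneg r),
          sq_nonneg (r^2)]
    have sum1 : (2*c*σ)^2 * (2^n * v) ≤ (2*c*σ)^3 * m + 9^d * (2^n * v^2) := by
      have hs := Finset.sum_le_sum (fun x (_ : x ∈ univ) => point1 (Q b x))
      rw [← Finset.mul_sum, hsumR2] at hs
      rw [Finset.sum_add_distrib, ← Finset.mul_sum, ← hm] at hs
      exact le_trans hs (by linarith [hsumR4])
    have mlb : 3 * ((2:ℝ)^n) * σ ≤ 8 * c * m := by
      rw [← hσ2, ← hc2] at sum1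
      have hpos : (0:ℝ) < c^2*σ^3 := by positivity
      have key : (3*((2:ℝ)^n)*σ)*(c^2*σ^3) ≤ (8*(c*m))*(c^2*σ^3) := by nlinarith [sum1]
      have h2 := (mul_le_mul_iff_of_pos_right hpos).mp key
      linarith
    set S1 := ∑ x : Fin n → Bool, Q b x * (if α*σ ≤ Q b x then (1:ℝ) else 0) with hS1
    set P := ∑ x : Fin n → Bool, (if α*σ ≤ Q b x then (1:ℝ) else 0) with hP
    clear_value S1 P
    have hασ : 0 < α*σ := mul_pos hα0 hσ
    have point2 : ∀ r : ℝ,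
        |r| + r ≤ 2*(α*σ) + 2*(r * (if α*σ ≤ r then (1:ℝ) else 0)) := by
      intro r
      by_cases h : α*σ ≤ r
      · rw [if_pos h]
        rcases abs_cases r with ⟨he, _⟩ | ⟨he, _⟩ <;> nlinarith
      · rw [if_neg h]
        push_neg at h
        rcases abs_cases r with ⟨he, hr⟩ | ⟨he, hr⟩ <;> nlinarith
    have sum2 : m ≤ 2^n * (2*(α*σ)) + 2*S1 := by
      have hs := Finset.sum_le_sum (fun x (_ : x ∈ univ) => point2 (Q b x))
      rw [Finset.sum_add_distrib, ← hm, hsumR] at hs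
      rw [Finset.sum_add_distrib, Finset.sum_const, nsmul_eq_mul,
        Finset.card_univ, card_cube, ← Finset.mul_sum, ← hS1] at hs
      linarith [hs]
    have hCS : S1^2 ≤ (2^n * v) * P := by
      have h := Finset.sum_mul_sq_le_sq_mul_sq univ (fun x : Fin n → Bool => Q b x)
        (fun x => if α*σ ≤ Q b x then (1:ℝ) else 0)
      have hindsq : ∀ x : Fin n → Bool,
          ((if α*σ ≤ Q b x then (1:ℝ) else 0))^2 = (if α*σ ≤ Q b x then (1:ℝ) else 0) := by
        intro x; split_ifs <;> norm_num
      calc S1^2 = (∑ x : Fin n → Bool, Q b x * (if α*σ ≤ Q b x then (1:ℝ) else 0))^2 := by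
            rw [hS1]
        _ ≤ (∑ x : Fin n → Bool, (Q b x)^2)
            * (∑ x : Fin n → Bool, ((if α*σ ≤ Q b x then (1:ℝ) else 0))^2) := h
        _ = (2^n * v) * P := by
            rw [hsumR2, Finset.sum_congr rfl (fun x _ => hindsq x), ← hP]
    have h32 : (32*c)*α = 1 := by
      rw [hα]; field_simp
    have hS1lb : 5 * (2:ℝ)^n * σ ≤ 32 * c * S1 := by
      have e1 : 16*c*m ≤ 16*c*(2^n * (2*(α*σ)) + 2*S1) := by
        have := mul_le_mul_of_nonneg_left sum2 (by positivity : (0:ℝ) ≤ 16*c)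
        linarith
      have e2 : 16*c*(2^n * (2*(α*σ)) + 2*S1) = (2:ℝ)^n*σ*((32*c)*α) + 32*c*S1 := by ring
      rw [h32, mul_one] at e2
      nlinarith [mlb, e1, e2]
    have hS1pos : 0 < S1 := by
      have : (0:ℝ) < 5 * (2:ℝ)^n * σ := by positivity
      nlinarith [hS1lb, hcpos]
    have hPfin : (2:ℝ)^n ≤ 64 * c^2 * P := by
      have hsq : (5 * (2:ℝ)^n * σ)^2 ≤ (32*c*S1)^2 :=
        pow_le_pow_left₀ (by positivity) hS1lb 2
      rw [← hσ2] at hCS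
      have e3 := mul_le_mul_of_nonneg_left hCS (by positivity : (0:ℝ) ≤ 1024*c^2)
      have key3 : (2:ℝ)^n * (16*((2:ℝ)^n*σ^2)) ≤ (64*c^2*P) * (16*((2:ℝ)^n*σ^2)) := by
        nlinarith [hsq, e3, mul_nonneg (mul_nonneg hN.le hN.le) (sq_nonneg σ)]
      exact le_of_mul_le_mul_right key3 (by positivity)
    have hcondeq : ∀ x : Fin n → Bool,
        (if μ + α * σ ≤ Q a x then (1:ℝ) else 0) = (if α*σ ≤ Q b x then (1:ℝ) else 0) := by
      intro x
      have hx := hRdef x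
      by_cases h : α*σ ≤ Q b x
      · rw [if_pos h, if_pos (by rw [hx] at h; linarith)]
      · rw [if_neg h, if_neg (by intro hcon; apply h; rw [hx]; linarith)]
    rw [Finset.sum_congr rfl (fun x _ => hcondeq x), ← hP]
    rw [hβ, ← hc2]
    rw [div_le_iff₀ (by positivity : (0:ℝ) < 64*c^2)]
    have hre : (1:ℝ)/2^n * P * (64*c^2) = (64*c^2*P)/2^n := by ring
    rw [hre, le_div_iff₀ hN, one_mul]
    exact hPfin

end PF

/-- Lemma 5.4: for each `d ≥ 1` there are constants `α_d, β_d > 0` such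
that every multilinear polynomial `Q` of degree at most `d` satisfies
`Pr[Q(X) ≥ E[Q] + α_d σ(Q)] ≥ β_d` (and in particular `Pr[Q(X) ≥ E[Q]] ≥ β_d`) for `X`
uniform on `{-1,1}^n`. -/
theorem polynomial_exceeds_mean (d : ℕ) (hd : 1 ≤ d) :
    ∃ (αd βd : ℝ), 0 < αd ∧ 0 < βd ∧
      ∀ (n : ℕ) (a : Finset (Fin n) → ℝ), DegLE a d →
        (βd ≤ (1 / 2 ^ n : ℝ) * ∑ x : Fin n → Bool,
          (if ((1 / 2 ^ n : ℝ) * ∑ y : Fin n → Bool, mlEval a (fun i => pmOne (y i)))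
              + αd * Real.sqrt
                (((1 / 2 ^ n : ℝ) * ∑ y : Fin n → Bool, (mlEval a (fun i => pmOne (y i))) ^ 2)
                  - ((1 / 2 ^ n : ℝ) * ∑ y : Fin n → Bool, mlEval a (fun i => pmOne (y i))) ^ 2)
              ≤ mlEval a (fun i => pmOne (x i))
            then (1 : ℝ) else 0)) ∧
        (βd ≤ (1 / 2 ^ n : ℝ) * ∑ x : Fin n → Bool,
          (if ((1 / 2 ^ n : ℝ) * ∑ y : Fin n → Bool, mlEval a (fun i => pmOne (y i)))
              ≤ mlEval a (fun i => pmOne (x i))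
            then (1 : ℝ) else 0)) := by
  classical
  refine ⟨1/(32*3^d), 1/(64*9^d), by positivity, by positivity, ?_⟩
  intro n a ha
  have hfold : ∀ x : Fin n → Bool, mlEval a (fun i => pmOne (x i)) = PF.Q a x := fun _ => rfl
  simp only [hfold]
  have hN : (0:ℝ) < 2^n := by positivity
  have hEQ : (1 / 2 ^ n : ℝ) * ∑ y : Fin n → Bool, PF.Q a y = a ∅ := by
    rw [PF.sum_Q]; field_simp
  have hvar : ((1 / 2 ^ n : ℝ) * ∑ y : Fin n → Bool, (PF.Q a y)^2)
      - ((1 / 2 ^ n : ℝ) * ∑ y : Fin n → Bool, PF.Q a y)^2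
      = ∑ I : Finset (Fin n), (if I = ∅ then 0 else a I)^2 := by
    rw [PF.sum_Qsq, hEQ]
    have h1 : (1/2^n : ℝ)*(2^n * ∑ I : Finset (Fin n), (a I)^2)
        = ∑ I : Finset (Fin n), (a I)^2 := by field_simp
    rw [h1]
    have h2 : ∀ I : Finset (Fin n),
        (a I)^2 = (if I = ∅ then 0 else a I)^2 + (if I = ∅ then (a I)^2 else 0) := by
      intro I; split_ifs <;> simp
    rw [Finset.sum_congr rfl (fun I _ => h2 I), Finset.sum_add_distrib,
      Finset.sum_ite_eq' univ (∅ : Finset (Fin n)) (fun I => (a I)^2)]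
    simp
  rw [hvar, hEQ]
  have hmain := PF.main d n a ha
  refine ⟨hmain, le_trans hmain ?_⟩
  apply mul_le_mul_of_nonneg_left ?_ (by positivity : (0:ℝ) ≤ 1/2^n)
  apply Finset.sum_le_sum
  intro x _
  have hs : (0:ℝ) ≤ (1/(32*3^d):ℝ)
      * Real.sqrt (∑ I : Finset (Fin n), (if I = ∅ then 0 else a I)^2) := by positivity
  split_ifs with h1 h2 <;> first | rfl | linarith | norm_num

end
end
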